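/- arXiv:1204.5561 — 3 statements merged into one kernel-verified Lean document; each statement's English description precedes it below -/
import Mathlib

section
/- Let G be a connected finite simple graph in the class SC, with partition of V(G) into the vertex sets of basic 5-cycles C^1,…,C^s (s ≥ 1) and the closed neighborhoods of simplicial vertices x_1,…,x_t, and let x be a vertex of C^1 with degree at least 3 in G. Then both G∖x and G_x := G∖N[x] belong to the class SC, α(G∖x) = 2s + t, and α(G_x) = 2s + t − 1. -/
open SimpleGraph

variable {V : Type*} {W : Type*}

/-- The open neighborhood `N(x)` of a vertex, as a set. -/
def nbhd (G : SimpleGraph V) (x : V) : Set V := {u | G.Adj x u}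

/-- The closed neighborhood `N[x]` of a vertex. -/
def closedNbhd (G : SimpleGraph V) (x : V) : Set V := insert x {u | G.Adj x u}

/-- The degree of a vertex. -/
noncomputable def deg (G : SimpleGraph V) (x : V) : ℕ := (nbhd G x).ncard

/-- `S` is an independent set of vertices of `G`. -/
def IsIndep (G : SimpleGraph V) (S : Set V) : Prop :=
  ∀ u ∈ S, ∀ w ∈ S, ¬ G.Adj u w

/-- `S` is an independent set contained in `A`, i.e. an independent set of the
induced subgraph of `G` on `A`. -/
def IsIndepOn (G : SimpleGraph V) (A S : Set V) : Prop :=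
  S ⊆ A ∧ IsIndep G S

/-- `S` is a maximal independent set of the induced subgraph of `G` on `A`. -/
def IsMaxIndepOn (G : SimpleGraph V) (A S : Set V) : Prop :=
  IsIndepOn G A S ∧ ∀ T : Set V, IsIndepOn G A T → S ⊆ T → S = T

/-- A graph is well-covered if all its maximal independent sets have the same
cardinality. -/
def WellCovered (G : SimpleGraph V) : Prop :=
  ∀ S T : Set V, IsMaxIndepOn G Set.univ S → IsMaxIndepOn G Set.univ T →
    S.ncard = T.ncard

/-- The independence number `α(G)` of a graph. -/
noncomputable def indepNum (G : SimpleGraph V) : ℕ :=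
  sSup {n : ℕ | ∃ S : Set V, IsIndep G S ∧ S.ncard = n}

/-- `VDOn G A` means: the induced subgraph of `G` on `A` is vertex decomposable,
via the recursive graph-theoretic characterization: it has no edges, or there is
a vertex `v ∈ A` such that both `G∖v` and `G∖N[v]` (within `A`) are vertex
decomposable and no independent set of `G∖N[v]` is a maximal independent set
of `G∖v`. -/
inductive VDOn (G : SimpleGraph V) : Set V → Prop
  | no_edges (A : Set V) (h : ∀ u ∈ A, ∀ w ∈ A, ¬ G.Adj u w) : VDOn G A
  | step (A : Set V) (v : V) (hv : v ∈ A)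
      (hdel : VDOn G (A \ {v}))
      (hlk : VDOn G (A \ closedNbhd G v))
      (hshed : ∀ S : Set V, IsIndepOn G (A \ closedNbhd G v) S →
        ¬ IsMaxIndepOn G (A \ {v}) S) : VDOn G A

/-- A graph is vertex decomposable. -/
def VertexDecomposable (G : SimpleGraph V) : Prop := VDOn G Set.univ

/-- `c` lists the vertices of an `n`-cycle of `G` in cyclic order. -/
def IsCycleMap {n : ℕ} (G : SimpleGraph V) (c : ZMod n → V) : Prop :=
  Function.Injective c ∧ ∀ i : ZMod n, G.Adj (c i) (c (i + 1))

/-- A vertex is simplicial if its closed neighborhood induces a complete graph. -/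
def IsSimplicial (G : SimpleGraph V) (x : V) : Prop :=
  ∀ u w : V, G.Adj x u → G.Adj x w → u ≠ w → G.Adj u w

/-- A basic 5-cycle: a 5-cycle containing no two adjacent vertices that both
have degree at least 3 in `G`. -/
def IsBasic5Cycle (G : SimpleGraph V) (c : ZMod 5 → V) : Prop :=
  IsCycleMap G c ∧ ∀ i : ZMod 5, ¬(3 ≤ deg G (c i) ∧ 3 ≤ deg G (c (i + 1)))

/-- A basic 3-cycle: a 3-cycle containing at least one vertex of degree 2. -/
def IsBasic3Cycle (G : SimpleGraph V) (c : ZMod 3 → V) : Prop :=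
  IsCycleMap G c ∧ ∃ i : ZMod 3, deg G (c i) = 2

/-- `x` belongs to a simplex of `G`, i.e. to the closed neighborhood of a
simplicial vertex. -/
def InSimplex (G : SimpleGraph V) (x : V) : Prop :=
  ∃ v : V, IsSimplicial G v ∧ x ∈ closedNbhd G v

/-- `x` lies on a basic 5-cycle of `G`. -/
def OnBasic5Cycle (G : SimpleGraph V) (x : V) : Prop :=
  ∃ c : ZMod 5 → V, IsBasic5Cycle G c ∧ x ∈ Set.range c

/-- A basic 4-cycle, labelled so that `c 0` and `c 1` are two adjacent vertices
of degree two, and the remaining two vertices `c 2`, `c 3` each belong to a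
simplex or to a basic 5-cycle of `G`.  The set `B(Q)` of such a labelled basic
4-cycle is `{c 0, c 1}`. -/
def IsBasic4Cycle (G : SimpleGraph V) (c : ZMod 4 → V) : Prop :=
  IsCycleMap G c ∧ deg G (c 0) = 2 ∧ deg G (c 1) = 2 ∧
    (InSimplex G (c 2) ∨ OnBasic5Cycle G (c 2)) ∧
    (InSimplex G (c 3) ∨ OnBasic5Cycle G (c 3))

/-- The class `SQC`: the vertex set is partitioned by the closed neighborhoods
of `m` simplicial vertices, the vertex sets of `s` basic 5-cycles and the sets
`B(Q)` of `t` basic 4-cycles. -/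
def InSQC (G : SimpleGraph V) : Prop :=
  ∃ (m s t : ℕ) (x : Fin m → V) (c : Fin s → ZMod 5 → V) (q : Fin t → ZMod 4 → V),
    (∀ i, IsSimplicial G (x i)) ∧
    (∀ j, IsBasic5Cycle G (c j)) ∧
    (∀ k, IsBasic4Cycle G (q k)) ∧
    (∀ v : V, ∃! p : Fin m ⊕ Fin s ⊕ Fin t,
      match p with
      | Sum.inl i => v ∈ closedNbhd G (x i)
      | Sum.inr (Sum.inl j) => v ∈ Set.range (c j)
      | Sum.inr (Sum.inr k) => v = q k 0 ∨ v = q k 1)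

/-- The class `SC`: the vertex set is partitioned by the closed neighborhoods
of `m` simplicial vertices and the vertex sets of `s` basic 5-cycles. -/
def InSC (G : SimpleGraph V) : Prop :=
  ∃ (m s : ℕ) (x : Fin m → V) (c : Fin s → ZMod 5 → V),
    (∀ i, IsSimplicial G (x i)) ∧
    (∀ j, IsBasic5Cycle G (c j)) ∧
    (∀ v : V, ∃! p : Fin m ⊕ Fin s,
      match p with
      | Sum.inl i => v ∈ closedNbhd G (x i)
      | Sum.inr j => v ∈ Set.range (c j))

/-- `{u, w}` is a pendant edge of `G`: an edge incident with a vertex of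
degree 1. -/
def PendantEdge (G : SimpleGraph V) (u w : V) : Prop :=
  G.Adj u w ∧ (deg G u = 1 ∨ deg G w = 1)

/-- `P(G)`: vertices incident with pendant edges. -/
def pendantVerts (G : SimpleGraph V) : Set V := {v | ∃ u, PendantEdge G v u}

/-- `C(G)`: vertices lying on basic 5-cycles. -/
def basic5Verts (G : SimpleGraph V) : Set V := {v | OnBasic5Cycle G v}

/-- The class `PC`: `V(G) = P(G) ∪ C(G)` with `P(G) ∩ C(G) = ∅`, the basic
5-cycles partition `C(G)` (i.e. are pairwise vertex-disjoint), and the pendant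
edges form a perfect matching of `P(G)`. -/
def InPC (G : SimpleGraph V) : Prop :=
  pendantVerts G ∪ basic5Verts G = Set.univ ∧
  pendantVerts G ∩ basic5Verts G = ∅ ∧
  (∀ c c' : ZMod 5 → V, IsBasic5Cycle G c → IsBasic5Cycle G c' →
    Set.range c = Set.range c' ∨ Disjoint (Set.range c) (Set.range c')) ∧
  (∀ v ∈ pendantVerts G, ∃! u : V, PendantEdge G v u)

/-- The induced subgraph of `G` on `B` has no cut vertex: removing any vertex
of `B` leaves it (pre)connected. -/
def NoCutVertexOn (G : SimpleGraph V) (B : Set V) : Prop :=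
  ∀ v ∈ B, (G.induce (B \ {v})).Preconnected

/-- `B` is (the vertex set of) a block of `G`: a maximal connected induced
subgraph without a cut vertex. -/
def IsBlockOf (G : SimpleGraph V) (B : Set V) : Prop :=
  B.Nonempty ∧ (G.induce B).Connected ∧ NoCutVertexOn G B ∧
  ∀ B' : Set V, B ⊆ B' → (G.induce B').Connected → NoCutVertexOn G B' → B' = B

/-- The induced subgraph of `G` on `B` is complete. -/
def IsCompleteOn (G : SimpleGraph V) (B : Set V) : Prop :=
  ∀ u ∈ B, ∀ w ∈ B, u ≠ w → G.Adj u w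

/-- The induced subgraph of `G` on `B` is a cycle. -/
def IsCycleOn (G : SimpleGraph V) (B : Set V) : Prop :=
  ∃ n : ℕ, 3 ≤ n ∧ ∃ c : ZMod n → V, Function.Injective c ∧ Set.range c = B ∧
    ∀ i j : ZMod n, G.Adj (c i) (c j) ↔ (j = i + 1 ∨ i = j + 1)

/-- A block-cactus graph: every block is complete or a cycle. -/
def IsBlockCactus (G : SimpleGraph V) : Prop :=
  ∀ B : Set V, IsBlockOf G B → IsCompleteOn G B ∨ IsCycleOn G B

/-- A cactus graph: connected, and any two (distinct) cycles have at most one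
vertex in common. -/
def IsCactus (G : SimpleGraph V) : Prop :=
  G.Connected ∧
  ∀ (n m : ℕ), 3 ≤ n → 3 ≤ m → ∀ (c : ZMod n → V) (c' : ZMod m → V),
    IsCycleMap G c → IsCycleMap G c' →
    Set.range c = Set.range c' ∨ (Set.range c ∩ Set.range c').Subsingleton

/-- `S` is a pendant edge of `G` incident with `v`. -/
def IncidentPendant (G : SimpleGraph V) (v : V) (S : Set V) : Prop :=
  ∃ u, PendantEdge G v u ∧ S = {v, u}

/-- `S` is (the vertex set of) a basic 3-cycle of `G` through `v`. -/
def IncidentBasic3 (G : SimpleGraph V) (v : V) (S : Set V) : Prop :=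
  ∃ c : ZMod 3 → V, IsBasic3Cycle G c ∧ Set.range c = S ∧ v ∈ S

/-- `S` is (the vertex set of) a basic 4-cycle of `G` through `v`. -/
def IncidentBasic4 (G : SimpleGraph V) (v : V) (S : Set V) : Prop :=
  ∃ c : ZMod 4 → V, IsBasic4Cycle G c ∧ Set.range c = S ∧ v ∈ S

/-- `S` is (the vertex set of) a basic 5-cycle of `G` through `v`. -/
def IncidentBasic5 (G : SimpleGraph V) (v : V) (S : Set V) : Prop :=
  ∃ c : ZMod 5 → V, IsBasic5Cycle G c ∧ Set.range c = S ∧ v ∈ S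

/-- `H` is a minor of `G`, witnessed by pairwise disjoint connected branch
sets. -/
def IsMinorOf (H : SimpleGraph W) (G : SimpleGraph V) : Prop :=
  ∃ f : W → Set V,
    (∀ w, (G.induce (f w)).Connected) ∧
    (∀ w w', w ≠ w' → Disjoint (f w) (f w')) ∧
    (∀ w w', H.Adj w w' → ∃ a ∈ f w, ∃ b ∈ f w', G.Adj a b)

/-- Planarity, via Wagner's characterization: a graph is planar iff it has
neither `K₅` nor `K₃,₃` as a minor. -/
def IsPlanar (G : SimpleGraph V) : Prop :=
  ¬ IsMinorOf (⊤ : SimpleGraph (Fin 5)) G ∧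
  ¬ IsMinorOf (completeBipartiteGraph (Fin 3) (Fin 3)) G

/-- The class `W₂`: a well-covered graph such that deleting any vertex leaves a
well-covered graph with the same independence number. -/
def InW2 (G : SimpleGraph V) : Prop :=
  WellCovered G ∧ ∀ x : V,
    WellCovered (G.induce ({x}ᶜ : Set V)) ∧
    _root_.indepNum (G.induce ({x}ᶜ : Set V)) = _root_.indepNum G

/-- The edge relation of the graph `G_n`, on vertex labels `1, …, 3n-1`
(the vertex `x_i` has label `i`). -/
def gnRel (n : ℕ) (a b : ℕ) : Prop :=
  (a = 1 ∧ b = 2) ∨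
  (∃ k : ℕ, 1 ≤ k ∧ k ≤ n - 1 ∧
    ((a = 3 * k - 1 ∧ b = 3 * k) ∨ (a = 3 * k ∧ b = 3 * k + 1) ∨
     (a = 3 * k + 1 ∧ b = 3 * k + 2) ∨ (a = 3 * k + 2 ∧ b = 3 * k - 2))) ∨
  (∃ l : ℕ, 2 ≤ l ∧ l ≤ n - 1 ∧ a = 3 * l - 3 ∧ b = 3 * l)

/-- The graph `G_n`, with vertex set `{x_1, …, x_{3n-1}}`; the vertex `x_i` is
represented by the element of `Fin (3*n-1)` with value `i - 1`. -/
def Gn (n : ℕ) : SimpleGraph (Fin (3 * n - 1)) :=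
  SimpleGraph.fromRel (fun a b => gnRel n (a.1 + 1) (b.1 + 1))

/-- The graph `H_n = G_n ∖ x_{3n-1}`, with vertex set `{x_1, …, x_{3n-2}}`;
the vertex `x_i` is represented by the element of `Fin (3*n-2)` with value
`i - 1`. -/
def Hn (n : ℕ) : SimpleGraph (Fin (3 * n - 2)) :=
  SimpleGraph.fromRel (fun a b => gnRel n (a.1 + 1) (b.1 + 1))

section Infra
set_option linter.unusedSectionVars false
variable {V : Type*} [Fintype V] {G : SimpleGraph V} {A : Set V}

lemma mem_nbhd {v u : V} : u ∈ nbhd G v ↔ G.Adj v u := Iff.rfl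

lemma mem_closedNbhd {v u : V} : u ∈ closedNbhd G v ↔ u = v ∨ G.Adj v u := Set.mem_insert_iff

lemma two_le_ncard {s : Set V} {a b : V} (ha : a ∈ s) (hb : b ∈ s) (hab : a ≠ b) :
    2 ≤ s.ncard := by
  have h := Set.ncard_le_ncard (show {a, b} ⊆ s by simp [Set.insert_subset_iff, ha, hb])
    (Set.toFinite s)
  rwa [Set.ncard_pair hab] at h

lemma three_le_ncard {s : Set V} {a b c : V} (ha : a ∈ s) (hb : b ∈ s) (hc : c ∈ s)
    (hab : a ≠ b) (hac : a ≠ c) (hbc : b ≠ c) : 3 ≤ s.ncard := by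
  have h := Set.ncard_le_ncard (show {a, b, c} ⊆ s by
    simp [Set.insert_subset_iff, ha, hb, hc]) (Set.toFinite s)
  rwa [Set.ncard_eq_three.mpr ⟨a, b, c, hab, hac, hbc, rfl⟩] at h

lemma nbhd_eq_pair {v a b : V} (ha : G.Adj v a) (hb : G.Adj v b) (hab : a ≠ b)
    (h : deg G v ≤ 2) : nbhd G v = {a, b} := by
  refine (Set.eq_of_subset_of_ncard_le ?_ ?_ (Set.toFinite _)).symm
  · simp [Set.insert_subset_iff, mem_nbhd, ha, hb]
  · rw [Set.ncard_pair hab]; exact h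

lemma deg_ge_two {v a b : V} (ha : G.Adj v a) (hb : G.Adj v b) (hab : a ≠ b) :
    2 ≤ deg G v := two_le_ncard (mem_nbhd.2 ha) (mem_nbhd.2 hb) hab

lemma deg_ge_three {v a b c : V} (ha : G.Adj v a) (hb : G.Adj v b) (hc : G.Adj v c)
    (hab : a ≠ b) (hac : a ≠ c) (hbc : b ≠ c) : 3 ≤ deg G v :=
  three_le_ncard (mem_nbhd.2 ha) (mem_nbhd.2 hb) (mem_nbhd.2 hc) hab hac hbc

lemma adj_induce {u z : ↥A} : (G.induce A).Adj u z ↔ G.Adj u.1 z.1 := Iff.rfl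

lemma nbhd_induce_image (u : ↥A) :
    Subtype.val '' (nbhd (G.induce A) u) = nbhd G u.1 ∩ A := by
  ext z
  constructor
  · rintro ⟨z', hz', rfl⟩; exact ⟨hz', z'.2⟩
  · rintro ⟨hz, hzA⟩; exact ⟨⟨z, hzA⟩, hz, rfl⟩

lemma deg_induce (u : ↥A) : deg (G.induce A) u = (nbhd G u.1 ∩ A).ncard := by
  rw [deg, ← nbhd_induce_image u, Set.ncard_image_of_injective _ Subtype.val_injective]

lemma deg_induce_le (u : ↥A) : deg (G.induce A) u ≤ deg G u.1 := by
  rw [deg_induce]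
  exact Set.ncard_le_ncard Set.inter_subset_left (Set.toFinite _)

lemma closedNbhd_induce_eq (u : ↥A) :
    closedNbhd (G.induce A) u = Subtype.val ⁻¹' (insert u.1 (nbhd G u.1 ∩ A)) := by
  ext z
  simp only [mem_closedNbhd, Set.mem_preimage, Set.mem_insert_iff, Set.mem_inter_iff]
  constructor
  · rintro (h | h)
    · exact Or.inl (congrArg Subtype.val h)
    · exact Or.inr ⟨h, z.2⟩
  · rintro (h | ⟨h, _⟩)
    · exact Or.inl (Subtype.ext h)
    · exact Or.inr h

lemma simplicial_induce {x : V} (hx : IsSimplicial G x) (hxA : x ∈ A) :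
    IsSimplicial (G.induce A) ⟨x, hxA⟩ := by
  intro u z hu hz huz
  exact hx u.1 z.1 hu hz (fun h => huz (Subtype.ext h))

lemma simplicial_of_nbhd_small {v : ↥A} (h : (nbhd G v.1 ∩ A).ncard ≤ 1) :
    IsSimplicial (G.induce A) v := by
  intro u z hu hz huz
  exfalso
  have h2 : 2 ≤ (nbhd G v.1 ∩ A).ncard :=
    two_le_ncard ⟨hu, u.2⟩ ⟨hz, z.2⟩ (fun hh => huz (Subtype.ext hh))
  omega

lemma basic5_induce {d : ZMod 5 → V} (h : IsBasic5Cycle G d) (hr : ∀ i, d i ∈ A) :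
    IsBasic5Cycle (G.induce A) (fun i => ⟨d i, hr i⟩) := by
  refine ⟨⟨fun i j hij => h.1.1 (congrArg Subtype.val hij), fun i => h.1.2 i⟩, ?_⟩
  intro i hcon
  exact h.2 i ⟨le_trans hcon.1 (deg_induce_le _), le_trans hcon.2 (deg_induce_le _)⟩

lemma range_lift_eq {d : ZMod 5 → V} (hr : ∀ i, d i ∈ A) :
    Set.range (fun i => (⟨d i, hr i⟩ : ↥A)) = Subtype.val ⁻¹' (Set.range d) := by
  ext z
  constructor
  · rintro ⟨k, rfl⟩; exact ⟨k, rfl⟩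
  · rintro ⟨k, hk⟩; exact ⟨k, Subtype.ext hk⟩

lemma basic5_rotate {d : ZMod 5 → V} (h : IsBasic5Cycle G d) (k : ZMod 5) :
    IsBasic5Cycle G (fun i => d (i + k)) := by
  refine ⟨⟨fun i j hij => by
    have := h.1.1 hij; exact add_right_cancel this, fun i => ?_⟩, fun i => ?_⟩
  · have := h.1.2 (i + k); simpa [add_right_comm] using this
  · have := h.2 (i + k); simpa [add_right_comm] using this

lemma range_rotate {d : ZMod 5 → V} (k : ZMod 5) :
    Set.range (fun i => d (i + k)) = Set.range d := by
  ext z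
  constructor
  · rintro ⟨i, rfl⟩; exact ⟨i + k, rfl⟩
  · rintro ⟨i, rfl⟩; exact ⟨i - k, by simp⟩

end Infra
section Masters
set_option linter.unusedSectionVars false
variable {V : Type*} [Fintype V] {G : SimpleGraph V} {A : Set V}

lemma inSC_of_parts {U : Type*} [Fintype U] (H : SimpleGraph U) (P : Set (Set U))
    (hform : ∀ B ∈ P, (∃ v, IsSimplicial H v ∧ B = closedNbhd H v) ∨
      (∃ d : ZMod 5 → U, IsBasic5Cycle H d ∧ B = Set.range d))
    (hcover : ∀ u : U, ∃ B ∈ P, u ∈ B)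
    (hdisj : ∀ B ∈ P, ∀ B' ∈ P, B ≠ B' → Disjoint B B') : InSC H := by
  classical
  set S : Set (Set U) := {B | B ∈ P ∧ ∃ v, IsSimplicial H v ∧ B = closedNbhd H v} with hSdef
  set C : Set (Set U) := P \ S with hCdef
  have hSP : ∀ B ∈ S, B ∈ P := fun B hB => hB.1
  have hCP : ∀ B ∈ C, B ∈ P := fun B hB => hB.1
  have hapex : ∀ B : ↥S, ∃ v, IsSimplicial H v ∧ (B : Set U) = closedNbhd H v :=
    fun B => B.2.2
  choose ap hap1 hap2 using hapex
  have hcyc : ∀ B : ↥C, ∃ d : ZMod 5 → U, IsBasic5Cycle H d ∧ (B : Set U) = Set.range d := by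
    intro B
    rcases hform B.1 B.2.1 with h | h
    · exact absurd ⟨B.2.1, h⟩ B.2.2
    · exact h
  choose cy hcy1 hcy2 using hcyc
  haveI : Fintype ↥S := (Set.toFinite S).fintype
  haveI : Fintype ↥C := (Set.toFinite C).fintype
  set eS := Fintype.equivFin ↥S
  set eC := Fintype.equivFin ↥C
  refine ⟨Fintype.card ↥S, Fintype.card ↥C, fun i => ap (eS.symm i), fun j => cy (eC.symm j),
    fun i => hap1 _, fun j => hcy1 _, ?_⟩
  intro v
  obtain ⟨B, hBP, hvB⟩ := hcover v
  have key : ∀ B' ∈ P, v ∈ B' → B' = B := by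
    intro B' hB'P hvB'
    by_contra hne
    exact Set.not_disjoint_iff.2 ⟨v, hvB', hvB⟩ (hdisj B' hB'P B hBP hne)
  by_cases hBS : B ∈ S
  · refine ⟨Sum.inl (eS ⟨B, hBS⟩), ?_, ?_⟩
    · show v ∈ closedNbhd H (ap (eS.symm (eS ⟨B, hBS⟩)))
      rw [Equiv.symm_apply_apply, ← hap2 ⟨B, hBS⟩]
      exact hvB
    · rintro (i | j) hp
      · have h1 : v ∈ ((eS.symm i : ↥S) : Set U) := by
          rw [hap2 (eS.symm i)]; exact hp
        have h2 : ((eS.symm i : ↥S) : Set U) = B := key _ (hSP _ (eS.symm i).2) h1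
        have h3 : eS.symm i = ⟨B, hBS⟩ := Subtype.ext h2
        rw [← h3, Equiv.apply_symm_apply]
      · exfalso
        have h1 : v ∈ ((eC.symm j : ↥C) : Set U) := by
          rw [hcy2 (eC.symm j)]; exact hp
        have h2 : ((eC.symm j : ↥C) : Set U) = B := key _ (hCP _ (eC.symm j).2) h1
        exact (eC.symm j).2.2 (h2 ▸ hBS)
  · have hBC : B ∈ C := ⟨hBP, hBS⟩
    refine ⟨Sum.inr (eC ⟨B, hBC⟩), ?_, ?_⟩
    · show v ∈ Set.range (cy (eC.symm (eC ⟨B, hBC⟩)))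
      rw [Equiv.symm_apply_apply, ← hcy2 ⟨B, hBC⟩]
      exact hvB
    · rintro (i | j) hp
      · exfalso
        have h1 : v ∈ ((eS.symm i : ↥S) : Set U) := by
          rw [hap2 (eS.symm i)]; exact hp
        have h2 : ((eS.symm i : ↥S) : Set U) = B := key _ (hSP _ (eS.symm i).2) h1
        exact hBS (h2 ▸ (eS.symm i).2)
      · have h1 : v ∈ ((eC.symm j : ↥C) : Set U) := by
          rw [hcy2 (eC.symm j)]; exact hp
        have h2 : ((eC.symm j : ↥C) : Set U) = B := key _ (hCP _ (eC.symm j).2) h1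
        have h3 : eC.symm j = ⟨B, hBC⟩ := Subtype.ext h2
        rw [← h3, Equiv.apply_symm_apply]

lemma indepNum_eq_of_bounds {U : Type*} [Fintype U] (H : SimpleGraph U) (n : ℕ)
    (hex : ∃ S : Set U, IsIndep H S ∧ S.ncard = n)
    (hub : ∀ S : Set U, IsIndep H S → S.ncard ≤ n) : _root_.indepNum H = n := by
  apply le_antisymm
  · apply csSup_le ⟨n, hex⟩
    rintro m ⟨S, hS, rfl⟩
    exact hub S hS
  · apply le_csSup
    · exact ⟨n, by rintro m ⟨S, hS, rfl⟩; exact hub S hS⟩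
    · exact hex

lemma indep_cap_simplex {x : V} (hx : IsSimplicial G x) {S : Set V} (hS : IsIndep G S) :
    (S ∩ closedNbhd G x).ncard ≤ 1 := by
  by_contra h
  push_neg at h
  obtain ⟨a, b, ha, hb, hab⟩ := (Set.one_lt_ncard_iff (Set.toFinite _)).1 h
  have hadj : G.Adj a b := by
    rcases mem_closedNbhd.1 ha.2 with rfl | ha2
    · rcases mem_closedNbhd.1 hb.2 with rfl | hb2
      · exact absurd rfl hab
      · exact hb2
    · rcases mem_closedNbhd.1 hb.2 with rfl | hb2
      · exact ha2.symm
      · exact hx a b ha2 hb2 hab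
  exact hS a ha.1 b hb.1 hadj

lemma indep_cap_cycle {d : ZMod 5 → V} (hinj : Function.Injective d)
    (hadj : ∀ i, G.Adj (d i) (d (i + 1))) {S : Set V} (hS : IsIndep G S) :
    (S ∩ Set.range d).ncard ≤ 2 := by
  classical
  have himg : S ∩ Set.range d = d '' {k | d k ∈ S} := by
    ext z
    constructor
    · rintro ⟨hz, k, rfl⟩; exact ⟨k, hz, rfl⟩
    · rintro ⟨k, hk, rfl⟩; exact ⟨hk, k, rfl⟩
  rw [himg, Set.ncard_image_of_injective _ hinj]
  rw [Set.ncard_eq_toFinset_card']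
  have key : ∀ T : Finset (ZMod 5), (∀ k ∈ T, k + 1 ∉ T) → T.card ≤ 2 := by decide
  apply key
  intro k hk hk1
  simp only [Set.mem_toFinset, Set.mem_setOf_eq] at hk hk1
  exact hS _ hk _ hk1 (hadj k)

lemma ncard_biUnion_le' {U : Type*} [Fintype U] {ι : Type*} (I : Finset ι) (f : ι → Set U) :
    (⋃ i ∈ I, f i).ncard ≤ ∑ i ∈ I, (f i).ncard := by
  classical
  induction I using Finset.induction with
  | empty => simp
  | @insert a I ha ih =>
      rw [Finset.sum_insert ha, Finset.set_biUnion_insert]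
      exact le_trans (Set.ncard_union_le _ _) (Nat.add_le_add_left ih _)

lemma ncard_le_sum {U : Type*} [Fintype U] {ι : Type*} [Fintype ι] (P : ι → Set U)
    (S : Set U) (hcov : ∀ u ∈ S, ∃ i, u ∈ P i) (cap : ι → ℕ)
    (hcap : ∀ i, (S ∩ P i).ncard ≤ cap i) : S.ncard ≤ ∑ i, cap i := by
  have h1 : S ⊆ ⋃ i, S ∩ P i := by
    intro u hu
    obtain ⟨i, hi⟩ := hcov u hu
    exact Set.mem_iUnion.2 ⟨i, hu, hi⟩
  calc S.ncard ≤ (⋃ i, S ∩ P i).ncard := Set.ncard_le_ncard h1 (Set.toFinite _)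
    _ ≤ ∑ i, (S ∩ P i).ncard := by
        have := ncard_biUnion_le' Finset.univ (fun i => S ∩ P i)
        simpa using this
    _ ≤ ∑ i, cap i := Finset.sum_le_sum (fun i _ => hcap i)

lemma indep_val_image {S : Set ↥A} (h : IsIndep (G.induce A) S) :
    IsIndep G (Subtype.val '' S) ∧ (Subtype.val '' S).ncard = S.ncard := by
  constructor
  · rintro u ⟨u', hu', rfl⟩ z ⟨z', hz', rfl⟩ hadj
    exact h u' hu' z' hz' hadj
  · exact Set.ncard_image_of_injective _ Subtype.val_injective

lemma indep_preimage {S : Set V} (hSA : S ⊆ A) (h : IsIndep G S) :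
    IsIndep (G.induce A) (Subtype.val ⁻¹' S) ∧
      (Subtype.val ⁻¹' S : Set ↥A).ncard = S.ncard := by
  constructor
  · intro u hu z hz hadj
    exact h u.1 hu z.1 hz hadj
  · rw [← Set.ncard_image_of_injective _ Subtype.val_injective,
      Subtype.image_preimage_coe, Set.inter_eq_self_of_subset_right hSA]

end Masters
section Pieces
set_option linter.unusedSectionVars false
set_option maxHeartbeats 1000000
variable {V : Type*} [Fintype V] {G : SimpleGraph V} {A : Set V}

/-- Small ZMod 5 facts. -/
lemma z5cases : ∀ k : ZMod 5, k = 0 ∨ k = 1 ∨ k = 2 ∨ k = 3 ∨ k = 4 := by decide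
lemma z5a : ∀ k : ZMod 5, k + 4 + 1 = k := by decide
lemma z5b : ∀ k : ZMod 5, k + 4 ≠ k + 1 := by decide
lemma zq1 : ∀ k l : ZMod 5, k + 4 = l + 4 → k = l := by decide
lemma zq2 : ∀ k l : ZMod 5, k + 1 = l + 1 → k = l := by decide
lemma zq3 : ∀ k l : ZMod 5, k + 4 = l + 1 → l = k + 3 := by decide
lemma zq4 : ∀ k l : ZMod 5, k + 1 = l + 4 → l = k + 2 := by decide
lemma zq5 : ∀ k : ZMod 5, k + 3 + 3 = k + 1 := by decide
lemma zq6 : ∀ k : ZMod 5, k + 3 + 4 = k + 2 := by decide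
lemma zq7 : ∀ k : ZMod 5, k + 1 ≠ k + 4 := by decide
lemma zq8 : ∀ k : ZMod 5, k + 2 ≠ k + 4 := by decide
lemma zq9 : ∀ k : ZMod 5, k + 3 ≠ k + 1 := by decide

def pieces (G : SimpleGraph V) (A D : Set V) : Set (Set V) :=
  {B | ∃ v, v ∈ D ∧ v ∈ A ∧ (nbhd G v ∩ A).ncard ≤ 1 ∧ B = insert v (nbhd G v ∩ A)}

lemma pieces_form {D B : Set V} (hB : B ∈ pieces G A D) :
    ∃ v : ↥A, IsSimplicial (G.induce A) v ∧
      (Subtype.val ⁻¹' B : Set ↥A) = closedNbhd (G.induce A) v := by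
  obtain ⟨v, hvD, hvA, hcard, rfl⟩ := hB
  exact ⟨⟨v, hvA⟩, simplicial_of_nbhd_small hcard, by rw [closedNbhd_induce_eq]⟩

lemma mem_piece_self {D : Set V} {v : V} (hvD : v ∈ D) (hvA : v ∈ A)
    (hcard : (nbhd G v ∩ A).ncard ≤ 1) :
    insert v (nbhd G v ∩ A) ∈ pieces G A D ∧ v ∈ insert v (nbhd G v ∩ A) :=
  ⟨⟨v, hvD, hvA, hcard, rfl⟩, Set.mem_insert _ _⟩

lemma eq_singleton_of_mem_ncard_le_one {s : Set V} {z : V} (hz : z ∈ s)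
    (h : s.ncard ≤ 1) : s = {z} := by
  ext z'
  constructor
  · intro hz'
    by_contra hne
    have := two_le_ncard hz' hz (by simpa using hne)
    omega
  · rintro rfl; exact hz

lemma pair_inter_none {a b : V} (ha : a ∉ A) (hb : b ∉ A) : ({a, b} : Set V) ∩ A = ∅ := by
  ext z
  simp only [Set.mem_inter_iff, Set.mem_insert_iff, Set.mem_singleton_iff, Set.mem_empty_iff_false,
    iff_false, not_and]
  rintro (rfl | rfl) <;> assumption

lemma pair_inter_right {a b : V} (ha : a ∉ A) (hb : b ∈ A) : ({a, b} : Set V) ∩ A = {b} := by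
  ext z
  simp only [Set.mem_inter_iff, Set.mem_insert_iff, Set.mem_singleton_iff]
  constructor
  · rintro ⟨rfl | rfl, hz⟩
    · exact absurd hz ha
    · rfl
  · rintro rfl; exact ⟨Or.inr rfl, hb⟩

lemma pair_inter_left {a b : V} (ha : a ∈ A) (hb : b ∉ A) : ({a, b} : Set V) ∩ A = {a} := by
  rw [Set.pair_comm]; exact pair_inter_right hb ha

lemma pair_inter_both {a b : V} (ha : a ∈ A) (hb : b ∈ A) : ({a, b} : Set V) ∩ A = {a, b} := by
  rw [Set.inter_eq_self_of_subset_left]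
  rintro z (rfl | rfl) <;> assumption

lemma adj_prev {d : ZMod 5 → V} (hadj : ∀ i, G.Adj (d i) (d (i + 1))) (i : ZMod 5) :
    G.Adj (d i) (d (i + 4)) := by
  have h := hadj (i + 4)
  rw [z5a i] at h
  exact h.symm

lemma inj_ne {d : ZMod 5 → V} (hinj : Function.Injective d) {i j : ZMod 5} (h : i ≠ j) :
    d i ≠ d j := fun hh => h (hinj hh)

lemma cycle_nbhd_two {d : ZMod 5 → V} (hinj : Function.Injective d)
    (hadj : ∀ i, G.Adj (d i) (d (i + 1))) {i j k : ZMod 5} (hj : i + 4 = j) (hk : i + 1 = k)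
    (h : deg G (d i) ≤ 2) : nbhd G (d i) = {d j, d k} := by
  subst hj; subst hk
  exact nbhd_eq_pair (adj_prev hadj i) (hadj i) (inj_ne hinj (z5b i)) h

lemma not_adj_of_nbhd_pair {v a b z : V} (n : nbhd G v = {a, b}) (hza : z ≠ a)
    (hzb : z ≠ b) : ¬ G.Adj z v := by
  intro h
  have hm : z ∈ nbhd G v := mem_nbhd.2 h.symm
  rw [n] at hm
  rcases hm with rfl | rfl
  · exact hza rfl
  · exact hzb rfl

lemma pieces_empty_of_untouched {d : ZMod 5 → V} (hinj : Function.Injective d)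
    (hadj : ∀ i, G.Adj (d i) (d (i + 1))) (hr : ∀ i, d i ∈ A) :
    pieces G A (Set.range d) = ∅ := by
  rw [Set.eq_empty_iff_forall_notMem]
  rintro B ⟨v, ⟨k, rfl⟩, hvA, hcard, rfl⟩
  have h2 : 2 ≤ (nbhd G (d k) ∩ A).ncard :=
    two_le_ncard ⟨mem_nbhd.2 (adj_prev hadj k), hr _⟩ ⟨mem_nbhd.2 (hadj k), hr _⟩
      (inj_ne hinj (z5b k))
  omega

/-- Generic pairwise disjointness of pieces of a 5-cycle. -/
lemma pieces_disjoint {d : ZMod 5 → V} (hinj : Function.Injective d)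
    (hadj : ∀ i, G.Adj (d i) (d (i + 1)))
    (hdeg2 : ∀ k : ZMod 5, d k ∈ A → (nbhd G (d k) ∩ A).ncard ≤ 1 →
      nbhd G (d k) = {d (k + 4), d (k + 1)})
    (hcons : ∀ k : ZMod 5, d (k + 3) ∉ A → d (k + 4) ∉ A → False) :
    ∀ B ∈ pieces G A (Set.range d), ∀ B' ∈ pieces G A (Set.range d),
      B ≠ B' → Disjoint B B' := by
  rintro B ⟨v, ⟨k, rfl⟩, hvA, hcard, rfl⟩ B' ⟨v', ⟨l, rfl⟩, hvA', hcard', rfl⟩ hne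
  rw [Set.disjoint_left]
  intro u huB huB'
  apply hne
  have nk := hdeg2 k hvA hcard
  have nl := hdeg2 l hvA' hcard'
  have hkl : d k ≠ d l := fun h => hne (by rw [h])
  by_cases hmut : d l ∈ nbhd G (d k) ∩ A
  · have hsv : nbhd G (d k) ∩ A = {d l} := eq_singleton_of_mem_ncard_le_one hmut hcard
    have hlk : d k ∈ nbhd G (d l) ∩ A := ⟨mem_nbhd.2 (mem_nbhd.1 hmut.1).symm, hvA⟩
    have hsv' : nbhd G (d l) ∩ A = {d k} := eq_singleton_of_mem_ncard_le_one hlk hcard'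
    rw [hsv, hsv']
    exact Set.pair_comm _ _
  · exfalso
    have hmut' : d k ∉ nbhd G (d l) ∩ A := by
      rintro ⟨h1, _⟩
      exact hmut ⟨mem_nbhd.2 (mem_nbhd.1 h1).symm, hvA'⟩
    have huk : u ∈ nbhd G (d k) ∩ A := by
      rcases huB with rfl | h
      · rcases huB' with h'' | h'
        · exact absurd h'' hkl
        · exact absurd h' hmut'
      · exact h
    have hul : u ∈ nbhd G (d l) ∩ A := by
      rcases huB' with h'' | h'
      · rw [h''] at huk
        exact absurd huk hmut
      · exact h'
    have hsk : nbhd G (d k) ∩ A = {u} := eq_singleton_of_mem_ncard_le_one huk hcard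
    have hsl : nbhd G (d l) ∩ A = {u} := eq_singleton_of_mem_ncard_le_one hul hcard'
    have hukn : u = d (k + 4) ∨ u = d (k + 1) := by
      have hm := huk.1
      rw [nk] at hm
      simpa using hm
    have huln : u = d (l + 4) ∨ u = d (l + 1) := by
      have hm := hul.1
      rw [nl] at hm
      simpa using hm
    have hexk : ∀ m : ZMod 5, (m = k + 4 ∨ m = k + 1) → d m ≠ u → d m ∉ A := by
      intro m hm hmu hmA
      apply hmu
      have hmem : d m ∈ nbhd G (d k) ∩ A := by
        refine ⟨?_, hmA⟩
        rcases hm with rfl | rfl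
        · exact mem_nbhd.2 (adj_prev hadj k)
        · exact mem_nbhd.2 (hadj k)
      rw [hsk] at hmem
      exact hmem
    have hexl : ∀ m : ZMod 5, (m = l + 4 ∨ m = l + 1) → d m ≠ u → d m ∉ A := by
      intro m hm hmu hmA
      apply hmu
      have hmem : d m ∈ nbhd G (d l) ∩ A := by
        refine ⟨?_, hmA⟩
        rcases hm with rfl | rfl
        · exact mem_nbhd.2 (adj_prev hadj l)
        · exact mem_nbhd.2 (hadj l)
      rw [hsl] at hmem
      exact hmem
    rcases hukn with h1 | h1 <;> rcases huln with h2 | h2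
    · -- u = d (k+4) = d (l+4)
      exact hkl (congrArg d (zq1 k l (hinj (h1.symm.trans h2))))
    · -- u = d (k+4) = d (l+1), l = k+3
      have hl : l = k + 3 := zq3 k l (hinj (h1.symm.trans h2))
      subst hl
      have e1 : d (k + 1) ∉ A :=
        hexk (k + 1) (Or.inr rfl) (by rw [h1]; exact inj_ne hinj (zq7 k))
      have e2 : d (k + 2) ∉ A := by
        have hh := hexl (k + 3 + 4) (Or.inl rfl)
          (by rw [h2]; exact inj_ne hinj (fun hx => z5b (k + 3) hx))
        rwa [zq6 k] at hh
      exact hcons (k + 3) (by rwa [zq5 k]) (by rwa [zq6 k])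
    · -- u = d (k+1) = d (l+4), l = k+2
      have hl : l = k + 2 := zq4 k l (hinj (h1.symm.trans h2))
      subst hl
      have e1 : d (k + 4) ∉ A :=
        hexk (k + 4) (Or.inl rfl) (by rw [h1]; exact inj_ne hinj (z5b k))
      have e2 : d (k + 3) ∉ A := by
        have hh := hexl (k + 2 + 1) (Or.inr rfl)
          (by rw [h2]
              refine inj_ne hinj ?_
              intro hx
              exact zq7 (k + 2) (hx.trans rfl) |>.elim)
        have heq : k + 2 + 1 = k + 3 := by
          have hz : ∀ k : ZMod 5, k + 2 + 1 = k + 3 := by decide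
          exact hz k
        rwa [heq] at hh
      exact hcons k e2 e1
    · -- u = d (k+1) = d (l+1)
      exact hkl (congrArg d (zq2 k l (hinj (h1.symm.trans h2))))

end Pieces
section Cycles
set_option linter.unusedSectionVars false
set_option maxHeartbeats 1600000
variable {V : Type*} [Fintype V] {G : SimpleGraph V} {A : Set V}

lemma mem_complNbhd {w v : V} : v ∈ (closedNbhd G w)ᶜ ↔ v ≠ w ∧ ¬ G.Adj w v := by
  rw [Set.mem_compl_iff]
  constructor
  · intro h
    exact ⟨fun e => h (mem_closedNbhd.2 (Or.inl e)), fun e => h (mem_closedNbhd.2 (Or.inr e))⟩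
  · rintro ⟨h1, h2⟩ h
    rcases mem_closedNbhd.1 h with e | e
    · exact h1 e
    · exact h2 e

lemma zr1 : ∀ k : ZMod 5, k + 1 + 4 = k := by decide
lemma zr2 : ∀ k : ZMod 5, k + 1 + 1 = k + 2 := by decide
lemma zr3 : ∀ k : ZMod 5, k + 4 + 4 = k + 3 := by decide
lemma zr4 : ∀ k : ZMod 5, k + 3 + 1 = k + 4 := by decide

lemma pieces_subset {d : ZMod 5 → V}
    (hdeg2 : ∀ k : ZMod 5, d k ∈ A → (nbhd G (d k) ∩ A).ncard ≤ 1 →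
      nbhd G (d k) = {d (k + 4), d (k + 1)}) :
    ∀ B ∈ pieces G A (Set.range d), B ⊆ Set.range d ∩ A := by
  rintro B ⟨v, ⟨k, rfl⟩, hvA, hcard, rfl⟩ z hz
  rcases hz with rfl | ⟨hz1, hz2⟩
  · exact ⟨⟨k, rfl⟩, hvA⟩
  · rw [hdeg2 k hvA hcard] at hz1
    rcases hz1 with rfl | rfl
    exacts [⟨⟨k + 4, rfl⟩, hz2⟩, ⟨⟨k + 1, rfl⟩, hz2⟩]

lemma cycleA {w : V} {d : ZMod 5 → V} (hd : IsBasic5Cycle G d) (hw : w ∉ Set.range d)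
    (h0 : G.Adj w (d 0)) :
    (∀ v ∈ Set.range d ∩ (closedNbhd G w)ᶜ,
        ∃ B ∈ pieces G (closedNbhd G w)ᶜ (Set.range d), v ∈ B) ∧
    (∀ B ∈ pieces G (closedNbhd G w)ᶜ (Set.range d), B ⊆ Set.range d ∩ (closedNbhd G w)ᶜ) ∧
    (∀ B ∈ pieces G (closedNbhd G w)ᶜ (Set.range d),
      ∀ B' ∈ pieces G (closedNbhd G w)ᶜ (Set.range d), B ≠ B' → Disjoint B B') := by
  obtain ⟨⟨hinj, hadj⟩, hbasic⟩ := hd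
  set A := (closedNbhd G w)ᶜ with hAdef
  have hne : ∀ i, w ≠ d i := fun i h => hw ⟨i, h.symm⟩
  have hdeg3 : ∀ i, G.Adj w (d i) → 3 ≤ deg G (d i) := fun i hi =>
    deg_ge_three (hadj i) (adj_prev hadj i) hi.symm (inj_ne hinj (zq7 i))
      (Ne.symm (hne (i + 1))) (Ne.symm (hne (i + 4)))
  have hdegle : ∀ i j : ZMod 5, i + 1 = j → 3 ≤ deg G (d i) → deg G (d j) ≤ 2 := by
    intro i j hij h3
    have hb := hbasic i
    rw [hij] at hb
    by_contra hcon
    exact hb ⟨h3, by omega⟩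
  have hdegle' : ∀ i j : ZMod 5, i + 1 = j → 3 ≤ deg G (d j) → deg G (d i) ≤ 2 := by
    intro i j hij h3
    have hb := hbasic i
    rw [hij] at hb
    by_contra hcon
    exact hb ⟨by omega, h3⟩
  have hmemA : ∀ i a b : ZMod 5, nbhd G (d i) = {d a, d b} → d i ∈ A := by
    intro i a b hn
    exact mem_complNbhd.2 ⟨Ne.symm (hne i), not_adj_of_nbhd_pair hn (hne a) (hne b)⟩
  have notA : ∀ i, d i ∉ A → G.Adj w (d i) := by
    intro i hi
    by_contra hc
    exact hi (mem_complNbhd.2 ⟨Ne.symm (hne i), hc⟩)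
  have d0nA : d 0 ∉ A := fun h => (mem_complNbhd.1 h).2 h0
  have deg0 : 3 ≤ deg G (d 0) := hdeg3 0 h0
  have n1 : nbhd G (d 1) = {d 0, d 2} :=
    cycle_nbhd_two hinj hadj (by decide) (by decide) (hdegle 0 1 (by decide) deg0)
  have n4 : nbhd G (d 4) = {d 3, d 0} :=
    cycle_nbhd_two hinj hadj (by decide) (by decide) (hdegle' 4 0 (by decide) deg0)
  have d1A : d 1 ∈ A := hmemA 1 0 2 n1
  have d4A : d 4 ∈ A := hmemA 4 3 0 n4
  have hdeg2 : ∀ k : ZMod 5, d k ∈ A → (nbhd G (d k) ∩ A).ncard ≤ 1 →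
      nbhd G (d k) = {d (k + 4), d (k + 1)} := by
    intro k hkA hcard
    by_cases h3 : 3 ≤ deg G (d k)
    · exfalso
      have nxt : nbhd G (d (k + 1)) = {d k, d (k + 2)} :=
        cycle_nbhd_two hinj hadj (zr1 k) (zr2 k) (hdegle k (k + 1) rfl h3)
      have prv : nbhd G (d (k + 4)) = {d (k + 3), d k} :=
        cycle_nbhd_two hinj hadj (zr3 k) (z5a k) (hdegle' (k + 4) k (z5a k) h3)
      have m1 : d (k + 1) ∈ A := hmemA _ _ _ nxt
      have m4 : d (k + 4) ∈ A := hmemA _ _ _ prv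
      have h2 : 2 ≤ (nbhd G (d k) ∩ A).ncard :=
        two_le_ncard ⟨mem_nbhd.2 (adj_prev hadj k), m4⟩ ⟨mem_nbhd.2 (hadj k), m1⟩
          (inj_ne hinj (z5b k))
      omega
    · exact cycle_nbhd_two hinj hadj rfl rfl (by omega)
  have hcons : ∀ k : ZMod 5, d (k + 3) ∉ A → d (k + 4) ∉ A → False := by
    intro k h3 h4
    have hb := hbasic (k + 3)
    rw [zr4 k] at hb
    exact hb ⟨hdeg3 _ (notA _ h3), hdeg3 _ (notA _ h4)⟩
  refine ⟨?_, pieces_subset hdeg2, pieces_disjoint hinj hadj hdeg2 hcons⟩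
  rintro v ⟨⟨k, rfl⟩, hvA⟩
  by_cases h2 : G.Adj w (d 2)
  · have deg2 : 3 ≤ deg G (d 2) := hdeg3 2 h2
    have n3 : nbhd G (d 3) = {d 2, d 4} :=
      cycle_nbhd_two hinj hadj (by decide) (by decide) (hdegle 2 3 (by decide) deg2)
    have d2nA : d 2 ∉ A := fun h => (mem_complNbhd.1 h).2 h2
    have d3A : d 3 ∈ A := hmemA 3 2 4 n3
    have c1 : nbhd G (d 1) ∩ A = (∅ : Set V) := by rw [n1]; exact pair_inter_none d0nA d2nA
    have c3 : nbhd G (d 3) ∩ A = {d 4} := by rw [n3]; exact pair_inter_right d2nA d4A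
    have p1 := mem_piece_self (G := G) (Set.mem_range_self (1 : ZMod 5)) d1A (by rw [c1]; simp)
    have p3 := mem_piece_self (G := G) (Set.mem_range_self (3 : ZMod 5)) d3A (by rw [c3]; simp)
    rcases z5cases k with rfl | rfl | rfl | rfl | rfl
    · exact absurd hvA d0nA
    · exact ⟨_, p1.1, p1.2⟩
    · exact absurd hvA d2nA
    · exact ⟨_, p3.1, p3.2⟩
    · exact ⟨_, p3.1, Set.mem_insert_iff.2 (Or.inr (by rw [c3]; rfl))⟩
  · by_cases h3 : G.Adj w (d 3)
    · have deg3 : 3 ≤ deg G (d 3) := hdeg3 3 h3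
      have n2 : nbhd G (d 2) = {d 1, d 3} :=
        cycle_nbhd_two hinj hadj (by decide) (by decide) (hdegle' 2 3 (by decide) deg3)
      have d3nA : d 3 ∉ A := fun h => (mem_complNbhd.1 h).2 h3
      have d2A : d 2 ∈ A := hmemA 2 1 3 n2
      have c4 : nbhd G (d 4) ∩ A = (∅ : Set V) := by rw [n4]; exact pair_inter_none d3nA d0nA
      have c1 : nbhd G (d 1) ∩ A = {d 2} := by rw [n1]; exact pair_inter_right d0nA d2A
      have p4 := mem_piece_self (G := G) (Set.mem_range_self (4 : ZMod 5)) d4A (by rw [c4]; simp)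
      have p1 := mem_piece_self (G := G) (Set.mem_range_self (1 : ZMod 5)) d1A (by rw [c1]; simp)
      rcases z5cases k with rfl | rfl | rfl | rfl | rfl
      · exact absurd hvA d0nA
      · exact ⟨_, p1.1, p1.2⟩
      · exact ⟨_, p1.1, Set.mem_insert_iff.2 (Or.inr (by rw [c1]; rfl))⟩
      · exact absurd hvA d3nA
      · exact ⟨_, p4.1, p4.2⟩
    · have d2A : d 2 ∈ A := mem_complNbhd.2 ⟨Ne.symm (hne 2), h2⟩
      have d3A : d 3 ∈ A := mem_complNbhd.2 ⟨Ne.symm (hne 3), h3⟩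
      have c1 : nbhd G (d 1) ∩ A = {d 2} := by rw [n1]; exact pair_inter_right d0nA d2A
      have c4 : nbhd G (d 4) ∩ A = {d 3} := by rw [n4]; exact pair_inter_left d3A d0nA
      have p1 := mem_piece_self (G := G) (Set.mem_range_self (1 : ZMod 5)) d1A (by rw [c1]; simp)
      have p4 := mem_piece_self (G := G) (Set.mem_range_self (4 : ZMod 5)) d4A (by rw [c4]; simp)
      rcases z5cases k with rfl | rfl | rfl | rfl | rfl
      · exact absurd hvA d0nA
      · exact ⟨_, p1.1, p1.2⟩
      · exact ⟨_, p1.1, Set.mem_insert_iff.2 (Or.inr (by rw [c1]; rfl))⟩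
      · exact ⟨_, p4.1, Set.mem_insert_iff.2 (Or.inr (by rw [c4]; rfl))⟩
      · exact ⟨_, p4.1, p4.2⟩

lemma cycleC {w : V} {d : ZMod 5 → V} (hd : IsBasic5Cycle G d) (hw0 : d 0 = w)
    (hdeg : 3 ≤ deg G (d 0)) :
    (∀ v ∈ Set.range d ∩ ({w}ᶜ : Set V),
        ∃ B ∈ pieces G ({w}ᶜ : Set V) (Set.range d), v ∈ B) ∧
    (∀ B ∈ pieces G ({w}ᶜ : Set V) (Set.range d), B ⊆ Set.range d ∩ ({w}ᶜ : Set V)) ∧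
    (∀ B ∈ pieces G ({w}ᶜ : Set V) (Set.range d),
      ∀ B' ∈ pieces G ({w}ᶜ : Set V) (Set.range d), B ≠ B' → Disjoint B B') := by
  obtain ⟨⟨hinj, hadj⟩, hbasic⟩ := hd
  set A := ({w}ᶜ : Set V) with hAdef
  have hdegle : ∀ i j : ZMod 5, i + 1 = j → 3 ≤ deg G (d i) → deg G (d j) ≤ 2 := by
    intro i j hij h3
    have hb := hbasic i
    rw [hij] at hb
    by_contra hcon
    exact hb ⟨h3, by omega⟩
  have hdegle' : ∀ i j : ZMod 5, i + 1 = j → 3 ≤ deg G (d j) → deg G (d i) ≤ 2 := by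
    intro i j hij h3
    have hb := hbasic i
    rw [hij] at hb
    by_contra hcon
    exact hb ⟨by omega, h3⟩
  have mAll : ∀ k : ZMod 5, k ≠ 0 → d k ∈ A := by
    intro k hk
    simp only [hAdef, Set.mem_compl_iff, Set.mem_singleton_iff]
    rw [← hw0]
    exact inj_ne hinj hk
  have d0nA : d 0 ∉ A := by
    simp only [hAdef, Set.mem_compl_iff, Set.mem_singleton_iff]
    rw [hw0]; simp
  have hdeg2 : ∀ k : ZMod 5, d k ∈ A → (nbhd G (d k) ∩ A).ncard ≤ 1 →
      nbhd G (d k) = {d (k + 4), d (k + 1)} := by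
    intro k hkA hcard
    rcases z5cases k with rfl | rfl | rfl | rfl | rfl
    · exact absurd hkA d0nA
    · exact cycle_nbhd_two hinj hadj rfl rfl (hdegle 0 1 (by decide) hdeg)
    · by_cases h3 : 3 ≤ deg G (d 2)
      · exfalso
        have ha21 : G.Adj (d 2) (d 1) := by
          have hx := hadj 1
          rw [show ((1 : ZMod 5) + 1) = 2 by decide] at hx
          exact hx.symm
        have ha23 : G.Adj (d 2) (d 3) := by
          have hx := hadj 2
          rwa [show ((2 : ZMod 5) + 1) = 3 by decide] at hx
        have h2 : 2 ≤ (nbhd G (d 2) ∩ A).ncard :=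
          two_le_ncard ⟨mem_nbhd.2 ha21, mAll 1 (by decide)⟩ ⟨mem_nbhd.2 ha23, mAll 3 (by decide)⟩
            (inj_ne hinj (by decide))
        omega
      · exact cycle_nbhd_two hinj hadj rfl rfl (by omega)
    · by_cases h3 : 3 ≤ deg G (d 3)
      · exfalso
        have ha32 : G.Adj (d 3) (d 2) := by
          have hx := hadj 2
          rw [show ((2 : ZMod 5) + 1) = 3 by decide] at hx
          exact hx.symm
        have ha34 : G.Adj (d 3) (d 4) := by
          have hx := hadj 3
          rwa [show ((3 : ZMod 5) + 1) = 4 by decide] at hx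
        have h2 : 2 ≤ (nbhd G (d 3) ∩ A).ncard :=
          two_le_ncard ⟨mem_nbhd.2 ha32, mAll 2 (by decide)⟩ ⟨mem_nbhd.2 ha34, mAll 4 (by decide)⟩
            (inj_ne hinj (by decide))
        omega
      · exact cycle_nbhd_two hinj hadj rfl rfl (by omega)
    · exact cycle_nbhd_two hinj hadj rfl rfl (hdegle' 4 0 (by decide) hdeg)
  have hcons : ∀ k : ZMod 5, d (k + 3) ∉ A → d (k + 4) ∉ A → False := by
    intro k h3 h4
    have e3 : k + 3 = 0 := by
      by_contra hc
      exact h3 (mAll _ hc)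
    have e4 : k + 4 = 0 := by
      by_contra hc
      exact h4 (mAll _ hc)
    have : ∀ k : ZMod 5, ¬(k + 3 = 0 ∧ k + 4 = 0) := by decide
    exact this k ⟨e3, e4⟩
  refine ⟨?_, pieces_subset hdeg2, pieces_disjoint hinj hadj hdeg2 hcons⟩
  rintro v ⟨⟨k, rfl⟩, hvA⟩
  have n1 : nbhd G (d 1) = {d 0, d 2} :=
    cycle_nbhd_two hinj hadj (by decide) (by decide) (hdegle 0 1 (by decide) hdeg)
  have n4 : nbhd G (d 4) = {d 3, d 0} :=
    cycle_nbhd_two hinj hadj (by decide) (by decide) (hdegle' 4 0 (by decide) hdeg)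
  have c1 : nbhd G (d 1) ∩ A = {d 2} := by rw [n1]; exact pair_inter_right d0nA (mAll 2 (by decide))
  have c4 : nbhd G (d 4) ∩ A = {d 3} := by rw [n4]; exact pair_inter_left (mAll 3 (by decide)) d0nA
  have p1 := mem_piece_self (G := G) (Set.mem_range_self (1 : ZMod 5)) (mAll 1 (by decide)) (by rw [c1]; simp)
  have p4 := mem_piece_self (G := G) (Set.mem_range_self (4 : ZMod 5)) (mAll 4 (by decide)) (by rw [c4]; simp)
  rcases z5cases k with rfl | rfl | rfl | rfl | rfl
  · exact absurd hvA d0nA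
  · exact ⟨_, p1.1, p1.2⟩
  · exact ⟨_, p1.1, Set.mem_insert_iff.2 (Or.inr (by rw [c1]; rfl))⟩
  · exact ⟨_, p4.1, Set.mem_insert_iff.2 (Or.inr (by rw [c4]; rfl))⟩
  · exact ⟨_, p4.1, p4.2⟩

lemma cycleB {w : V} {d : ZMod 5 → V} (hd : IsBasic5Cycle G d) (hw0 : d 0 = w)
    (hdeg : 3 ≤ deg G (d 0)) :
    (∀ v ∈ Set.range d ∩ (closedNbhd G w)ᶜ,
        ∃ B ∈ pieces G (closedNbhd G w)ᶜ (Set.range d), v ∈ B) ∧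
    (∀ B ∈ pieces G (closedNbhd G w)ᶜ (Set.range d), B ⊆ Set.range d ∩ (closedNbhd G w)ᶜ) ∧
    (∀ B ∈ pieces G (closedNbhd G w)ᶜ (Set.range d),
      ∀ B' ∈ pieces G (closedNbhd G w)ᶜ (Set.range d), B ≠ B' → Disjoint B B') := by
  obtain ⟨⟨hinj, hadj⟩, hbasic⟩ := hd
  set A := (closedNbhd G w)ᶜ with hAdef
  have hdegle : ∀ i j : ZMod 5, i + 1 = j → 3 ≤ deg G (d i) → deg G (d j) ≤ 2 := by
    intro i j hij h3
    have hb := hbasic i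
    rw [hij] at hb
    by_contra hcon
    exact hb ⟨h3, by omega⟩
  have hdegle' : ∀ i j : ZMod 5, i + 1 = j → 3 ≤ deg G (d j) → deg G (d i) ≤ 2 := by
    intro i j hij h3
    have hb := hbasic i
    rw [hij] at hb
    by_contra hcon
    exact hb ⟨by omega, h3⟩
  have a01 : G.Adj (d 0) (d 1) := by
    have hx := hadj 0
    rwa [show ((0 : ZMod 5) + 1) = 1 by decide] at hx
  have a12 : G.Adj (d 1) (d 2) := by
    have hx := hadj 1
    rwa [show ((1 : ZMod 5) + 1) = 2 by decide] at hx
  have a23 : G.Adj (d 2) (d 3) := by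
    have hx := hadj 2
    rwa [show ((2 : ZMod 5) + 1) = 3 by decide] at hx
  have a34 : G.Adj (d 3) (d 4) := by
    have hx := hadj 3
    rwa [show ((3 : ZMod 5) + 1) = 4 by decide] at hx
  have a40 : G.Adj (d 4) (d 0) := by
    have hx := hadj 4
    rwa [show ((4 : ZMod 5) + 1) = 0 by decide] at hx
  have d0nA : d 0 ∉ A := fun h => (mem_complNbhd.1 h).1 hw0
  have d1nA : d 1 ∉ A := fun h => (mem_complNbhd.1 h).2 (hw0 ▸ a01)
  have d4nA : d 4 ∉ A := fun h => (mem_complNbhd.1 h).2 (hw0 ▸ a40.symm)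
  have survK : ∀ k : ZMod 5, d k ∈ A → k = 2 ∨ k = 3 := by
    intro k hk
    rcases z5cases k with rfl | rfl | rfl | rfl | rfl
    · exact absurd hk d0nA
    · exact absurd hk d1nA
    · exact Or.inl rfl
    · exact Or.inr rfl
    · exact absurd hk d4nA
  have basic23 : ¬(3 ≤ deg G (d 2) ∧ 3 ≤ deg G (d 3)) := by
    have hb := hbasic 2
    rwa [show ((2 : ZMod 5) + 1) = 3 by decide] at hb
  have hne20 : d 2 ≠ w := hw0 ▸ inj_ne hinj (by decide)
  have hne30 : d 3 ≠ w := hw0 ▸ inj_ne hinj (by decide)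
  have hne40 : d 4 ≠ w := hw0 ▸ inj_ne hinj (by decide)
  have hne10 : d 1 ≠ w := hw0 ▸ inj_ne hinj (by decide)
  have A2 : d 3 ∉ A → deg G (d 2) ≤ 2 := by
    intro h3A
    have hadj3 : G.Adj w (d 3) := by
      by_contra hc
      exact h3A (mem_complNbhd.2 ⟨hne30, hc⟩)
    have deg3 : 3 ≤ deg G (d 3) :=
      deg_ge_three a23.symm a34 hadj3.symm (inj_ne hinj (by decide)) hne20 hne40
    by_contra hcon
    exact basic23 ⟨by omega, deg3⟩
  have A3 : d 2 ∉ A → deg G (d 3) ≤ 2 := by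
    intro h2A
    have hadj2 : G.Adj w (d 2) := by
      by_contra hc
      exact h2A (mem_complNbhd.2 ⟨hne20, hc⟩)
    have deg2 : 3 ≤ deg G (d 2) :=
      deg_ge_three a12.symm a23 hadj2.symm (inj_ne hinj (by decide)) hne10 hne30
    by_contra hcon
    exact basic23 ⟨deg2, by omega⟩
  have n2of : deg G (d 2) ≤ 2 → nbhd G (d 2) = {d 1, d 3} := fun h =>
    cycle_nbhd_two hinj hadj (by decide) (by decide) h
  have n3of : deg G (d 3) ≤ 2 → nbhd G (d 3) = {d 2, d 4} := fun h =>
    cycle_nbhd_two hinj hadj (by decide) (by decide) h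
  refine ⟨?_, ?_, ?_⟩
  · -- cover
    rintro v ⟨⟨k, rfl⟩, hvA⟩
    rcases survK k hvA with rfl | rfl
    · by_cases h3A : d 3 ∈ A
      · have hdi : deg G (d 2) ≤ 2 ∨ deg G (d 3) ≤ 2 := by
          by_contra hc
          push_neg at hc
          exact basic23 ⟨by omega, by omega⟩
        rcases hdi with hD | hD
        · have cc : nbhd G (d 2) ∩ A = {d 3} := by
            rw [n2of hD]; exact pair_inter_right d1nA h3A
          have p := mem_piece_self (G := G) (Set.mem_range_self (2 : ZMod 5)) hvA (by rw [cc]; simp)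
          exact ⟨_, p.1, p.2⟩
        · have cc : nbhd G (d 3) ∩ A = {d 2} := by
            rw [n3of hD]; exact pair_inter_left hvA d4nA
          have p := mem_piece_self (G := G) (Set.mem_range_self (3 : ZMod 5)) h3A (by rw [cc]; simp)
          exact ⟨_, p.1, Set.mem_insert_iff.2 (Or.inr (by rw [cc]; rfl))⟩
      · have cc : nbhd G (d 2) ∩ A = (∅ : Set V) := by
          rw [n2of (A2 h3A)]; exact pair_inter_none d1nA h3A
        have p := mem_piece_self (G := G) (Set.mem_range_self (2 : ZMod 5)) hvA
          (by rw [cc]; simp)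
        exact ⟨_, p.1, p.2⟩
    · by_cases h2A : d 2 ∈ A
      · have hdi : deg G (d 2) ≤ 2 ∨ deg G (d 3) ≤ 2 := by
          by_contra hc
          push_neg at hc
          exact basic23 ⟨by omega, by omega⟩
        rcases hdi with hD | hD
        · have cc : nbhd G (d 2) ∩ A = {d 3} := by
            rw [n2of hD]; exact pair_inter_right d1nA hvA
          have p := mem_piece_self (G := G) (Set.mem_range_self (2 : ZMod 5)) h2A (by rw [cc]; simp)
          exact ⟨_, p.1, Set.mem_insert_iff.2 (Or.inr (by rw [cc]; rfl))⟩
        · have cc : nbhd G (d 3) ∩ A = {d 2} := by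
            rw [n3of hD]; exact pair_inter_left h2A d4nA
          have p := mem_piece_self (G := G) (Set.mem_range_self (3 : ZMod 5)) hvA (by rw [cc]; simp)
          exact ⟨_, p.1, p.2⟩
      · have cc : nbhd G (d 3) ∩ A = (∅ : Set V) := by
          rw [n3of (A3 h2A)]; exact pair_inter_none h2A d4nA
        have p := mem_piece_self (G := G) (Set.mem_range_self (3 : ZMod 5)) hvA
          (by rw [cc]; simp)
        exact ⟨_, p.1, p.2⟩
  · -- subset
    rintro B ⟨v, ⟨k, rfl⟩, hvA, hcard, rfl⟩ z hz
    rcases survK k hvA with hk2 | hk3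
    · subst hk2
      rcases hz with rfl | hz'
      · exact ⟨⟨2, rfl⟩, hvA⟩
      · by_cases h3A : d 3 ∈ A
        · have hm : d 3 ∈ nbhd G (d 2) ∩ A := ⟨mem_nbhd.2 a23, h3A⟩
          rw [eq_singleton_of_mem_ncard_le_one hm hcard] at hz'
          rw [hz']
          exact ⟨⟨3, rfl⟩, h3A⟩
        · rw [n2of (A2 h3A)] at hz'
          rcases hz'.1 with rfl | rfl
          · exact ⟨⟨1, rfl⟩, hz'.2⟩
          · exact ⟨⟨3, rfl⟩, hz'.2⟩
    · subst hk3
      rcases hz with rfl | hz'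
      · exact ⟨⟨3, rfl⟩, hvA⟩
      · by_cases h2A : d 2 ∈ A
        · have hm : d 2 ∈ nbhd G (d 3) ∩ A := ⟨mem_nbhd.2 a23.symm, h2A⟩
          rw [eq_singleton_of_mem_ncard_le_one hm hcard] at hz'
          rw [hz']
          exact ⟨⟨2, rfl⟩, h2A⟩
        · rw [n3of (A3 h2A)] at hz'
          rcases hz'.1 with rfl | rfl
          · exact ⟨⟨2, rfl⟩, hz'.2⟩
          · exact ⟨⟨4, rfl⟩, hz'.2⟩
  · -- disjoint (in fact all pieces coincide pairwise when both exist)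
    rintro B ⟨v, ⟨k, rfl⟩, hvA, hcard, rfl⟩ B' ⟨v', ⟨l, rfl⟩, hvA', hcard', rfl⟩ hne
    exfalso
    apply hne
    rcases survK k hvA with hk | hk <;> rcases survK l hvA' with hl | hl <;> subst hk <;> subst hl
    · rfl
    · have hm : d 3 ∈ nbhd G (d 2) ∩ A := ⟨mem_nbhd.2 a23, hvA'⟩
      have hm' : d 2 ∈ nbhd G (d 3) ∩ A := ⟨mem_nbhd.2 a23.symm, hvA⟩
      rw [eq_singleton_of_mem_ncard_le_one hm hcard,
        eq_singleton_of_mem_ncard_le_one hm' hcard']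
      exact Set.pair_comm _ _
    · have hm : d 2 ∈ nbhd G (d 3) ∩ A := ⟨mem_nbhd.2 a23.symm, hvA'⟩
      have hm' : d 3 ∈ nbhd G (d 2) ∩ A := ⟨mem_nbhd.2 a23, hvA⟩
      rw [eq_singleton_of_mem_ncard_le_one hm hcard,
        eq_singleton_of_mem_ncard_le_one hm' hcard']
      exact Set.pair_comm _ _
    · rfl

end Cycles
section Glue
set_option linter.unusedSectionVars false
set_option maxHeartbeats 1600000
variable {V : Type*} [Fintype V] {G : SimpleGraph V}

lemma inSC_glue {s t : ℕ} (c : Fin s → ZMod 5 → V) (x : Fin t → V)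
    (hc : ∀ j, IsBasic5Cycle G (c j)) (hx : ∀ i, IsSimplicial G (x i))
    (hpart : ∀ v : V, ∃! p : Fin s ⊕ Fin t,
      match p with
      | Sum.inl j => v ∈ Set.range (c j)
      | Sum.inr i => v ∈ closedNbhd G (x i))
    (W : Set V) (hxW : ∀ i, x i ∉ W)
    (hcyc : ∀ j : Fin s, Set.range (c j) ∩ W = ∅ ∨
      ((∀ v ∈ Set.range (c j) ∩ (Wᶜ : Set V),
          ∃ B ∈ pieces G (Wᶜ : Set V) (Set.range (c j)), v ∈ B) ∧
       (∀ B ∈ pieces G (Wᶜ : Set V) (Set.range (c j)), B ⊆ Set.range (c j) ∩ (Wᶜ : Set V)) ∧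
       (∀ B ∈ pieces G (Wᶜ : Set V) (Set.range (c j)),
         ∀ B' ∈ pieces G (Wᶜ : Set V) (Set.range (c j)), B ≠ B' → Disjoint B B'))) :
    InSC (G.induce (Wᶜ : Set V)) := by
  classical
  set A := (Wᶜ : Set V) with hAdef
  have huniq : ∀ (v : V) (p q : Fin s ⊕ Fin t),
      (match p with
       | Sum.inl j => v ∈ Set.range (c j)
       | Sum.inr i => v ∈ closedNbhd G (x i)) →
      (match q with
       | Sum.inl j => v ∈ Set.range (c j)
       | Sum.inr i => v ∈ closedNbhd G (x i)) → p = q := by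
    intro v p q hp hq
    obtain ⟨r, _, hr⟩ := hpart v
    rw [hr p hp, hr q hq]
  have P1 : ∀ (v : V) (j j' : Fin s), v ∈ Set.range (c j) → v ∈ Set.range (c j') → j = j' := by
    intro v j j' h h'
    have := huniq v (Sum.inl j) (Sum.inl j') h h'
    exact Sum.inl_injective this
  have P2 : ∀ (v : V) (j : Fin s) (i : Fin t), v ∈ Set.range (c j) →
      v ∈ closedNbhd G (x i) → False := by
    intro v j i h h'
    have := huniq v (Sum.inl j) (Sum.inr i) h h'
    simp at this
  have P3 : ∀ (v : V) (i i' : Fin t), v ∈ closedNbhd G (x i) → v ∈ closedNbhd G (x i') →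
      i = i' := by
    intro v i i' h h'
    have := huniq v (Sum.inr i) (Sum.inr i') h h'
    exact Sum.inr_injective this
  set ℬ : Set (Set V) := {B | (∃ i : Fin t, B = closedNbhd G (x i) ∩ A) ∨
    (∃ j : Fin s, (B = Set.range (c j) ∧ Set.range (c j) ∩ W = ∅) ∨
      B ∈ pieces G A (Set.range (c j)))} with hBdef
  have hxA : ∀ i, x i ∈ A := fun i => hxW i
  have hrangeA : ∀ j, Set.range (c j) ∩ W = ∅ → ∀ i, c j i ∈ A := by
    intro j hj i
    rw [hAdef, Set.mem_compl_iff]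
    intro hmem
    have hx2 : c j i ∈ Set.range (c j) ∩ W := ⟨⟨i, rfl⟩, hmem⟩
    rw [hj] at hx2
    exact hx2
  have hpieces_sub : ∀ (j : Fin s) (B : Set V), B ∈ pieces G A (Set.range (c j)) →
      B ⊆ Set.range (c j) ∩ A := by
    intro j B hB
    rcases hcyc j with h | h
    · rw [pieces_empty_of_untouched (hc j).1.1 (hc j).1.2 (hrangeA j h)] at hB
      exact absurd hB (Set.notMem_empty _)
    · exact h.2.1 B hB
  apply inSC_of_parts (G.induce A) ((fun B => (Subtype.val ⁻¹' B : Set ↥A)) '' ℬ)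
  · rintro B' ⟨B, hB, rfl⟩
    rcases hB with ⟨i, rfl⟩ | ⟨j, hj⟩
    · left
      refine ⟨⟨x i, hxA i⟩, simplicial_induce (hx i) (hxA i), ?_⟩
      rw [closedNbhd_induce_eq]
      have he : closedNbhd G (x i) ∩ A = insert (x i) (nbhd G (x i) ∩ A) :=
        Set.insert_inter_of_mem (hxA i)
      rw [he]
    · rcases hj with ⟨rfl, hunt⟩ | hp
      · right
        exact ⟨fun i => ⟨c j i, hrangeA j hunt i⟩, basic5_induce (hc j) _,
          (range_lift_eq _).symm⟩
      · left
        obtain ⟨v, hs, he⟩ := pieces_form hp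
        exact ⟨v, hs, he.symm ▸ he⟩
  · intro u
    obtain ⟨p, hp, _⟩ := hpart u.1
    cases p with
    | inl j =>
        rcases hcyc j with h | h
        · exact ⟨_, ⟨Set.range (c j), Or.inr ⟨j, Or.inl ⟨rfl, h⟩⟩, rfl⟩, hp⟩
        · obtain ⟨B, hB, hvB⟩ := h.1 u.1 ⟨hp, u.2⟩
          exact ⟨_, ⟨B, Or.inr ⟨j, Or.inr hB⟩, rfl⟩, hvB⟩
    | inr i =>
        exact ⟨_, ⟨closedNbhd G (x i) ∩ A, Or.inl ⟨i, rfl⟩, rfl⟩, ⟨hp, u.2⟩⟩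
  · rintro B1' ⟨B1, hB1, rfl⟩ B2' ⟨B2, hB2, rfl⟩ hne
    rw [Set.disjoint_left]
    rintro u hu1 hu2
    apply hne
    have hv1 : u.1 ∈ B1 := hu1
    have hv2 : u.1 ∈ B2 := hu2
    have hmain : B1 = B2 := by
      rcases hB1 with ⟨i1, rfl⟩ | ⟨j1, hj1⟩ <;> rcases hB2 with ⟨i2, rfl⟩ | ⟨j2, hj2⟩
      · rw [P3 u.1 i1 i2 hv1.1 hv2.1]
      · exfalso
        rcases hj2 with ⟨rfl, _⟩ | hp
        · exact P2 u.1 j2 i1 hv2 hv1.1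
        · exact P2 u.1 j2 i1 (hpieces_sub j2 _ hp hv2).1 hv1.1
      · exfalso
        rcases hj1 with ⟨rfl, _⟩ | hp
        · exact P2 u.1 j1 i2 hv1 hv2.1
        · exact P2 u.1 j1 i2 (hpieces_sub j1 _ hp hv1).1 hv2.1
      · have hr1 : u.1 ∈ Set.range (c j1) := by
          rcases hj1 with ⟨rfl, _⟩ | hp
          · exact hv1
          · exact (hpieces_sub j1 _ hp hv1).1
        have hr2 : u.1 ∈ Set.range (c j2) := by
          rcases hj2 with ⟨rfl, _⟩ | hp
          · exact hv2
          · exact (hpieces_sub j2 _ hp hv2).1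
        have hjj : j1 = j2 := P1 u.1 j1 j2 hr1 hr2
        subst hjj
        rcases hj1 with ⟨rfl, hunt⟩ | hp1
        · rcases hj2 with ⟨rfl, _⟩ | hp2
          · rfl
          · exfalso
            rw [pieces_empty_of_untouched (hc j1).1.1 (hc j1).1.2 (hrangeA j1 hunt)] at hp2
            exact absurd hp2 (Set.notMem_empty _)
        · rcases hj2 with ⟨rfl, hunt⟩ | hp2
          · exfalso
            rw [pieces_empty_of_untouched (hc j1).1.1 (hc j1).1.2 (hrangeA j1 hunt)] at hp1
            exact absurd hp1 (Set.notMem_empty _)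
          · rcases hcyc j1 with h | h
            · exfalso
              rw [pieces_empty_of_untouched (hc j1).1.1 (hc j1).1.2 (hrangeA j1 h)] at hp1
              exact absurd hp1 (Set.notMem_empty _)
            · by_contra hne'
              have := h.2.2 B1 hp1 B2 hp2 hne'
              exact Set.disjoint_left.1 this hv1 hv2
    rw [hmain]

end Glue
section IndepHelpers
set_option linter.unusedSectionVars false
set_option maxHeartbeats 1600000
variable {V : Type*} [Fintype V] {G : SimpleGraph V}

lemma z5picks : ∀ P : Finset (ZMod 5), (∀ i, ¬(i ∈ P ∧ i + 1 ∈ P)) →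
    ∃ k l : ZMod 5, k ∉ P ∧ l ∉ P ∧ l ≠ k ∧ l ≠ k + 1 ∧ k ≠ l + 1 := by decide

lemma zx1 : ∀ k l : ZMod 5, l = k + 4 → k = l + 1 := by decide

lemma cycle_two_picks {d : ZMod 5 → V} (hd : IsBasic5Cycle G d) :
    ∃ a b : V, a ∈ Set.range d ∧ b ∈ Set.range d ∧ a ≠ b ∧ deg G a ≤ 2 ∧ deg G b ≤ 2 ∧
      nbhd G a ⊆ Set.range d ∧ nbhd G b ⊆ Set.range d ∧ ¬ G.Adj a b := by
  obtain ⟨⟨hinj, hadj⟩, hbasic⟩ := hd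
  classical
  set P : Finset (ZMod 5) := Finset.univ.filter (fun i => 3 ≤ deg G (d i)) with hPdef
  have hPc : ∀ i, ¬(i ∈ P ∧ i + 1 ∈ P) := by
    rintro i ⟨h1, h2⟩
    exact hbasic i ⟨(Finset.mem_filter.1 h1).2, (Finset.mem_filter.1 h2).2⟩
  obtain ⟨k, l, hk, hl, hlk, hlk1, hkl1⟩ := z5picks P hPc
  have hdk : deg G (d k) ≤ 2 := by
    by_contra h
    exact hk (Finset.mem_filter.2 ⟨Finset.mem_univ _, by omega⟩)
  have hdl : deg G (d l) ≤ 2 := by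
    by_contra h
    exact hl (Finset.mem_filter.2 ⟨Finset.mem_univ _, by omega⟩)
  have nk : nbhd G (d k) = {d (k + 4), d (k + 1)} := cycle_nbhd_two hinj hadj rfl rfl hdk
  have nl : nbhd G (d l) = {d (l + 4), d (l + 1)} := cycle_nbhd_two hinj hadj rfl rfl hdl
  refine ⟨d k, d l, ⟨k, rfl⟩, ⟨l, rfl⟩, inj_ne hinj (Ne.symm hlk), hdk, hdl, ?_, ?_, ?_⟩
  · rw [nk]; rintro z (rfl | rfl)
    exacts [⟨k + 4, rfl⟩, ⟨k + 1, rfl⟩]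
  · rw [nl]; rintro z (rfl | rfl)
    exacts [⟨l + 4, rfl⟩, ⟨l + 1, rfl⟩]
  · intro hadj'
    have hm : d l ∈ nbhd G (d k) := mem_nbhd.2 hadj'
    rw [nk] at hm
    rcases hm with h | h
    · exact hkl1 (zx1 k l (hinj h))
    · exact hlk1 (hinj h)

lemma cycle0_pick {w : V} {d : ZMod 5 → V} (hd : IsBasic5Cycle G d) (hw0 : d 0 = w) :
    ∃ a : V, a ∈ Set.range d ∧ deg G a ≤ 2 ∧ nbhd G a ⊆ Set.range d ∧
      a ∈ (closedNbhd G w)ᶜ := by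
  obtain ⟨⟨hinj, hadj⟩, hbasic⟩ := hd
  have basic23 : ¬(3 ≤ deg G (d 2) ∧ 3 ≤ deg G (d 3)) := by
    have hb := hbasic 2
    rwa [show ((2 : ZMod 5) + 1) = 3 by decide] at hb
  have hdi : deg G (d 2) ≤ 2 ∨ deg G (d 3) ≤ 2 := by
    by_contra hcon
    push_neg at hcon
    exact basic23 ⟨by omega, by omega⟩
  rcases hdi with h | h
  · have n2 : nbhd G (d 2) = {d 1, d 3} :=
      cycle_nbhd_two hinj hadj (by decide) (by decide) h
    refine ⟨d 2, ⟨2, rfl⟩, h, ?_, mem_complNbhd.2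
      ⟨hw0 ▸ inj_ne hinj (by decide : (2 : ZMod 5) ≠ 0),
       not_adj_of_nbhd_pair n2 (hw0 ▸ inj_ne hinj (by decide : (0 : ZMod 5) ≠ 1))
         (hw0 ▸ inj_ne hinj (by decide : (0 : ZMod 5) ≠ 3))⟩⟩
    rw [n2]; rintro z (rfl | rfl)
    exacts [⟨1, rfl⟩, ⟨3, rfl⟩]
  · have n3 : nbhd G (d 3) = {d 2, d 4} :=
      cycle_nbhd_two hinj hadj (by decide) (by decide) h
    refine ⟨d 3, ⟨3, rfl⟩, h, ?_, mem_complNbhd.2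
      ⟨hw0 ▸ inj_ne hinj (by decide : (3 : ZMod 5) ≠ 0),
       not_adj_of_nbhd_pair n3 (hw0 ▸ inj_ne hinj (by decide : (0 : ZMod 5) ≠ 2))
         (hw0 ▸ inj_ne hinj (by decide : (0 : ZMod 5) ≠ 4))⟩⟩
    rw [n3]; rintro z (rfl | rfl)
    exacts [⟨2, rfl⟩, ⟨4, rfl⟩]

lemma cap_cycle0 {w : V} {d : ZMod 5 → V} (hd : IsBasic5Cycle G d) (hw0 : d 0 = w)
    {S : Set V} (hS : IsIndep G S) (hSA : S ⊆ (closedNbhd G w)ᶜ) :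
    (S ∩ Set.range d).ncard ≤ 1 := by
  obtain ⟨⟨hinj, hadj⟩, hbasic⟩ := hd
  have a01 : G.Adj (d 0) (d 1) := by
    have hx := hadj 0
    rwa [show ((0 : ZMod 5) + 1) = 1 by decide] at hx
  have a23 : G.Adj (d 2) (d 3) := by
    have hx := hadj 2
    rwa [show ((2 : ZMod 5) + 1) = 3 by decide] at hx
  have a40 : G.Adj (d 4) (d 0) := by
    have hx := hadj 4
    rwa [show ((4 : ZMod 5) + 1) = 0 by decide] at hx
  have hsurv : ∀ k : ZMod 5, d k ∈ S → k = 2 ∨ k = 3 := by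
    intro k hk
    have hkA := hSA hk
    rcases z5cases k with rfl | rfl | rfl | rfl | rfl
    · exact absurd hkA (fun h => (mem_complNbhd.1 h).1 hw0)
    · exact absurd hkA (fun h => (mem_complNbhd.1 h).2 (hw0 ▸ a01))
    · exact Or.inl rfl
    · exact Or.inr rfl
    · exact absurd hkA (fun h => (mem_complNbhd.1 h).2 (hw0 ▸ a40.symm))
  by_contra h
  push_neg at h
  obtain ⟨a, b, ha, hb, hab⟩ := (Set.one_lt_ncard_iff (Set.toFinite _)).1 h
  obtain ⟨k, rfl⟩ := ha.2
  obtain ⟨l, rfl⟩ := hb.2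
  rcases hsurv k ha.1 with rfl | rfl <;> rcases hsurv l hb.1 with h2 | h2 <;> subst h2
  · exact hab rfl
  · exact hS _ ha.1 _ hb.1 a23
  · exact hS _ ha.1 _ hb.1 a23.symm
  · exact hab rfl

end IndepHelpers
set_option maxHeartbeats 3200000

/-- Let `G` be a connected graph in the class `SC`, with a
partition of `V(G)` into the vertex sets of basic 5-cycles `C^1, …, C^s`
(`s ≥ 1`) and the closed neighborhoods of simplicial vertices `x_1, …, x_t`,
and let `w` be a vertex of `C^1` of degree at least 3.  Then `G∖w` and
`G_w = G∖N[w]` belong to the class `SC`, `α(G∖w) = 2s + t` and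
`α(G_w) = 2s + t - 1`. -/
 
theorem stmt3 {V : Type*} [Fintype V] (G : SimpleGraph V) (hconn : G.Connected)
    (s t : ℕ) (hs : 1 ≤ s) (c : Fin s → ZMod 5 → V) (x : Fin t → V)
    (hc : ∀ j, IsBasic5Cycle G (c j))
    (hx : ∀ i, IsSimplicial G (x i))
    (hpart : ∀ v : V, ∃! p : Fin s ⊕ Fin t,
      match p with
      | Sum.inl j => v ∈ Set.range (c j)
      | Sum.inr i => v ∈ closedNbhd G (x i))
    (w : V) (hw : w ∈ Set.range (c ⟨0, by omega⟩)) (hdeg : 3 ≤ deg G w) :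
    InSC (G.induce ({w}ᶜ : Set V)) ∧
    InSC (G.induce ((closedNbhd G w)ᶜ)) ∧
    _root_.indepNum (G.induce ({w}ᶜ : Set V)) = 2 * s + t ∧
    _root_.indepNum (G.induce ((closedNbhd G w)ᶜ)) = 2 * s + t - 1 := by
  classical
  set j0 : Fin s := ⟨0, by omega⟩ with hj0def
  have hwr : w ∈ Set.range (c j0) := hw
  obtain ⟨i0, hwi0⟩ := hwr
  have hwr : w ∈ Set.range (c j0) := ⟨i0, hwi0⟩
  -- partition consequences
  have huniq : ∀ (v : V) (p q : Fin s ⊕ Fin t),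
      (match p with
       | Sum.inl j => v ∈ Set.range (c j)
       | Sum.inr i => v ∈ closedNbhd G (x i)) →
      (match q with
       | Sum.inl j => v ∈ Set.range (c j)
       | Sum.inr i => v ∈ closedNbhd G (x i)) → p = q := by
    intro v p q hp hq
    obtain ⟨r, _, hr⟩ := hpart v
    rw [hr p hp, hr q hq]
  have P1 : ∀ (v : V) (j j' : Fin s), v ∈ Set.range (c j) → v ∈ Set.range (c j') → j = j' := by
    intro v j j' h h'
    exact Sum.inl_injective (huniq v (Sum.inl j) (Sum.inl j') h h')
  have P2 : ∀ (v : V) (j : Fin s) (i : Fin t), v ∈ Set.range (c j) →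
      v ∈ closedNbhd G (x i) → False := by
    intro v j i h h'
    have := huniq v (Sum.inl j) (Sum.inr i) h h'
    simp at this
  have P3 : ∀ (v : V) (i i' : Fin t), v ∈ closedNbhd G (x i) → v ∈ closedNbhd G (x i') →
      i = i' := by
    intro v i i' h h'
    exact Sum.inr_injective (huniq v (Sum.inr i) (Sum.inr i') h h')
  have hwj : ∀ j : Fin s, j ≠ j0 → w ∉ Set.range (c j) :=
    fun j hj hmem => hj (P1 w j j0 hmem hwr)
  have hxnW : ∀ i, x i ∉ closedNbhd G w := by
    intro i hmem
    rcases mem_closedNbhd.1 hmem with h | h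
    · exact P2 w j0 i hwr (mem_closedNbhd.2 (Or.inl h.symm))
    · exact P2 w j0 i hwr (mem_closedNbhd.2 (Or.inr h.symm))
  have hxnw : ∀ i, x i ∉ ({w} : Set V) :=
    fun i h => P2 w j0 i hwr (mem_closedNbhd.2 (Or.inl (Set.mem_singleton_iff.1 h).symm))
  -- the rotated first cycle
  set d : ZMod 5 → V := fun i => c j0 (i + i0) with hddef
  have hd : IsBasic5Cycle G d := basic5_rotate (hc j0) i0
  have hrd : Set.range d = Set.range (c j0) := range_rotate i0
  have hd0 : d 0 = w := by
    show c j0 (0 + i0) = w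
    rw [zero_add]
    exact hwi0
  have hdeg0 : 3 ≤ deg G (d 0) := by rw [hd0]; exact hdeg
  -- SC membership
  have hSC1 : InSC (G.induce ({w}ᶜ : Set V)) := by
    apply inSC_glue c x hc hx hpart {w} hxnw
    intro j
    by_cases hj : j = j0
    · subst hj
      right
      have hh := cycleC (G := G) hd hd0 hdeg0
      rwa [hrd] at hh
    · left
      rw [Set.eq_empty_iff_forall_notMem]
      rintro v ⟨hv1, hv2⟩
      rw [Set.mem_singleton_iff] at hv2
      subst hv2
      exact hwj j hj hv1
  have hSC2 : InSC (G.induce ((closedNbhd G w)ᶜ)) := by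
    apply inSC_glue c x hc hx hpart (closedNbhd G w) hxnW
    intro j
    by_cases hj : j = j0
    · subst hj
      right
      have hh := cycleB (G := G) hd hd0 hdeg0
      rwa [hrd] at hh
    · by_cases hE : ∃ v, v ∈ Set.range (c j) ∩ closedNbhd G w
      · right
        obtain ⟨v, ⟨⟨k, rfl⟩, hvW⟩⟩ := hE
        have hadjw : G.Adj w (c j k) := by
          rcases mem_closedNbhd.1 hvW with h | h
          · exact absurd (h ▸ (⟨k, rfl⟩ : c j k ∈ Set.range (c j))) (hwj j hj)
          · exact h
        set d2 : ZMod 5 → V := fun i => c j (i + k) with hd2def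
        have hd2 : IsBasic5Cycle G d2 := basic5_rotate (hc j) k
        have hr2 : Set.range d2 = Set.range (c j) := range_rotate k
        have h20 : G.Adj w (d2 0) := by
          show G.Adj w (c j (0 + k))
          rw [zero_add]
          exact hadjw
        have hw2 : w ∉ Set.range d2 := by rw [hr2]; exact hwj j hj
        have hh := cycleA (G := G) hd2 hw2 h20
        rwa [hr2] at hh
      · left
        rw [Set.eq_empty_iff_forall_notMem]
        intro v hv
        exact hE ⟨v, hv⟩
  -- upper bounds
  have hub1 : ∀ S : Set V, IsIndep G S → S.ncard ≤ 2 * s + t := by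
    intro S hS
    have hb := ncard_le_sum
      (fun p : Fin s ⊕ Fin t => match p with
        | Sum.inl j => Set.range (c j)
        | Sum.inr i => closedNbhd G (x i)) S
      (fun u _ => by
        obtain ⟨p, hp, _⟩ := hpart u
        refine ⟨p, ?_⟩
        cases p <;> exact hp)
      (fun p => match p with
        | Sum.inl _ => 2
        | Sum.inr _ => 1)
      (fun p => by
        cases p with
        | inl j => exact indep_cap_cycle (hc j).1.1 (hc j).1.2 hS
        | inr i => exact indep_cap_simplex (hx i) hS)
    have hsum : (∑ p : Fin s ⊕ Fin t, (match p with
        | Sum.inl _ => 2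
        | Sum.inr _ => (1 : ℕ))) = 2 * s + t := by
      rw [Fintype.sum_sum_type]
      simp [Finset.sum_const, Finset.card_univ, mul_comm]
    rw [hsum] at hb
    exact hb
  have hub2 : ∀ S : Set V, IsIndep G S → S ⊆ (closedNbhd G w)ᶜ →
      S.ncard ≤ 2 * s + t - 1 := by
    intro S hS hSA
    have hb := ncard_le_sum
      (fun p : Fin s ⊕ Fin t => match p with
        | Sum.inl j => Set.range (c j)
        | Sum.inr i => closedNbhd G (x i)) S
      (fun u _ => by
        obtain ⟨p, hp, _⟩ := hpart u
        refine ⟨p, ?_⟩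
        cases p <;> exact hp)
      (fun p => match p with
        | Sum.inl j => if j = j0 then 1 else 2
        | Sum.inr _ => 1)
      (fun p => by
        cases p with
        | inl j =>
            by_cases hj : j = j0
            · subst hj
              simp only [if_pos rfl]
              show (S ∩ Set.range (c j0)).ncard ≤ 1
              rw [← hrd]
              exact cap_cycle0 hd hd0 hS hSA
            · simp only [if_neg hj]
              exact indep_cap_cycle (hc j).1.1 (hc j).1.2 hS
        | inr i => exact indep_cap_simplex (hx i) hS)
    have hsum : (∑ p : Fin s ⊕ Fin t, (match p with
        | Sum.inl j => if j = j0 then 1 else 2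
        | Sum.inr _ => (1 : ℕ))) = (2 * s - 1) + t := by
      rw [Fintype.sum_sum_type]
      have h1 : (∑ j : Fin s, (if j = j0 then 1 else 2)) = 2 * s - 1 := by
        rw [← Finset.add_sum_erase _ _ (Finset.mem_univ j0), if_pos rfl]
        have h2 : (∑ j ∈ Finset.univ.erase j0, (if j = j0 then 1 else 2)) =
            ∑ _j ∈ Finset.univ.erase j0, 2 :=
          Finset.sum_congr rfl (fun y hy => if_neg (Finset.ne_of_mem_erase hy))
        rw [h2, Finset.sum_const, Finset.card_erase_of_mem (Finset.mem_univ _),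
          Finset.card_univ, Fintype.card_fin, smul_eq_mul]
        omega
      rw [h1]
      simp
    rw [hsum] at hb
    omega
  -- picks for lower bounds
  choose pa pb har hbr hpne hdega hdegb hna hnb hnadj using fun j => cycle_two_picks (hc j)
  obtain ⟨p0, hp0r, hp0deg, hp0n, hp0A⟩ := cycle0_pick hd hd0
  have hp0rc : p0 ∈ Set.range (c j0) := hrd ▸ hp0r
  have hp0nc : nbhd G p0 ⊆ Set.range (c j0) := by rw [← hrd]; exact hp0n
  set pk : Fin s → Fin 2 → V := fun j e => if e = 0 then pa j else pb j with hpkdef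
  have fin2 : ∀ e : Fin 2, e = 0 ∨ e = 1 := by decide
  have hpk0 : ∀ j, pk j 0 = pa j := fun j => by rw [hpkdef]; simp
  have hpk1 : ∀ j, pk j 1 = pb j := fun j => by
    rw [hpkdef]
    simp [show (1 : Fin 2) ≠ 0 by decide]
  have hpkr : ∀ j e, pk j e ∈ Set.range (c j) := by
    intro j e
    rcases fin2 e with rfl | rfl
    · rw [hpk0]; exact har j
    · rw [hpk1]; exact hbr j
  have hpkn : ∀ j e, nbhd G (pk j e) ⊆ Set.range (c j) := by
    intro j e
    rcases fin2 e with rfl | rfl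
    · rw [hpk0]; exact hna j
    · rw [hpk1]; exact hnb j
  have hpkdeg : ∀ j e, deg G (pk j e) ≤ 2 := by
    intro j e
    rcases fin2 e with rfl | rfl
    · rw [hpk0]; exact hdega j
    · rw [hpk1]; exact hdegb j
  -- pairwise helper facts
  have hxpk : ∀ (i : Fin t) (j : Fin s) (e : Fin 2), x i ≠ pk j e ∧
      ¬ G.Adj (x i) (pk j e) ∧ ¬ G.Adj (pk j e) (x i) := by
    intro i j e
    refine ⟨?_, ?_, ?_⟩
    · intro h
      exact P2 (x i) j i (h ▸ hpkr j e) (mem_closedNbhd.2 (Or.inl rfl))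
    · intro h
      exact P2 (pk j e) j i (hpkr j e) (mem_closedNbhd.2 (Or.inr h))
    · intro h
      exact P2 (pk j e) j i (hpkr j e) (mem_closedNbhd.2 (Or.inr h.symm))
  have hpkpk : ∀ (j : Fin s) (e : Fin 2) (j' : Fin s) (e' : Fin 2), j ≠ j' →
      pk j e ≠ pk j' e' ∧ ¬ G.Adj (pk j e) (pk j' e') := by
    intro j e j' e' hjj
    constructor
    · intro h
      exact hjj (P1 (pk j e) j j' (hpkr j e) (h ▸ hpkr j' e'))
    · intro h
      exact hjj (P1 (pk j' e') j j' (hpkn j e (mem_nbhd.2 h)) (hpkr j' e'))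
  have hpkee : ∀ (j : Fin s) (e e' : Fin 2), e ≠ e' →
      pk j e ≠ pk j e' ∧ ¬ G.Adj (pk j e) (pk j e') := by
    intro j e e' hee
    rcases fin2 e with rfl | rfl <;> rcases fin2 e' with h2 | h2 <;> subst h2
    · exact absurd rfl hee
    · rw [hpk0, hpk1]; exact ⟨hpne j, hnadj j⟩
    · rw [hpk1, hpk0]
      exact ⟨(hpne j).symm, fun h => hnadj j h.symm⟩
    · exact absurd rfl hee
  have hxx : ∀ (i i' : Fin t), i ≠ i' → x i ≠ x i' ∧ ¬ G.Adj (x i) (x i') := by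
    intro i i' hii
    constructor
    · intro h
      exact hii (P3 (x i) i i' (mem_closedNbhd.2 (Or.inl rfl)) (mem_closedNbhd.2 (Or.inl h)))
    · intro h
      exact hii (P3 (x i') i i' (mem_closedNbhd.2 (Or.inr h)) (mem_closedNbhd.2 (Or.inl rfl)))
  have hp0x : ∀ i : Fin t, p0 ≠ x i ∧ ¬ G.Adj p0 (x i) ∧ ¬ G.Adj (x i) p0 := by
    intro i
    refine ⟨?_, ?_, ?_⟩
    · intro h
      exact P2 p0 j0 i hp0rc (mem_closedNbhd.2 (Or.inl h))
    · intro h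
      exact P2 (x i) j0 i (hp0nc (mem_nbhd.2 h)) (mem_closedNbhd.2 (Or.inl rfl))
    · intro h
      exact P2 p0 j0 i hp0rc (mem_closedNbhd.2 (Or.inr h))
  have hp0pk : ∀ (j : Fin s) (e : Fin 2), j ≠ j0 → p0 ≠ pk j e ∧
      ¬ G.Adj p0 (pk j e) ∧ ¬ G.Adj (pk j e) p0 := by
    intro j e hj
    refine ⟨?_, ?_, ?_⟩
    · intro h
      exact hj (P1 p0 j j0 (by rw [h]; exact hpkr j e) hp0rc)
    · intro h
      exact hj (P1 (pk j e) j j0 (hpkr j e) (hp0nc (mem_nbhd.2 h)))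
    · intro h
      exact hj (P1 p0 j j0 (hpkn j e (mem_nbhd.2 h)) hp0rc)
  -- lower bound for G \ w
  have key1 : _root_.indepNum (G.induce ({w}ᶜ : Set V)) = 2 * s + t := by
    set f1 : Fin t ⊕ Fin s × Fin 2 → V := fun p => match p with
      | Sum.inl i => x i
      | Sum.inr (j, e) => pk j e with hf1def
    have claim1 : ∀ p q : Fin t ⊕ Fin s × Fin 2, p ≠ q →
        f1 p ≠ f1 q ∧ ¬ G.Adj (f1 p) (f1 q) := by
      rintro (i | ⟨j, e⟩) (i' | ⟨j', e'⟩) hpq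
      · exact hxx i i' (fun h => hpq (by rw [h]))
      · exact ⟨(hxpk i j' e').1, (hxpk i j' e').2.1⟩
      · exact ⟨fun h => (hxpk i' j e).1 h.symm, (hxpk i' j e).2.2⟩
      · by_cases hjj : j = j'
        · subst hjj
          exact hpkee j e e' (fun h => hpq (by rw [h]))
        · exact hpkpk j e j' e' hjj
    have indep1 : IsIndep G (Set.range f1) := by
      rintro u ⟨p, rfl⟩ z ⟨q, rfl⟩ hadj
      by_cases hpq : p = q
      · subst hpq
        exact G.loopless.irrefl _ hadj
      · exact (claim1 p q hpq).2 hadj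
    have inj1 : Function.Injective f1 := by
      intro p q h
      by_contra hpq
      exact (claim1 p q hpq).1 h
    have sub1 : Set.range f1 ⊆ ({w}ᶜ : Set V) := by
      rintro u ⟨p, rfl⟩
      rcases p with i | ⟨j, e⟩
      · exact hxnw i
      · rw [Set.mem_compl_iff, Set.mem_singleton_iff]
        intro h
        have h' : pk j e = w := h
        have h2 := hpkdeg j e
        rw [h'] at h2
        omega
    have ncard1 : (Set.range f1).ncard = t + s * 2 := by
      rw [← Set.image_univ, Set.ncard_image_of_injective _ inj1, Set.ncard_univ]
      simp [Nat.card_eq_fintype_card]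
    apply indepNum_eq_of_bounds
    · obtain ⟨hind, hcard⟩ := indep_preimage sub1 indep1
      exact ⟨_, hind, by rw [hcard, ncard1]; omega⟩
    · intro S' hS'
      obtain ⟨hind, hcard⟩ := indep_val_image hS'
      rw [← hcard]
      exact hub1 _ hind
  -- lower bound for G_w
  have key2 : _root_.indepNum (G.induce ((closedNbhd G w)ᶜ)) = 2 * s + t - 1 := by
    set f2 : Fin t ⊕ (({j : Fin s // j ≠ j0} × Fin 2) ⊕ Unit) → V := fun p => match p with
      | Sum.inl i => x i
      | Sum.inr (Sum.inl (j, e)) => pk j.1 e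
      | Sum.inr (Sum.inr _) => p0 with hf2def
    have claim2 : ∀ p q : Fin t ⊕ (({j : Fin s // j ≠ j0} × Fin 2) ⊕ Unit), p ≠ q →
        f2 p ≠ f2 q ∧ ¬ G.Adj (f2 p) (f2 q) := by
      rintro (i | ⟨⟨j, e⟩ | u⟩) (i' | ⟨⟨j', e'⟩ | u'⟩) hpq
      · exact hxx i i' (fun h => hpq (by rw [h]))
      · exact ⟨(hxpk i j'.1 e').1, (hxpk i j'.1 e').2.1⟩
      · exact ⟨fun h => (hp0x i).1 h.symm, (hp0x i).2.2⟩
      · exact ⟨fun h => (hxpk i' j.1 e).1 h.symm, (hxpk i' j.1 e).2.2⟩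
      · by_cases hjj : j.1 = j'.1
        · have hj : j = j' := Subtype.ext hjj
          subst hj
          have hee : e ≠ e' := by
            intro h
            exact hpq (by rw [h])
          exact hpkee j.1 e e' hee
        · exact hpkpk j.1 e j'.1 e' hjj
      · exact ⟨fun h => (hp0pk j.1 e j.2).1 h.symm, (hp0pk j.1 e j.2).2.2⟩
      · exact ⟨(hp0x i').1, (hp0x i').2.1⟩
      · exact ⟨(hp0pk j'.1 e' j'.2).1, (hp0pk j'.1 e' j'.2).2.1⟩
      · exact absurd rfl hpq
    have indep2 : IsIndep G (Set.range f2) := by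
      rintro u ⟨p, rfl⟩ z ⟨q, rfl⟩ hadj
      by_cases hpq : p = q
      · subst hpq
        exact G.loopless.irrefl _ hadj
      · exact (claim2 p q hpq).2 hadj
    have inj2 : Function.Injective f2 := by
      intro p q h
      by_contra hpq
      exact (claim2 p q hpq).1 h
    have sub2 : Set.range f2 ⊆ ((closedNbhd G w)ᶜ : Set V) := by
      rintro u ⟨p, rfl⟩
      rcases p with i | ⟨⟨j, e⟩ | u⟩
      · exact hxnW i
      · apply mem_complNbhd.2
        constructor
        · intro h
          have h' : pk j.1 e = w := h
          exact hwj j.1 j.2 (by rw [← h']; exact hpkr j.1 e)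
        · intro h
          have h' : G.Adj w (pk j.1 e) := h
          exact hwj j.1 j.2 (hpkn j.1 e (mem_nbhd.2 h'.symm))
      · exact hp0A
    have hcs : Fintype.card {j : Fin s // j ≠ j0} = s - 1 := by
      rw [Fintype.card_subtype]
      rw [Finset.filter_ne']
      rw [Finset.card_erase_of_mem (Finset.mem_univ _), Finset.card_univ, Fintype.card_fin]
    have ncard2 : (Set.range f2).ncard = t + ((s - 1) * 2 + 1) := by
      rw [← Set.image_univ, Set.ncard_image_of_injective _ inj2, Set.ncard_univ]
      simp [Nat.card_eq_fintype_card, hcs]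
    apply indepNum_eq_of_bounds
    · obtain ⟨hind, hcard⟩ := indep_preimage sub2 indep2
      exact ⟨_, hind, by rw [hcard, ncard2]; omega⟩
    · intro S' hS'
      obtain ⟨hind, hcard⟩ := indep_val_image hS'
      rw [← hcard]
      refine hub2 _ hind ?_
      rintro u ⟨u', _, rfl⟩
      exact u'.2
  exact ⟨hSC1, hSC2, key1, key2⟩
end

section
/- Let G be a connected finite simple graph of girth at least 6 with more than one vertex. Then G is well-covered and vertex decomposable if and only if the pendant edges of G form a perfect matching of G. -/
open SimpleGraph

variable {V : Type*} {W : Type*}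

/-! ### Auxiliary machinery for stmt8 -/

section Stmt8Aux

variable {G : SimpleGraph V}

lemma no_C3 (hg : 6 ≤ G.egirth) {a b c : V}
    (hab : G.Adj a b) (hbc : G.Adj b c) (hca : G.Adj c a) : False := by
  let w : G.Walk a a := Walk.cons hab (Walk.cons hbc (Walk.cons hca Walk.nil))
  have hc : w.IsCycle := by
    show (Walk.cons hab (Walk.cons hbc (Walk.cons hca Walk.nil))).IsCycle
    rw [Walk.isCycle_def, Walk.isTrail_def]
    refine ⟨?_, ?_, ?_⟩
    · simp [Sym2.eq, Sym2.rel_iff', Prod.ext_iff, hab.ne, hbc.ne, hca.ne, hab.ne', hbc.ne', hca.ne']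
    · simp
    · simp [hbc.ne, hca.ne, hca.ne', hab.ne']
  have h6 := (le_egirth.mp hg) a w hc
  have hl : w.length = 3 := rfl
  rw [hl] at h6
  norm_num at h6

lemma no_C4 (hg : 6 ≤ G.egirth) {a b c d : V}
    (hab : G.Adj a b) (hbc : G.Adj b c) (hcd : G.Adj c d) (hda : G.Adj d a)
    (hac : a ≠ c) (hbd : b ≠ d) : False := by
  let w : G.Walk a a := Walk.cons hab (Walk.cons hbc (Walk.cons hcd (Walk.cons hda Walk.nil)))
  have hc : w.IsCycle := by
    show (Walk.cons hab (Walk.cons hbc (Walk.cons hcd (Walk.cons hda Walk.nil)))).IsCycle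
    rw [Walk.isCycle_def, Walk.isTrail_def]
    refine ⟨?_, ?_, ?_⟩
    · simp [Sym2.eq, Sym2.rel_iff', Prod.ext_iff, hab.ne, hbc.ne, hcd.ne, hda.ne,
        hab.ne', hbc.ne', hcd.ne', hda.ne', hac, hbd, hac.symm, hbd.symm]
    · simp
    · simp [hbc.ne, hcd.ne, hda.ne, hab.ne', hbd, hac.symm, hda.ne', hcd.ne']
  have h6 := (le_egirth.mp hg) a w hc
  have hl : w.length = 4 := rfl
  rw [hl] at h6
  norm_num at h6

lemma no_C5 (hg : 6 ≤ G.egirth) {a b c d e : V}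
    (hab : G.Adj a b) (hbc : G.Adj b c) (hcd : G.Adj c d) (hde : G.Adj d e) (hea : G.Adj e a)
    (hac : a ≠ c) (had : a ≠ d) (hbd : b ≠ d) (hbe : b ≠ e) (hce : c ≠ e) : False := by
  let w : G.Walk a a :=
    Walk.cons hab (Walk.cons hbc (Walk.cons hcd (Walk.cons hde (Walk.cons hea Walk.nil))))
  have hc : w.IsCycle := by
    show (Walk.cons hab (Walk.cons hbc (Walk.cons hcd (Walk.cons hde
      (Walk.cons hea Walk.nil))))).IsCycle
    rw [Walk.isCycle_def, Walk.isTrail_def]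
    refine ⟨?_, ?_, ?_⟩
    · simp [Sym2.eq, Sym2.rel_iff', Prod.ext_iff, hab.ne, hbc.ne, hcd.ne, hde.ne, hea.ne,
        hab.ne', hbc.ne', hcd.ne', hde.ne', hea.ne', hac, had, hbd, hbe, hce,
        hac.symm, had.symm, hbd.symm, hbe.symm, hce.symm]
    · simp
    · simp [hbc.ne, hcd.ne, hde.ne, hea.ne, hab.ne', hbd, hbe, hce, hac.symm, had.symm,
        hde.ne', hea.ne', hcd.ne']
  have h6 := (le_egirth.mp hg) a w hc
  have hl : w.length = 5 := rfl
  rw [hl] at h6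
  norm_num at h6

/-- `l ∈ A` is a leaf within `A` whose unique `A`-neighbour is `w`. -/
def LeafOn (G : SimpleGraph V) (A : Set V) (l w : V) : Prop :=
  l ∈ A ∧ w ∈ A ∧ G.Adj l w ∧ ∀ y ∈ A, G.Adj l y → y = w

/-- Every non-isolated vertex of `A` is a leaf or has a leaf neighbour, within `A`. -/
def GoodOn (G : SimpleGraph V) (A : Set V) : Prop :=
  ∀ x ∈ A, (∃ y ∈ A, G.Adj x y) → (∃ w, LeafOn G A x w) ∨ (∃ l, LeafOn G A l x)

/-- Well-covered within `A`. -/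
def WCOn (G : SimpleGraph V) (A : Set V) : Prop :=
  ∀ S T : Set V, IsMaxIndepOn G A S → IsMaxIndepOn G A T → S.ncard = T.ncard

lemma mem_link_iff {A : Set V} {v x : V} :
    x ∈ A \ closedNbhd G v ↔ x ∈ A ∧ x ≠ v ∧ ¬ G.Adj v x := by
  simp only [closedNbhd, Set.mem_diff, Set.mem_insert_iff, Set.mem_setOf_eq]
  tauto

lemma exists_max_ext [Finite V] {A S : Set V}
    (hS : IsIndepOn G A S) : ∃ T, S ⊆ T ∧ IsMaxIndepOn G A T := by
  obtain ⟨T, hT, hmax⟩ := Set.Finite.exists_maximalFor (id : Set V → Set V)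
    {T | IsIndepOn G A T ∧ S ⊆ T} (Set.toFinite _) ⟨S, hS, subset_rfl⟩
  exact ⟨T, hT.2, hT.1, fun T' hT' hsub =>
    le_antisymm hsub (hmax ⟨hT', hT.2.trans hsub⟩ hsub)⟩

lemma ncard_le_of_wc [Finite V] {A S M : Set V}
    (hwc : WCOn G A) (hM : IsMaxIndepOn G A M) (hS : IsIndepOn G A S) :
    S.ncard ≤ M.ncard := by
  obtain ⟨T, hST, hT⟩ := exists_max_ext hS
  calc S.ncard ≤ T.ncard := Set.ncard_le_ncard hST (Set.toFinite _)
    _ = M.ncard := hwc T M hT hM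

lemma claim1 [Finite V] {A : Set V} (hwc : WCOn G A)
    {u₁ u₂ x : V} (h1 : LeafOn G A u₁ x) (h2 : LeafOn G A u₂ x) : u₁ = u₂ := by
  by_contra h12
  obtain ⟨hu1A, hxA, hadj1, huniq1⟩ := h1
  obtain ⟨hu2A, _, hadj2, huniq2⟩ := h2
  obtain ⟨M, hxM, hM⟩ := exists_max_ext (S := {x}) (A := A)
    ⟨by simpa using hxA, by simp [IsIndep]⟩
  have hxM' : x ∈ M := hxM rfl
  have hu1M : u₁ ∉ M := fun h => hM.1.2 u₁ h x hxM' hadj1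
  have hu2M : u₂ ∉ M := fun h => hM.1.2 u₂ h x hxM' hadj2
  set M' : Set V := insert u₁ (insert u₂ (M \ {x})) with hM'
  have hu1x : u₁ ≠ x := hadj1.ne
  have hu2x : u₂ ≠ x := hadj2.ne
  have hind : IsIndepOn G A M' := by
    constructor
    · intro y hy
      rcases hy with rfl | rfl | hy
      · exact hu1A
      · exact hu2A
      · exact hM.1.1 hy.1
    · intro a ha b hb hadj
      rcases ha with rfl | rfl | ha <;> rcases hb with rfl | rfl | hb
      · exact G.irrefl hadj
      · exact hu2x (huniq1 b hu2A hadj)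
      · exact hb.2 (huniq1 b (hM.1.1 hb.1) hadj)
      · exact hu1x (huniq2 b hu1A hadj)
      · exact G.irrefl hadj
      · exact hb.2 (huniq2 b (hM.1.1 hb.1) hadj)
      · exact ha.2 (huniq1 a (hM.1.1 ha.1) hadj.symm)
      · exact ha.2 (huniq2 a (hM.1.1 ha.1) hadj.symm)
      · exact hM.1.2 a ha.1 b hb.1 hadj
  have hfin : (M \ {x}).Finite := Set.toFinite _
  have hxcard : (M \ {x}).ncard = M.ncard - 1 := by
    rw [Set.ncard_diff_singleton_of_mem hxM']
  have h2c : (insert u₂ (M \ {x})).ncard = M.ncard := by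
    rw [Set.ncard_insert_of_notMem (by simp [hu2M]) hfin, hxcard]
    have : 1 ≤ M.ncard := Set.ncard_pos (Set.toFinite _) |>.2 ⟨x, hxM'⟩
    omega
  have h1c : M'.ncard = M.ncard + 1 := by
    rw [hM', Set.ncard_insert_of_notMem (by simp [hu1M, h12]) (Set.toFinite _), h2c]
  have := ncard_le_of_wc hwc hM hind
  omega

end Stmt8Aux
section Stmt8Aux2

variable {G : SimpleGraph V}

lemma shed_support [Finite V] (hg : 6 ≤ G.egirth) {A : Set V} {v : V} (hv : v ∈ A)
    (hshed : ∀ S : Set V, IsIndepOn G (A \ closedNbhd G v) S →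
      ¬ IsMaxIndepOn G (A \ {v}) S) :
    ∃ u, LeafOn G A u v := by
  by_contra hno
  push_neg at hno
  have hstep : ∀ u, u ∈ A → G.Adj v u → ∃ y ∈ A, G.Adj u y ∧ y ≠ v := by
    intro u huA hadj
    by_contra hy
    push_neg at hy
    exact hno u ⟨huA, hv, hadj.symm, hy⟩
  classical
  have hz : ∀ u, ∃ y, (u ∈ A ∧ G.Adj v u) → y ∈ A ∧ G.Adj u y ∧ y ≠ v := by
    intro u
    by_cases h : u ∈ A ∧ G.Adj v u
    · obtain ⟨y, hy1, hy2, hy3⟩ := hstep u h.1 h.2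
      exact ⟨y, fun _ => ⟨hy1, hy2, hy3⟩⟩
    · exact ⟨v, fun h' => absurd h' h⟩
  choose z hzp using hz
  have hzC : ∀ u, u ∈ A → G.Adj v u → z u ∈ A \ closedNbhd G v := by
    intro u huA hadj
    obtain ⟨h1, h2, h3⟩ := hzp u ⟨huA, hadj⟩
    rw [mem_link_iff]
    exact ⟨h1, h3, fun hvz => no_C3 hg hadj h2 hvz.symm⟩
  set Z : Set V := {w | ∃ u, (u ∈ A ∧ G.Adj v u) ∧ w = z u} with hZ
  have hZC : Z ⊆ A \ closedNbhd G v := by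
    rintro w ⟨u, ⟨huA, hadj⟩, rfl⟩; exact hzC u huA hadj
  have hZind : IsIndep G Z := by
    rintro w1 ⟨u1, ⟨hu1A, hadj1⟩, rfl⟩ w2 ⟨u2, ⟨hu2A, hadj2⟩, rfl⟩ hadj
    obtain ⟨hy1A, hy1adj, hy1v⟩ := hzp u1 ⟨hu1A, hadj1⟩
    obtain ⟨hy2A, hy2adj, hy2v⟩ := hzp u2 ⟨hu2A, hadj2⟩
    by_cases h12 : u1 = u2
    · subst h12; exact G.irrefl hadj
    · have hu1u2 : ¬ G.Adj u1 u2 := fun h => no_C3 hg hadj1 h hadj2.symm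
      have h1 : u1 ≠ z u2 := fun h => hu1u2 (h ▸ hy2adj.symm)
      have h2 : z u1 ≠ u2 := fun h => hu1u2 (h ▸ hy1adj)
      have hvz1 : v ≠ z u1 := fun h => hy1v h.symm
      have hvz2 : v ≠ z u2 := fun h => hy2v h.symm
      exact no_C5 hg hadj1 hy1adj hadj hy2adj.symm hadj2.symm hvz1 hvz2 h1 h12 h2
  obtain ⟨M, hZM, hM⟩ := exists_max_ext (A := A \ closedNbhd G v) (S := Z) ⟨hZC, hZind⟩
  refine hshed M hM.1 ⟨⟨?_, hM.1.2⟩, ?_⟩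
  · exact hM.1.1.trans (Set.diff_subset_diff_right (by simp [closedNbhd]))
  · intro T hT hMT
    refine Set.Subset.antisymm hMT (fun t htT => ?_)
    by_contra htM
    have htA : t ∈ A := (hT.1 htT).1
    have htv : t ≠ v := (hT.1 htT).2
    by_cases htC : t ∈ A \ closedNbhd G v
    · have hind : IsIndepOn G (A \ closedNbhd G v) (insert t M) := by
        constructor
        · intro a ha
          rcases ha with rfl | ha
          · exact htC
          · exact hM.1.1 ha
        · intro a ha b hb hadj
          have haT : a ∈ T := by
            rcases ha with rfl | ha
            · exact htT
            · exact hMT ha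
          have hbT : b ∈ T := by
            rcases hb with rfl | hb
            · exact htT
            · exact hMT hb
          exact hT.2 a haT b hbT hadj
      have heq := hM.2 (insert t M) hind (Set.subset_insert t M)
      exact htM (by rw [heq]; exact Set.mem_insert t M)
    · have hadjvt : G.Adj v t := by
        rw [mem_link_iff] at htC
        push_neg at htC
        exact htC htA htv
      exact hT.2 t htT (z t) (hMT (hZM ⟨t, ⟨htA, hadjvt⟩, rfl⟩))
        (hzp t ⟨htA, hadjvt⟩).2.1

lemma max_del_to_max [Finite V] {A : Set V} {v : V}
    (hshed : ∀ S : Set V, IsIndepOn G (A \ closedNbhd G v) S →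
      ¬ IsMaxIndepOn G (A \ {v}) S)
    {M : Set V} (hM : IsMaxIndepOn G (A \ {v}) M) : IsMaxIndepOn G A M := by
  refine ⟨⟨hM.1.1.trans Set.diff_subset, hM.1.2⟩, ?_⟩
  intro T hT hMT
  by_cases hvT : v ∈ T
  · exfalso
    refine hshed M ⟨?_, hM.1.2⟩ hM
    intro m hm
    rw [mem_link_iff]
    exact ⟨(hM.1.1 hm).1, (hM.1.1 hm).2, fun hadj => hT.2 v hvT m (hMT hm) hadj⟩
  · exact hM.2 T ⟨fun t ht => ⟨hT.1 ht, fun h => hvT (h ▸ ht)⟩, hT.2⟩ hMT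

lemma wc_del [Finite V] {A : Set V} {v : V} (hwc : WCOn G A)
    (hshed : ∀ S : Set V, IsIndepOn G (A \ closedNbhd G v) S →
      ¬ IsMaxIndepOn G (A \ {v}) S) : WCOn G (A \ {v}) :=
  fun S T hS hT => hwc S T (max_del_to_max hshed hS) (max_del_to_max hshed hT)

lemma max_link_insert {A : Set V} {v : V} (hv : v ∈ A)
    {M : Set V} (hM : IsMaxIndepOn G (A \ closedNbhd G v) M) :
    IsMaxIndepOn G A (insert v M) := by
  have hMC := hM.1.1
  refine ⟨⟨?_, ?_⟩, ?_⟩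
  · intro t ht
    rcases ht with rfl | ht
    · exact hv
    · exact (hMC ht).1
  · intro a ha b hb hadj
    rcases ha with rfl | ha <;> rcases hb with rfl | hb
    · exact G.irrefl hadj
    · exact (mem_link_iff.mp (hMC hb)).2.2 hadj
    · exact (mem_link_iff.mp (hMC ha)).2.2 hadj.symm
    · exact hM.1.2 a ha b hb hadj
  · intro T hT hMT
    refine Set.Subset.antisymm hMT ?_
    intro t ht
    by_cases htv : t = v
    · exact htv ▸ Set.mem_insert v M
    · have htC : t ∈ A \ closedNbhd G v := mem_link_iff.mpr
        ⟨hT.1 ht, htv, fun hadj => hT.2 v (hMT (Set.mem_insert v M)) t ht hadj⟩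
      by_cases htM : t ∈ M
      · exact Set.mem_insert_of_mem v htM
      · have hind : IsIndepOn G (A \ closedNbhd G v) (insert t M) := by
          constructor
          · intro a ha
            rcases ha with rfl | ha
            · exact htC
            · exact hMC ha
          · intro a ha b hb hadj
            have haT : a ∈ T := by
              rcases ha with rfl | ha
              · exact ht
              · exact hMT (Set.mem_insert_of_mem v ha)
            have hbT : b ∈ T := by
              rcases hb with rfl | hb
              · exact ht
              · exact hMT (Set.mem_insert_of_mem v hb)
            exact hT.2 a haT b hbT hadj
        have heq := hM.2 (insert t M) hind (Set.subset_insert t M)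
        exact Set.mem_insert_of_mem v (by rw [heq]; exact Set.mem_insert t M)

lemma wc_link [Finite V] {A : Set V} {v : V} (hv : v ∈ A) (hwc : WCOn G A) :
    WCOn G (A \ closedNbhd G v) := by
  intro S T hS hT
  have h1 := hwc _ _ (max_link_insert hv hS) (max_link_insert hv hT)
  have hvS : v ∉ S := fun h => (mem_link_iff.mp (hS.1.1 h)).2.1 rfl
  have hvT : v ∉ T := fun h => (mem_link_iff.mp (hT.1.1 h)).2.1 rfl
  rw [Set.ncard_insert_of_notMem hvS (Set.toFinite _),
    Set.ncard_insert_of_notMem hvT (Set.toFinite _)] at h1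
  omega

end Stmt8Aux2
section Stmt8Aux3

variable {G : SimpleGraph V}

/-- Exchange argument: in a well-covered graph, a degree-two vertex `x`
adjacent to a support vertex `v` (with leaf `u₀`) cannot have its other
neighbour `w` be a non-leaf. -/
lemma claim2 [Finite V] (hg : 6 ≤ G.egirth) {A : Set V} (hwc : WCOn G A)
    {u₀ v x w w' : V} (hleaf : LeafOn G A u₀ v)
    (hxA : x ∈ A) (hvx : G.Adj v x) (hxw : G.Adj x w) (hwv : w ≠ v)
    (hxnb : ∀ y ∈ A, G.Adj x y → y = v ∨ y = w)
    (hwA : w ∈ A) (hw'A : w' ∈ A) (hww' : G.Adj w w') (hw'x : w' ≠ x) : False := by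
  obtain ⟨hu₀A, hvA, hu₀v, huniq⟩ := hleaf
  have hvw : ¬ G.Adj v w := fun h => no_C3 hg hvx hxw h.symm
  have hw'v : w' ≠ v := fun h => hvw (h ▸ hww').symm
  have hvw' : ¬ G.Adj v w' := fun h => no_C4 hg hvx hxw hww' h.symm (Ne.symm hwv) (Ne.symm hw'x)
  -- extend {v, w'} to a maximal independent set M
  have hvw'ind : IsIndepOn G A {v, w'} := by
    constructor
    · intro a ha; rcases ha with rfl | rfl; exacts [hvA, hw'A]
    · intro a ha b hb hadj
      rcases ha with rfl | rfl <;> rcases hb with rfl | rfl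
      · exact G.irrefl hadj
      · exact hvw' hadj
      · exact hvw' hadj.symm
      · exact G.irrefl hadj
  obtain ⟨M, hsub, hM⟩ := exists_max_ext hvw'ind
  have hvM : v ∈ M := hsub (by simp)
  have hw'M : w' ∈ M := hsub (by simp)
  have hu₀M : u₀ ∉ M := fun h => hM.1.2 u₀ h v hvM hu₀v
  have hxM : x ∉ M := fun h => hM.1.2 v hvM x h hvx
  have hwM : w ∉ M := fun h => hM.1.2 w h w' hw'M hww'
  have hu₀x : u₀ ≠ x := by
    rintro rfl
    rcases huniq w hwA hxw with rfl
    exact hwv rfl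
  have hxv : x ≠ v := hvx.ne'
  -- the larger independent set
  set M' : Set V := insert u₀ (insert x (M \ {v})) with hM'
  have hind : IsIndepOn G A M' := by
    constructor
    · intro a ha
      rcases ha with rfl | rfl | ha
      · exact hu₀A
      · exact hxA
      · exact hM.1.1 ha.1
    · intro a ha b hb hadj
      rcases ha with rfl | rfl | ha <;> rcases hb with rfl | rfl | hb
      · exact G.irrefl hadj
      · exact hxv (huniq b hxA hadj)
      · exact hb.2 (huniq b (hM.1.1 hb.1) hadj)
      · exact hxv (huniq a hxA hadj.symm)
      · exact G.irrefl hadj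
      · rcases hxnb b (hM.1.1 hb.1) hadj with rfl | rfl
        · exact hb.2 rfl
        · exact hwM hb.1
      · exact ha.2 (huniq a (hM.1.1 ha.1) hadj.symm)
      · rcases hxnb a (hM.1.1 ha.1) hadj.symm with rfl | rfl
        · exact ha.2 rfl
        · exact hwM ha.1
      · exact hM.1.2 a ha.1 b hb.1 hadj
  have hc1 : (insert x (M \ {v})).ncard = M.ncard := by
    rw [Set.ncard_insert_of_notMem (by simp [hxM]) (Set.toFinite _),
      Set.ncard_diff_singleton_of_mem hvM]
    have : 1 ≤ M.ncard := Set.ncard_pos (Set.toFinite _) |>.2 ⟨v, hvM⟩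
    omega
  have hc2 : M'.ncard = M.ncard + 1 := by
    rw [hM', Set.ncard_insert_of_notMem (by simp [hu₀M, hu₀x]) (Set.toFinite _), hc1]
  have := ncard_le_of_wc hwc hM hind
  omega

end Stmt8Aux3
section Stmt8Aux4

variable {G : SimpleGraph V}

/-- Main induction: a vertex-decomposable, well-covered induced subgraph (girth ≥ 6)
has every non-isolated vertex a leaf or adjacent to a leaf. -/
lemma vd_wc_good [Finite V] (hg : 6 ≤ G.egirth) :
    ∀ A : Set V, VDOn G A → WCOn G A → GoodOn G A := by
  intro A h
  induction h with
  | no_edges A h =>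
    intro _ x hx hy
    obtain ⟨y, hyA, hadj⟩ := hy
    exact absurd hadj (h x hx y hyA)
  | step A v hv hdel hlk hshed ihdel ihlk =>
    intro hwc
    have hwcB : WCOn G (A \ {v}) := wc_del hwc hshed
    have hwcC : WCOn G (A \ closedNbhd G v) := wc_link hv hwc
    have hGB : GoodOn G (A \ {v}) := ihdel hwcB
    have hGC : GoodOn G (A \ closedNbhd G v) := ihlk hwcC
    obtain ⟨u₀, hu₀⟩ := shed_support hg hv hshed
    obtain ⟨hu₀A, _, hu₀v, hu₀uniq⟩ := hu₀
    intro x hxA hxnb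
    obtain ⟨y, hyA, hxy⟩ := hxnb
    by_cases hxv : x = v
    · subst hxv
      exact Or.inr ⟨u₀, hu₀A, hxA, hu₀v, hu₀uniq⟩
    by_cases hxu0 : x = u₀
    · subst hxu0
      exact Or.inl ⟨v, hxA, hv, hu₀v, hu₀uniq⟩
    by_cases hadjvx : G.Adj v x
    · -- x is a neighbour of v
      by_cases honly : ∀ y' ∈ A, G.Adj x y' → y' = v
      · exact Or.inl ⟨v, hxA, hv, hadjvx.symm, honly⟩
      · push_neg at honly
        obtain ⟨y₀, hy₀A, hy₀adj, hy₀v⟩ := honly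
        have hy₀nv : ¬ G.Adj v y₀ := fun h => no_C3 hg hadjvx hy₀adj h.symm
        have hy₀B : y₀ ∈ A \ {v} := ⟨hy₀A, hy₀v⟩
        have hxB : x ∈ A \ {v} := ⟨hxA, hxv⟩
        rcases hGB x hxB ⟨y₀, hy₀B, hy₀adj⟩ with ⟨w, hw⟩ | ⟨l, hl⟩
        · -- x is a leaf in B, with unique B-neighbour w
          obtain ⟨_, hwB, hxwadj, hwuniq⟩ := hw
          have hxnbA : ∀ y' ∈ A, G.Adj x y' → y' = v ∨ y' = w := by
            intro y' hy' hadj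
            by_cases h : y' = v
            · exact Or.inl h
            · exact Or.inr (hwuniq y' ⟨hy', h⟩ hadj)
          by_cases hwleaf : ∀ y' ∈ A, G.Adj w y' → y' = x
          · exact Or.inr ⟨w, hwB.1, hxA, hxwadj.symm, hwleaf⟩
          · push_neg at hwleaf
            obtain ⟨w', hw'A, hw'adj, hw'x⟩ := hwleaf
            exact absurd (claim2 hg hwc ⟨hu₀A, hv, hu₀v, hu₀uniq⟩ hxA hadjvx hxwadj
              hwB.2 hxnbA hwB.1 hw'A hw'adj hw'x) id
        · -- x has a leaf l in B
          obtain ⟨hlB, _, hlx, hluniq⟩ := hl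
          have hlnv : ¬ G.Adj l v := fun h => no_C3 hg h hadjvx hlx.symm
          refine Or.inr ⟨l, hlB.1, hxA, hlx, ?_⟩
          intro y' hy' hadj
          by_cases h : y' = v
          · exact absurd (h ▸ hadj) hlnv
          · exact hluniq y' ⟨hy', h⟩ hadj
    · -- x is not a neighbour of v (and x ≠ v)
      have hyv : y ≠ v := by
        rintro rfl
        exact hadjvx hxy.symm
      have hxB : x ∈ A \ {v} := ⟨hxA, hxv⟩
      rcases hGB x hxB ⟨y, ⟨hyA, hyv⟩, hxy⟩ with ⟨w, hw⟩ | ⟨l, hl⟩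
      · -- x leaf in B hence in A
        obtain ⟨_, hwB, hxwadj, hwuniq⟩ := hw
        refine Or.inl ⟨w, hxA, hwB.1, hxwadj, ?_⟩
        intro y' hy' hadj
        have h : y' ≠ v := by
          rintro rfl
          exact hadjvx hadj.symm
        exact hwuniq y' ⟨hy', h⟩ hadj
      · obtain ⟨hlB, _, hlx, hluniq⟩ := hl
        by_cases hlv : G.Adj l v
        · -- l has A-neighbours exactly v and x; apply the exchange lemma
          have hlnb : ∀ y' ∈ A, G.Adj l y' → y' = v ∨ y' = x := by
            intro y' hy' hadj
            by_cases h : y' = v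
            · exact Or.inl h
            · exact Or.inr (hluniq y' ⟨hy', h⟩ hadj)
          by_cases hxleaf : ∀ y' ∈ A, G.Adj x y' → y' = l
          · exact Or.inl ⟨l, hxA, hlB.1, hlx.symm, hxleaf⟩
          · push_neg at hxleaf
            obtain ⟨y', hy'A, hy'adj, hy'l⟩ := hxleaf
            exact absurd (claim2 hg hwc ⟨hu₀A, hv, hu₀v, hu₀uniq⟩ hlB.1 hlv.symm hlx
              hxv hlnb hxA hy'A hy'adj hy'l) id
        · refine Or.inr ⟨l, hlB.1, hxA, hlx, ?_⟩
          intro y' hy' hadj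
          have h : y' ≠ v := by
            rintro rfl
            exact hlv hadj
          exact hluniq y' ⟨hy', h⟩ hadj

end Stmt8Aux4
section Stmt8Aux5

variable {G : SimpleGraph V}

lemma good_del {A : Set V} {u v : V} (hG : GoodOn G A)
    (hu : LeafOn G A u v) : GoodOn G (A \ {v}) := by
  obtain ⟨huA, hvA, huv, huuniq⟩ := hu
  intro x hxB hxnb
  obtain ⟨y, hyB, hxy⟩ := hxnb
  rcases hG x hxB.1 ⟨y, hyB.1, hxy⟩ with ⟨w, hw⟩ | ⟨l, hl⟩
  · obtain ⟨_, hwA, hxw, hwuniq⟩ := hw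
    have hwy : w = y := (hwuniq y hyB.1 hxy).symm
    exact Or.inl ⟨w, hxB, hwy ▸ hyB, hxw, fun t ht h => hwuniq t ht.1 h⟩
  · obtain ⟨hlA, _, hlx, hluniq⟩ := hl
    by_cases hlv : l = v
    · subst hlv
      -- then x = u is the unique neighbour of the support v, so x is a leaf on v
      have hux : u = x := hluniq u huA huv.symm
      subst hux
      exact absurd (huuniq y hyB.1 hxy) hyB.2
    · exact Or.inr ⟨l, ⟨hlA, hlv⟩, hxB, hlx, fun t ht h => hluniq t ht.1 h⟩

lemma good_link {A : Set V} {u v : V} (hG : GoodOn G A)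
    (hu : LeafOn G A u v) : GoodOn G (A \ closedNbhd G v) := by
  obtain ⟨huA, hvA, huv, huuniq⟩ := hu
  intro x hxC hxnb
  obtain ⟨y, hyC, hxy⟩ := hxnb
  obtain ⟨hxA, hxv, hxadj⟩ := mem_link_iff.mp hxC
  rcases hG x hxA ⟨y, (mem_link_iff.mp hyC).1, hxy⟩ with ⟨w, hw⟩ | ⟨l, hl⟩
  · obtain ⟨_, hwA, hxw, hwuniq⟩ := hw
    have hwy : w = y := (hwuniq y (mem_link_iff.mp hyC).1 hxy).symm
    exact Or.inl ⟨w, hxC, hwy ▸ hyC, hxw, fun t ht h => hwuniq t (mem_link_iff.mp ht).1 h⟩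
  · obtain ⟨hlA, _, hlx, hluniq⟩ := hl
    have hlv : l ≠ v := by
      rintro rfl
      exact (mem_link_iff.mp hxC).2.2 ((hluniq u huA huv.symm) ▸ huv.symm)
    have hlnv : ¬ G.Adj v l := by
      intro h
      exact hxv (hluniq v hvA h.symm).symm
    exact Or.inr ⟨l, mem_link_iff.mpr ⟨hlA, hlv, hlnv⟩, hxC, hlx,
      fun t ht h => hluniq t (mem_link_iff.mp ht).1 h⟩

lemma good_vd [Finite V] :
    ∀ (n : ℕ) (A : Set V), A.ncard ≤ n → GoodOn G A → VDOn G A := by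
  intro n
  induction n with
  | zero =>
    intro A hA _
    have : A = ∅ := by
      rw [← Set.ncard_eq_zero (Set.toFinite _)]
      omega
    subst this
    exact VDOn.no_edges ∅ (by simp)
  | succ n ih =>
    intro A hA hG
    by_cases hedge : ∀ a ∈ A, ∀ b ∈ A, ¬ G.Adj a b
    · exact VDOn.no_edges A hedge
    · push_neg at hedge
      obtain ⟨a, haA, b, hbA, hab⟩ := hedge
      -- find a leaf pair (u, v) in A
      obtain ⟨u, v, hu⟩ : ∃ u v, LeafOn G A u v := by
        rcases hG a haA ⟨b, hbA, hab⟩ with ⟨w, hw⟩ | ⟨l, hl⟩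
        · exact ⟨a, w, hw⟩
        · exact ⟨l, a, hl⟩
      have hvA : v ∈ A := hu.2.1
      have hcardB : (A \ {v}).ncard ≤ n := by
        have := Set.ncard_diff_singleton_of_mem hvA
        have hpos : 1 ≤ A.ncard := Set.ncard_pos (Set.toFinite _) |>.2 ⟨v, hvA⟩
        omega
      have hcardC : (A \ closedNbhd G v).ncard ≤ n := by
        have hsub : A \ closedNbhd G v ⊆ A \ {v} :=
          Set.diff_subset_diff_right (by simp [closedNbhd])
        have := Set.ncard_le_ncard hsub (Set.toFinite _)
        omega
      refine VDOn.step A v hvA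
        (ih (A \ {v}) hcardB (good_del hG hu))
        (ih (A \ closedNbhd G v) hcardC (good_link hG hu))
        ?_
      -- shedding: u is isolated in A \ {v} but excluded from the link
      intro S hS hmax
      obtain ⟨huA, _, huv, huuniq⟩ := hu
      have huB : u ∈ A \ {v} := ⟨huA, huv.ne⟩
      have huS : u ∉ S := fun h =>
        (mem_link_iff.mp (hS.1 h)).2.2 huv.symm
      have hind : IsIndepOn G (A \ {v}) (insert u S) := by
        constructor
        · intro t ht
          rcases ht with rfl | ht
          · exact huB
          · exact ⟨(hS.1 ht).1, (mem_link_iff.mp (hS.1 ht)).2.1⟩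
        · intro c hc d hd hadj
          rcases hc with rfl | hc <;> rcases hd with rfl | hd
          · exact G.irrefl hadj
          · exact (mem_link_iff.mp (hS.1 hd)).2.1 (huuniq d (hS.1 hd).1 hadj)
          · exact (mem_link_iff.mp (hS.1 hc)).2.1 (huuniq c (hS.1 hc).1 hadj.symm)
          · exact hS.2 c hc d hd hadj
      have := hmax.2 (insert u S) hind (Set.subset_insert u S)
      exact huS (by rw [this]; exact Set.mem_insert u S)

end Stmt8Aux5
section Stmt8Aux6

variable {G : SimpleGraph V}

lemma pendantEdge_symm {u w : V} (h : PendantEdge G u w) : PendantEdge G w u :=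
  ⟨h.1.symm, h.2.symm⟩

lemma deg_one_unique [Finite V] {l : V} (h : deg G l = 1) :
    ∃ w, G.Adj l w ∧ ∀ y, G.Adj l y → y = w := by
  obtain ⟨a, ha⟩ := Set.ncard_eq_one.mp h
  refine ⟨a, ?_, ?_⟩
  · have : a ∈ nbhd G l := ha ▸ rfl
    exact this
  · intro y hy
    have : y ∈ nbhd G l := hy
    rw [ha] at this
    exact this

lemma deg_eq_one_of_unique {l w : V} [Finite V] (hadj : G.Adj l w)
    (huniq : ∀ y, G.Adj l y → y = w) : deg G l = 1 := by
  have : nbhd G l = {w} := by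
    ext y
    constructor
    · intro hy; exact huniq y hy
    · rintro rfl; exact hadj
  rw [deg, this, Set.ncard_singleton]

lemma leafOn_univ_of_deg_one [Finite V] {l : V} (h : deg G l = 1) :
    ∃ w, LeafOn G Set.univ l w := by
  obtain ⟨w, hadj, huniq⟩ := deg_one_unique h
  exact ⟨w, trivial, trivial, hadj, fun y _ hy => huniq y hy⟩

lemma exists_adj_of_connected [Fintype V] (hconn : G.Connected)
    (hcard : 1 < Fintype.card V) (v : V) : ∃ y, G.Adj v y := by
  obtain ⟨w, hw⟩ := Fintype.exists_ne_of_one_lt_card hcard v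
  obtain ⟨p⟩ := hconn.preconnected v w
  cases p with
  | nil => exact absurd rfl hw
  | cons h _ => exact ⟨_, h⟩

/-- In a graph whose pendant edges form a perfect matching, every maximal
independent set contains exactly one endpoint of each pendant edge. -/
lemma matching_wc [Finite V] (h : ∀ v : V, ∃! u : V, PendantEdge G v u) :
    WCOn G Set.univ := by
  classical
  set m : V → V := fun v => (h v).choose with hm
  have hm1 : ∀ v, PendantEdge G v (m v) := fun v => (h v).choose_spec.1
  have hm2 : ∀ v u, PendantEdge G v u → u = m v := fun v u hu => (h v).choose_spec.2 u hu
  have hmm : ∀ v, m (m v) = v := fun v => (hm2 (m v) v (pendantEdge_symm (hm1 v))).symm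
  have hadjm : ∀ v, G.Adj v (m v) := fun v => (hm1 v).1
  have hdegkey : ∀ v y, deg G v = 1 → G.Adj v y → y = m v := by
    intro v y hdeg hadj
    exact hm2 v y ⟨hadj, Or.inl hdeg⟩
  have pairKey : ∀ M : Set V, IsMaxIndepOn G Set.univ M →
      ∀ v, (v ∈ M ∧ m v ∉ M) ∨ (v ∉ M ∧ m v ∈ M) := by
    intro M hM v
    by_cases hv : v ∈ M
    · exact Or.inl ⟨hv, fun h' => hM.1.2 v hv (m v) h' (hadjm v)⟩
    · refine Or.inr ⟨hv, ?_⟩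
      by_contra hmv
      -- one of v, m v is a leaf; adding it contradicts maximality
      rcases (hm1 v).2 with hdeg | hdeg
      · have hind : IsIndepOn G Set.univ (insert v M) := by
          refine ⟨fun _ _ => trivial, ?_⟩
          intro a ha b hb hadj
          rcases ha with rfl | ha <;> rcases hb with rfl | hb
          · exact G.irrefl hadj
          · exact hmv ((hdegkey a b hdeg hadj) ▸ hb)
          · exact hmv ((hdegkey b a hdeg hadj.symm) ▸ ha)
          · exact hM.1.2 a ha b hb hadj
        have := hM.2 (insert v M) hind (Set.subset_insert v M)
        exact hv (by rw [this]; exact Set.mem_insert v M)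
      · have hkey2 : ∀ y, G.Adj (m v) y → y = v := by
          intro y hy
          have := hm2 (m v) y ⟨hy, Or.inl hdeg⟩
          rw [this, hmm]
        have hind : IsIndepOn G Set.univ (insert (m v) M) := by
          refine ⟨fun _ _ => trivial, ?_⟩
          intro a ha b hb hadj
          rcases ha with rfl | ha <;> rcases hb with rfl | hb
          · exact G.irrefl hadj
          · exact hv ((hkey2 b hadj) ▸ hb)
          · exact hv ((hkey2 a hadj.symm) ▸ ha)
          · exact hM.1.2 a ha b hb hadj
        have := hM.2 (insert (m v) M) hind (Set.subset_insert (m v) M)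
        exact hmv (by rw [this]; exact Set.mem_insert (m v) M)
  intro S T hS hT
  classical
  set f : V → V := fun a => if a ∈ T then a else m a with hf
  have hinj : Set.InjOn f S := by
    intro a ha b hb hab
    by_cases haT : a ∈ T <;> by_cases hbT : b ∈ T <;> simp only [hf, haT, hbT,
      if_pos, if_neg, if_true, if_false] at hab
    · exact hab
    · exact absurd (hab ▸ hadjm b).symm (fun h => hS.1.2 b hb a ha h.symm)
    · exact absurd (hab ▸ hadjm a) (fun h => hS.1.2 a ha b hb h)
    · rw [← hmm a, hab, hmm]
  have himg : f '' S = T := by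
    apply Set.Subset.antisymm
    · rintro _ ⟨a, haS, rfl⟩
      by_cases haT : a ∈ T
      · simpa [hf, haT]
      · rcases pairKey T hT a with ⟨h1, _⟩ | ⟨_, h2⟩
        · exact absurd h1 haT
        · simpa [hf, haT]
    · intro c hcT
      rcases pairKey S hS c with ⟨h1, _⟩ | ⟨_, h2⟩
      · exact ⟨c, h1, by simp [hf, hcT]⟩
      · refine ⟨m c, h2, ?_⟩
        have hmcT : m c ∉ T := fun h => hT.1.2 c hcT (m c) h (hadjm c)
        simp [hf, hmcT, hmm]
  calc S.ncard = (f '' S).ncard := (Set.ncard_image_of_injOn hinj).symm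
    _ = T.ncard := by rw [himg]

lemma matching_good [Finite V] (h : ∀ v : V, ∃! u : V, PendantEdge G v u) :
    GoodOn G Set.univ := by
  intro x _ _
  obtain ⟨u, ⟨hadj, hdeg⟩, _⟩ := h x
  rcases hdeg with hdeg | hdeg
  · exact Or.inl (leafOn_univ_of_deg_one hdeg)
  · obtain ⟨w, hadj', huniq⟩ := deg_one_unique hdeg
    have hwx : w = x := (huniq x hadj.symm).symm ▸ rfl
    refine Or.inr ⟨u, trivial, trivial, hadj.symm, fun y _ hy => ?_⟩
    rw [huniq y hy, huniq x hadj.symm]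

end Stmt8Aux6

/-- A connected finite simple graph of girth at least 6 with more
than one vertex is well-covered and vertex decomposable if and only if its
pendant edges form a perfect matching of `G`. -/
theorem stmt8 {V : Type*} [Fintype V] (G : SimpleGraph V)
    (hconn : G.Connected) (hgirth : 6 ≤ G.egirth) (hcard : 1 < Fintype.card V) :
    (WellCovered G ∧ VertexDecomposable G) ↔
      (∀ v : V, ∃! u : V, PendantEdge G v u) := by
  constructor
  · rintro ⟨hwc, hvd⟩
    have hwcU : WCOn G Set.univ := hwc
    have hGood : GoodOn G Set.univ := vd_wc_good hgirth Set.univ hvd hwcU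
    intro v
    obtain ⟨y, hy⟩ := exists_adj_of_connected hconn hcard v
    rcases hGood v trivial ⟨y, trivial, hy⟩ with ⟨w, hw⟩ | ⟨l, hl⟩
    · have hdeg : deg G v = 1 :=
        deg_eq_one_of_unique hw.2.2.1 (fun t ht => hw.2.2.2 t trivial ht)
      refine ⟨w, ⟨hw.2.2.1, Or.inl hdeg⟩, ?_⟩
      intro u hu
      exact hw.2.2.2 u trivial hu.1
    · have hdegl : deg G l = 1 :=
        deg_eq_one_of_unique hl.2.2.1 (fun t ht => hl.2.2.2 t trivial ht)
      refine ⟨l, ⟨hl.2.2.1.symm, Or.inr hdegl⟩, ?_⟩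
      intro u hu
      rcases hu.2 with hdv | hdu
      · obtain ⟨a, hadj, huniq⟩ := deg_one_unique hdv
        rw [huniq u hu.1, ← huniq l hl.2.2.1.symm]
      · obtain ⟨a, hadj, huniq⟩ := deg_one_unique hdu
        have hav : a = v := (huniq v hu.1.symm).symm
        have hu' : LeafOn G Set.univ u v :=
          ⟨trivial, trivial, hu.1.symm, fun t _ ht => (huniq t ht).trans hav⟩
        exact claim1 hwcU hu' hl
  · intro h
    exact ⟨matching_wc h, good_vd (Set.ncard (Set.univ : Set V)) Set.univ le_rfl
      (matching_good h)⟩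
end

section
/- For every integer n ≥ 1, the graphs G_n and H_n are well-covered and vertex decomposable, with independence numbers α(G_n) = α(H_n) = n. -/
open SimpleGraph

variable {V : Type*} {W : Type*}

namespace Stmt11Aux

open Set

/-- 0-based arithmetic adjacency for the graphs `G_n`/`H_n`. -/
def AdjP (u v : ℕ) : Prop :=
  v = u + 1 ∨ u = v + 1 ∨ (v = u + 4 ∧ u % 3 = 0) ∨ (u = v + 4 ∧ v % 3 = 0) ∨
    (v = u + 3 ∧ u % 3 = 2) ∨ (u = v + 3 ∧ v % 3 = 2)

variable {V : Type*} {G : SimpleGraph V}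

lemma notmax {B S : Set V} {w : V} (hwB : w ∈ B) (hwS : w ∉ S)
    (hadjS : ∀ z ∈ S, ¬ G.Adj w z) : ¬ IsMaxIndepOn G B S := by
  rintro ⟨⟨hSB, hSind⟩, hmax⟩
  have hind : IsIndep G (insert w S) := by
    rintro u hu z hz hadj
    rcases hu with rfl | hu <;> rcases hz with rfl | hz
    · exact G.irrefl hadj
    · exact hadjS _ hz hadj
    · exact hadjS _ hu (G.adj_symm hadj)
    · exact hSind _ hu _ hz hadj
  have h := hmax (insert w S) ⟨Set.insert_subset hwB hSB, hind⟩ (Set.subset_insert _ _)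
  exact hwS (h ▸ Set.mem_insert _ _)

lemma shed_of_dom {A : Set V} {v u : V} (hu : u ∈ A) (hvu : G.Adj v u)
    (hdom : ∀ z ∈ A, G.Adj u z → z = v ∨ G.Adj v z) :
    ∀ S : Set V, IsIndepOn G (A \ closedNbhd G v) S → ¬ IsMaxIndepOn G (A \ {v}) S := by
  intro S hS
  have huS : u ∉ S := by
    intro h
    exact (hS.1 h).2 (Set.mem_insert_iff.mpr (Or.inr hvu))
  refine notmax ⟨hu, ?_⟩ huS ?_
  · simp only [Set.mem_singleton_iff]
    exact fun h => G.irrefl (h ▸ hvu)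
  · intro z hz hadj
    have hzA : z ∈ A := (hS.1 hz).1
    rcases hdom z hzA hadj with rfl | h
    · exact (hS.1 hz).2 (Set.mem_insert _ _)
    · exact (hS.1 hz).2 (Set.mem_insert_iff.mpr (Or.inr h))

lemma vd_pair {a b : V} (hab : G.Adj a b) : VDOn G {a, b} := by
  have hne : a ≠ b := G.ne_of_adj hab
  refine VDOn.step {a, b} a (Set.mem_insert _ _) ?_ ?_ ?_
  · have : ({a, b} : Set V) \ {a} = {b} := by
      ext z; simp only [Set.mem_diff, Set.mem_insert_iff, Set.mem_singleton_iff]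
      constructor
      · rintro ⟨rfl | rfl, h⟩ <;> tauto
      · rintro rfl; exact ⟨Or.inr rfl, fun h => hne h.symm⟩
    rw [this]
    exact VDOn.no_edges _ (by rintro u rfl w rfl h; exact G.irrefl h)
  · have : ({a, b} : Set V) \ closedNbhd G a = ∅ := by
      ext z
      simp only [Set.mem_diff, Set.mem_insert_iff, Set.mem_empty_iff_false, iff_false,
        closedNbhd, Set.mem_setOf_eq, not_and, not_not]
      rintro (rfl | rfl)
      · exact Or.inl rfl
      · exact Or.inr hab
    rw [this]
    exact VDOn.no_edges _ (by rintro u h; exact absurd h (Set.notMem_empty u))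
  · intro S hS
    have hSempty : S = ∅ := by
      have := hS.1
      rw [show ({a, b} : Set V) \ closedNbhd G a = ∅ from ?_] at this
      · exact Set.subset_eq_empty this rfl
      · ext z
        simp only [Set.mem_diff, Set.mem_insert_iff, Set.mem_empty_iff_false, iff_false,
          closedNbhd, Set.mem_setOf_eq, not_and, not_not]
        rintro (rfl | rfl)
        · exact Or.inl rfl
        · exact Or.inr hab
    subst hSempty
    refine notmax (w := b) ⟨Or.inr rfl, ?_⟩ (Set.notMem_empty b) ?_
    · simp only [Set.mem_singleton_iff]; exact fun h => hne h.symm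
    · intro z hz; exact absurd hz (Set.notMem_empty z)

lemma vd_insert_isolated {A : Set V} (hA : VDOn G A) :
    ∀ w : V, (∀ u ∈ A, ¬ G.Adj w u) → w ∉ A → VDOn G (insert w A) := by
  induction hA with
  | no_edges A h =>
    intro w hw hwA
    refine VDOn.no_edges _ ?_
    rintro u (rfl | hu) z (rfl | hz) hadj
    · exact G.irrefl hadj
    · exact hw _ hz hadj
    · exact hw _ hu (G.adj_symm hadj)
    · exact h _ hu _ hz hadj
  | step A v hv hdel hlk hshed ihdel ihlk =>
    intro w hw hwA
    have hwv : w ≠ v := fun h => hwA (h ▸ hv)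
    have hwcn : w ∉ closedNbhd G v := by
      simp only [closedNbhd, Set.mem_insert_iff, Set.mem_setOf_eq]
      push_neg
      exact ⟨hwv, fun h => hw v hv (G.adj_symm h)⟩
    refine VDOn.step _ v (Set.mem_insert_iff.mpr (Or.inr hv)) ?_ ?_ ?_
    · rw [show insert w A \ {v} = insert w (A \ {v}) from
        Set.insert_diff_of_notMem _ (by simpa using hwv)]
      exact ihdel w (fun u hu => hw u hu.1) (fun h => hwA h.1)
    · rw [show insert w A \ closedNbhd G v = insert w (A \ closedNbhd G v) from
        Set.insert_diff_of_notMem _ hwcn]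
      exact ihlk w (fun u hu => hw u hu.1) (fun h => hwA h.1)
    · intro S hS hmax
      rw [show insert w A \ closedNbhd G v = insert w (A \ closedNbhd G v) from
        Set.insert_diff_of_notMem _ hwcn] at hS
      rw [show insert w A \ {v} = insert w (A \ {v}) from
        Set.insert_diff_of_notMem _ (by simpa using hwv)] at hmax
      by_cases hwS : w ∈ S
      · have hS' : IsIndepOn G (A \ closedNbhd G v) (S \ {w}) := by
          refine ⟨?_, fun u hu z hz => hS.2 u hu.1 z hz.1⟩
          intro z hz
          rcases hS.1 hz.1 with rfl | h
          · exact absurd rfl hz.2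
          · exact h
        have hne' : ¬ IsMaxIndepOn G (A \ {v}) (S \ {w}) := hshed _ hS'
        apply hne'
        constructor
        · refine ⟨?_, fun u hu z hz => hS.2 u hu.1 z hz.1⟩
          intro z hz
          have hz' := hS'.1 hz
          exact ⟨hz'.1, fun hzv => hz'.2 (by rw [Set.mem_singleton_iff.mp hzv]; exact Set.mem_insert _ _)⟩
        · intro T hT hsub
          have hT' : IsIndepOn G (insert w (A \ {v})) (insert w T) := by
            constructor
            · exact Set.insert_subset_insert hT.1
            · rintro u (rfl | hu) z (rfl | hz) hadj
              · exact G.irrefl hadj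
              · exact hw z (hT.1 hz).1 hadj
              · exact hw u (hT.1 hu).1 (G.adj_symm hadj)
              · exact hT.2 u hu z hz hadj
          have hsub2 : S ⊆ insert w T := by
            intro z hz
            by_cases hzw : z = w
            · exact hzw ▸ Set.mem_insert _ _
            · exact Set.mem_insert_iff.mpr (Or.inr (hsub ⟨hz, hzw⟩))
          have heq := hmax.2 (insert w T) hT' hsub2
          ext z
          constructor
          · intro hz; exact hsub hz
          · intro hz
            have hzS : z ∈ S := by
              rw [heq]; exact Set.mem_insert_iff.mpr (Or.inr hz)
            have hzw : z ≠ w := fun h => hwA (h ▸ (hT.1 hz).1)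
            exact ⟨hzS, hzw⟩
      · have hS2 : IsIndepOn G (A \ closedNbhd G v) S := by
          refine ⟨?_, hS.2⟩
          intro z hz
          rcases hS.1 hz with rfl | h
          · exact absurd hz hwS
          · exact h
        apply hshed _ hS2
        constructor
        · refine ⟨?_, hS.2⟩
          intro z hz
          have hz' := hS2.1 hz
          exact ⟨hz'.1, fun hzv => hz'.2 (by rw [Set.mem_singleton_iff.mp hzv]; exact Set.mem_insert _ _)⟩
        · intro T hT hsub
          exact hmax.2 T ⟨fun z hz => Set.mem_insert_iff.mpr (Or.inr (hT.1 hz)), hT.2⟩ hsub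

end Stmt11Aux
namespace Stmt11Aux

open Set Finset

variable {N : ℕ}

/-- indicator of membership of the `j`-th vertex in `S`. -/
noncomputable def eS (S : Set (Fin N)) (j : ℕ) : ℕ :=
  haveI := Classical.propDecidable (∃ hj : j < N, (⟨j, hj⟩ : Fin N) ∈ S)
  if (∃ hj : j < N, (⟨j, hj⟩ : Fin N) ∈ S) then 1 else 0

/-- number of members of `S` among the first `m` vertices. -/
noncomputable def TS (S : Set (Fin N)) : ℕ → ℕ
  | 0 => 0
  | m + 1 => TS S m + eS S m

lemma eS_le_one (S : Set (Fin N)) (j : ℕ) : eS S j ≤ 1 := by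
  unfold eS; split <;> omega

lemma eS_eq_one (S : Set (Fin N)) {j : ℕ} (hj : j < N) (hm : (⟨j, hj⟩ : Fin N) ∈ S) :
    eS S j = 1 := by
  unfold eS; rw [if_pos ⟨hj, hm⟩]

lemma eS_spec {S : Set (Fin N)} {j : ℕ} (h : eS S j = 1) :
    ∃ hj : j < N, (⟨j, hj⟩ : Fin N) ∈ S := by
  by_contra hc
  unfold eS at h
  rw [if_neg hc] at h
  exact absurd h (by omega)

variable {G : SimpleGraph (Fin N)}

lemma eS_add_le (hadj : ∀ a b : Fin N, G.Adj a b ↔ AdjP a.1 b.1)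
    {S : Set (Fin N)} (hS : IsIndep G S) {i j : ℕ} (hij : AdjP i j) :
    eS S i + eS S j ≤ 1 := by
  by_contra hc
  have hi : eS S i = 1 := by have := eS_le_one S i; have := eS_le_one S j; omega
  have hj : eS S j = 1 := by have := eS_le_one S j; omega
  obtain ⟨hi', hmi⟩ := eS_spec hi
  obtain ⟨hj', hmj⟩ := eS_spec hj
  exact hS _ hmi _ hmj ((hadj _ _).mpr hij)

lemma TS_succ (S : Set (Fin N)) (j : ℕ) : TS S (j+1) = TS S j + eS S j := rfl

lemma TS_mono (S : Set (Fin N)) : ∀ b a, a ≤ b → TS S a ≤ TS S b := by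
  intro b
  induction b with
  | zero =>
    intro a h
    obtain rfl : a = 0 := by omega
    exact Nat.le_refl _
  | succ b ih =>
    intro a h
    by_cases h' : a ≤ b
    · exact le_trans (ih a h') (by rw [TS_succ]; exact Nat.le_add_right _ _)
    · obtain rfl : a = b + 1 := by omega
      exact Nat.le_refl _

lemma TS_eq_sum (S : Set (Fin N)) (m : ℕ) : TS S m = ∑ i ∈ Finset.range m, eS S i := by
  induction m with
  | zero => rfl
  | succ m ih => rw [Finset.sum_range_succ, TS_succ, ih]

lemma ncard_eq_TS (S : Set (Fin N)) : S.ncard = TS S N := by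
  classical
  rw [Set.ncard_eq_toFinset_card' S, TS_eq_sum]
  have h1 : S.toFinset = Finset.univ.filter (fun v => v ∈ S) := by
    ext v; simp
  rw [h1, Finset.card_filter]
  rw [← Fin.sum_univ_eq_sum_range (fun i => eS S i) N]
  apply Finset.sum_congr rfl
  intro v _
  by_cases h : v ∈ S
  · rw [if_pos h, eS_eq_one S v.2 h]
  · rw [if_neg h]
    unfold eS
    rw [if_neg]
    rintro ⟨hj, hm⟩
    exact h hm

lemma dom_of_max (hadj : ∀ a b : Fin N, G.Adj a b ↔ AdjP a.1 b.1)
    {S : Set (Fin N)} (hS : IsMaxIndepOn G Set.univ S) (j : ℕ) (hj : j < N) :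
    ∃ i : ℕ, i < N ∧ eS S i = 1 ∧ (i = j ∨ AdjP i j) := by
  by_contra hc
  push_neg at hc
  have hkey : ∀ v : Fin N, v ∈ S → ¬ (v.1 = j ∨ AdjP v.1 j) := by
    intro v hv hrel
    have h := hc v.1 v.2 (eS_eq_one S v.2 hv)
    rcases hrel with h1 | h2
    · exact h.1 h1
    · exact h.2 h2
  have hind : IsIndep G (insert (⟨j, hj⟩ : Fin N) S) := by
    rintro u (rfl | hu) z (rfl | hz) hadj'
    · exact G.irrefl hadj'
    · refine hkey z hz (Or.inr ?_)
      have h : AdjP j z.1 := (hadj _ _).mp hadj'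
      unfold AdjP at h ⊢; omega
    · exact hkey u hu (Or.inr ((hadj _ _).mp hadj'))
    · exact hS.1.2 u hu z hz hadj'
  have heq := hS.2 _ ⟨Set.subset_univ _, hind⟩ (Set.subset_insert _ _)
  have hjS : (⟨j, hj⟩ : Fin N) ∈ S := by rw [heq]; exact Set.mem_insert _ _
  exact hkey _ hjS (Or.inl rfl)

lemma TS_upper (hadj : ∀ a b : Fin N, G.Adj a b ↔ AdjP a.1 b.1)
    {S : Set (Fin N)} (hS : IsIndep G S) : ∀ k, TS S (3*k+2) ≤ k+1 := by
  intro k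
  induction k using Nat.strong_induction_on with
  | _ k IH =>
  have pair : ∀ i j : ℕ, AdjP i j → eS S i + eS S j ≤ 1 := fun i j h => eS_add_le hadj hS h
  match k with
  | 0 =>
    have x1 : TS S (3*0+2) = TS S 1 + eS S 1 := rfl
    have x0 : TS S 1 = TS S 0 + eS S 0 := rfl
    have p01 := pair 0 1 (by unfold AdjP; omega)
    have t0 : TS S 0 = 0 := rfl
    omega
  | 1 =>
    have x4 : TS S (3*1+2) = TS S 4 + eS S 4 := rfl
    have x3 : TS S 4 = TS S 3 + eS S 3 := rfl
    have x2 : TS S 3 = TS S 2 + eS S 2 := rfl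
    have x1 : TS S 2 = TS S 1 + eS S 1 := rfl
    have x0 : TS S 1 = TS S 0 + eS S 0 := rfl
    have t0 : TS S 0 = 0 := rfl
    have p01 := pair 0 1 (by unfold AdjP; omega)
    have p04 := pair 0 4 (by unfold AdjP; omega)
    have p12 := pair 1 2 (by unfold AdjP; omega)
    have p23 := pair 2 3 (by unfold AdjP; omega)
    have p34 := pair 3 4 (by unfold AdjP; omega)
    omega
  | (i+2) =>
    have ih1 : TS S (3*i+2) ≤ i+1 := IH i (by omega)
    have ih2 : TS S (3*(i+1)+2) ≤ i+2 := IH (i+1) (by omega)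
    have hix : 3*(i+1)+2 = 3*i+5 := by ring
    rw [hix] at ih2
    have x5 : TS S (3*(i+2)+2) = TS S (3*i+7) + eS S (3*i+7) := by
      rw [show 3*(i+2)+2 = (3*i+7)+1 by ring]; rfl
    have x4 : TS S (3*i+7) = TS S (3*i+6) + eS S (3*i+6) := rfl
    have x3 : TS S (3*i+6) = TS S (3*i+5) + eS S (3*i+5) := rfl
    have x2 : TS S (3*i+5) = TS S (3*i+4) + eS S (3*i+4) := rfl
    have x1 : TS S (3*i+4) = TS S (3*i+3) + eS S (3*i+3) := rfl
    have x0 : TS S (3*i+3) = TS S (3*i+2) + eS S (3*i+2) := rfl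
    have p45 := pair (3*i+4) (3*i+5) (by unfold AdjP; omega)
    have p56 := pair (3*i+5) (3*i+6) (by unfold AdjP; omega)
    have p67 := pair (3*i+6) (3*i+7) (by unfold AdjP; omega)
    have p25 := pair (3*i+2) (3*i+5) (by unfold AdjP; omega)
    have p37 := pair (3*i+3) (3*i+7) (by unfold AdjP; omega)
    have e2 := eS_le_one S (3*i+2)
    have e3 := eS_le_one S (3*i+3)
    have e4 := eS_le_one S (3*i+4)
    by_cases hb : eS S (3*i+5) = 1 ∧ eS S (3*i+7) = 1
    · omega
    · have h57 : eS S (3*i+5) + eS S (3*i+7) ≤ 1 := by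
        have := eS_le_one S (3*i+5)
        have := eS_le_one S (3*i+7)
        omega
      omega

lemma ncard_upper (hadj : ∀ a b : Fin N, G.Adj a b ↔ AdjP a.1 b.1) (hN : N % 3 ≠ 0)
    {S : Set (Fin N)} (hS : IsIndep G S) : S.ncard ≤ (N+2)/3 := by
  rw [ncard_eq_TS]
  obtain ⟨k, hk⟩ : ∃ k, N = 3*k+1 ∨ N = 3*k+2 := ⟨N/3, by omega⟩
  have hup := TS_upper hadj hS k
  rcases hk with rfl | rfl
  · have hmono := TS_mono S (3*k+2) (3*k+1) (by omega)
    omega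
  · omega

end Stmt11Aux
namespace Stmt11Aux

open Set

variable {N : ℕ} {G : SimpleGraph (Fin N)}

lemma inv_lower (hadj : ∀ a b : Fin N, G.Adj a b ↔ AdjP a.1 b.1)
    {S : Set (Fin N)} (hS : IsMaxIndepOn G Set.univ S) :
    ∀ j : ℕ, 3*j+1 < N →
      (j+1 ≤ TS S (3*j+2) ∨ (j ≤ TS S (3*j+2) ∧ eS S (3*j+2) = 1 ∧ eS S (3*j+4) = 1)) := by
  have pair : ∀ i j : ℕ, AdjP i j → eS S i + eS S j ≤ 1 :=
    fun i j h => eS_add_le hadj hS.1.2 h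
  intro j
  induction j with
  | zero =>
    intro hN
    have x1 : TS S (3*0+2) = TS S 1 + eS S 1 := rfl
    have x0 : TS S 1 = TS S 0 + eS S 0 := rfl
    have t0 : TS S 0 = 0 := rfl
    by_cases h01 : 1 ≤ eS S 0 ∨ 1 ≤ eS S 1
    · left; omega
    · push_neg at h01
      obtain ⟨i, hiN, hei, hrel⟩ := dom_of_max hadj hS 0 (by omega)
      have hcases : i = 0 ∨ i = 1 ∨ i = 4 := by unfold AdjP at hrel; omega
      obtain ⟨i', hiN', hei', hrel'⟩ := dom_of_max hadj hS 1 (by omega)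
      have hcases' : i' = 0 ∨ i' = 1 ∨ i' = 2 := by unfold AdjP at hrel'; omega
      right
      rcases hcases with rfl | rfl | rfl <;> rcases hcases' with rfl | rfl | rfl <;>
        simp_all <;> omega
  | succ j IH =>
    intro hN
    have hN4 : 3*j+4 < N := by omega
    have hIH := IH (by omega)
    have x0 : TS S (3*j+3) = TS S (3*j+2) + eS S (3*j+2) := rfl
    have x1 : TS S (3*j+4) = TS S (3*j+3) + eS S (3*j+3) := rfl
    have x2 : TS S (3*j+5) = TS S (3*j+4) + eS S (3*j+4) := rfl
    have hg2 : 3*(j+1)+2 = 3*j+5 := by ring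
    have hg4 : 3*(j+1)+4 = 3*j+7 := by ring
    rw [hg2, hg4]
    rcases hIH with h | ⟨h, h2, h4⟩
    · by_cases hc : 1 ≤ eS S (3*j+2) ∨ 1 ≤ eS S (3*j+3) ∨ 1 ≤ eS S (3*j+4)
      · left; omega
      · push_neg at hc
        obtain ⟨hc2, hc3, hc4⟩ := hc
        -- dominate vertex 3j+3
        obtain ⟨i, hiN, hei, hrel⟩ := dom_of_max hadj hS (3*j+3) (by omega)
        have hcases : i = 3*j+2 ∨ i = 3*j+3 ∨ i = 3*j+4 ∨ i = 3*j+7 := by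
          unfold AdjP at hrel; omega
        have he7 : eS S (3*j+7) = 1 := by
          rcases hcases with rfl | rfl | rfl | rfl <;> omega
        -- dominate vertex 3j+4
        obtain ⟨i', hiN', hei', hrel'⟩ := dom_of_max hadj hS (3*j+4) (by omega)
        have hcases' : i' = 3*j ∨ i' = 3*j+3 ∨ i' = 3*j+4 ∨ i' = 3*j+5 := by
          unfold AdjP at hrel'; omega
        have he5 : eS S (3*j+5) = 1 := by
          rcases hcases' with rfl | rfl | rfl | rfl
          · -- middle of group j is occupied; dominate vertex 3j+2
            obtain ⟨i'', hiN'', hei'', hrel''⟩ := dom_of_max hadj hS (3*j+2) (by omega)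
            have hcases'' : i'' = 3*j+1 ∨ i'' = 3*j+2 ∨ i'' = 3*j+3 ∨ i'' = 3*j+5 ∨
                (i''+3 = 3*j+2 ∧ i'' % 3 = 2) := by
              unfold AdjP at hrel''; omega
            have p1 := pair (3*j) (3*j+1) (by unfold AdjP; omega)
            rcases hcases'' with rfl | rfl | rfl | rfl | ⟨hi3, hm3⟩
            · omega
            · omega
            · omega
            · omega
            · have p2 := pair i'' (3*j) (by unfold AdjP; omega)
              omega
          · omega
          · omega
          · omega
        right
        refine ⟨by omega, ?_, ?_⟩
        · rwa [show 3*j+5 = 3*(j+1)+2 by ring] at he5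
        · rwa [show 3*j+7 = 3*(j+1)+4 by ring] at he7
    · -- case 2 at j: both bottom and top of group j+1 present
      left
      omega

end Stmt11Aux
namespace Stmt11Aux

open Set

variable {N : ℕ} {G : SimpleGraph (Fin N)}

lemma ncard_lower (hadj : ∀ a b : Fin N, G.Adj a b ↔ AdjP a.1 b.1) (hN : N % 3 ≠ 0)
    (hN1 : 1 ≤ N) {S : Set (Fin N)} (hS : IsMaxIndepOn G Set.univ S) :
    (N+2)/3 ≤ S.ncard := by
  rw [ncard_eq_TS]
  have pair : ∀ i j : ℕ, AdjP i j → eS S i + eS S j ≤ 1 :=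
    fun i j h => eS_add_le hadj hS.1.2 h
  rcases (show N = 1 ∨ N = 2 ∨ N = 4 ∨ (N % 3 = 2 ∧ 5 ≤ N) ∨ (N % 3 = 1 ∧ 7 ≤ N) by omega)
    with rfl | rfl | rfl | ⟨hm, hge⟩ | ⟨hm, hge⟩
  · obtain ⟨i, hiN, hei, hrel⟩ := dom_of_max hadj hS 0 (by omega)
    have : i = 0 := by omega
    subst this
    have x0 : TS S 1 = TS S 0 + eS S 0 := rfl
    have t0 : TS S (0:ℕ) = 0 := rfl
    omega
  · obtain ⟨i, hiN, hei, hrel⟩ := dom_of_max hadj hS 0 (by omega)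
    have hcases : i = 0 ∨ i = 1 := by unfold AdjP at hrel; omega
    have x1 : TS S 2 = TS S 1 + eS S 1 := rfl
    have x0 : TS S 1 = TS S 0 + eS S 0 := rfl
    have t0 : TS S (0:ℕ) = 0 := rfl
    rcases hcases with rfl | rfl <;> omega
  · obtain ⟨i, hiN, hei, hrel⟩ := dom_of_max hadj hS 0 (by omega)
    have hcases : i = 0 ∨ i = 1 := by unfold AdjP at hrel; omega
    obtain ⟨i', hiN', hei', hrel'⟩ := dom_of_max hadj hS 3 (by omega)
    have hcases' : i' = 2 ∨ i' = 3 := by unfold AdjP at hrel'; omega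
    have x3 : TS S 4 = TS S 3 + eS S 3 := rfl
    have x2 : TS S 3 = TS S 2 + eS S 2 := rfl
    have x1 : TS S 2 = TS S 1 + eS S 1 := rfl
    have x0 : TS S 1 = TS S 0 + eS S 0 := rfl
    have t0 : TS S (0:ℕ) = 0 := rfl
    rcases hcases with rfl | rfl <;> rcases hcases' with rfl | rfl <;> omega
  · -- N = 3j+5, the G_n shape
    obtain ⟨j, rfl⟩ : ∃ j, N = 3*j+5 := ⟨(N-5)/3, by omega⟩
    have hinv := inv_lower hadj hS j (by omega)
    obtain ⟨i, hiN, hei, hrel⟩ := dom_of_max hadj hS (3*j+3) (by omega)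
    have hcases : i = 3*j+2 ∨ i = 3*j+3 ∨ i = 3*j+4 := by unfold AdjP at hrel; omega
    have x2 : TS S (3*j+5) = TS S (3*j+4) + eS S (3*j+4) := rfl
    have x1 : TS S (3*j+4) = TS S (3*j+3) + eS S (3*j+3) := rfl
    have x0 : TS S (3*j+3) = TS S (3*j+2) + eS S (3*j+2) := rfl
    rcases hcases with rfl | rfl | rfl <;> rcases hinv with h | ⟨h, h2, h4⟩ <;> omega
  · -- N = 3j+7, the H_n shape
    obtain ⟨j, rfl⟩ : ∃ j, N = 3*j+7 := ⟨(N-7)/3, by omega⟩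
    have hinv := inv_lower hadj hS j (by omega)
    obtain ⟨i, hiN, hei, hrel⟩ := dom_of_max hadj hS (3*j+3) (by omega)
    have hcases : i = 3*j+2 ∨ i = 3*j+3 ∨ i = 3*j+4 := by unfold AdjP at hrel; omega
    obtain ⟨i', hiN', hei', hrel'⟩ := dom_of_max hadj hS (3*j+6) (by omega)
    have hcases' : i' = 3*j+5 ∨ i' = 3*j+6 := by unfold AdjP at hrel'; omega
    have x4 : TS S (3*j+7) = TS S (3*j+6) + eS S (3*j+6) := rfl
    have x3 : TS S (3*j+6) = TS S (3*j+5) + eS S (3*j+5) := rfl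
    have x2 : TS S (3*j+5) = TS S (3*j+4) + eS S (3*j+4) := rfl
    have x1 : TS S (3*j+4) = TS S (3*j+3) + eS S (3*j+3) := rfl
    have x0 : TS S (3*j+3) = TS S (3*j+2) + eS S (3*j+2) := rfl
    rcases hcases with rfl | rfl | rfl <;> rcases hcases' with rfl | rfl <;>
      rcases hinv with h | ⟨h, h2, h4⟩ <;> omega

lemma card_of_max (hadj : ∀ a b : Fin N, G.Adj a b ↔ AdjP a.1 b.1) (hN : N % 3 ≠ 0)
    (hN1 : 1 ≤ N) {S : Set (Fin N)} (hS : IsMaxIndepOn G Set.univ S) :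
    S.ncard = (N+2)/3 :=
  le_antisymm (ncard_upper hadj hN hS.1.2) (ncard_lower hadj hN hN1 hS)

lemma wellCovered_of_adj (hadj : ∀ a b : Fin N, G.Adj a b ↔ AdjP a.1 b.1) (hN : N % 3 ≠ 0)
    (hN1 : 1 ≤ N) : WellCovered G := by
  intro S T hSmax hTmax
  rw [card_of_max hadj hN hN1 hSmax, card_of_max hadj hN hN1 hTmax]

lemma indepNum_of_adj (hadj : ∀ a b : Fin N, G.Adj a b ↔ AdjP a.1 b.1) (hN : N % 3 ≠ 0)
    (hN1 : 1 ≤ N) : _root_.indepNum G = (N+2)/3 := by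
  have hM : IsIndep G {v : Fin N | v.1 % 3 = 0} := by
    intro u hu w hw hadj'
    have h := (hadj _ _).mp hadj'
    simp only [Set.mem_setOf_eq] at hu hw
    unfold AdjP at h
    omega
  have hMcard : ({v : Fin N | v.1 % 3 = 0} : Set (Fin N)).ncard = (N+2)/3 := by
    rw [ncard_eq_TS]
    have key : ∀ m, m ≤ N → TS {v : Fin N | v.1 % 3 = 0} m = (m+2)/3 := by
      intro m
      induction m with
      | zero => intro _; rfl
      | succ m ih =>
        intro hm
        rw [TS_succ, ih (by omega)]
        have he : eS {v : Fin N | v.1 % 3 = 0} m = if m % 3 = 0 then 1 else 0 := by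
          unfold eS
          split
          · rename_i h
            obtain ⟨h1, h2⟩ := h
            simp only [Set.mem_setOf_eq] at h2
            rw [if_pos h2]
          · rename_i h
            rw [if_neg]
            intro hm3
            exact h ⟨by omega, by simp only [Set.mem_setOf_eq]; exact hm3⟩
        rw [he]
        split <;> rename_i h <;> omega
    exact key N (le_refl N)
  apply le_antisymm
  · apply csSup_le
    · exact ⟨0, ∅, by intro u hu; exact absurd hu (Set.notMem_empty u), by simp⟩
    · rintro b ⟨S, hSind, rfl⟩
      exact ncard_upper hadj hN hSind
  · apply le_csSup
    · refine ⟨(N+2)/3, ?_⟩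
      rintro b ⟨S, hSind, rfl⟩
      exact ncard_upper hadj hN hSind
    · exact ⟨_, hM, hMcard⟩

end Stmt11Aux
namespace Stmt11Aux

open Set

variable {N : ℕ} {G : SimpleGraph (Fin N)}

lemma vd_subsingleton (A : Set (Fin N)) (h : ∀ u ∈ A, ∀ w ∈ A, u = w) : VDOn G A :=
  VDOn.no_edges A (fun u hu w hw hadj => G.irrefl ((h u hu w hw) ▸ hadj))

lemma iso_ext (hadj : ∀ a b : Fin N, G.Adj a b ↔ AdjP a.1 b.1) {r : ℕ}
    (hG : VDOn G {v : Fin N | v.1 < 3*r+2}) (h3 : 3*r+3 < N) :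
    VDOn G (insert (⟨3*r+3, h3⟩ : Fin N) {v : Fin N | v.1 < 3*r+2}) := by
  apply vd_insert_isolated hG
  · intro u hu hadj'
    have hu' : u.1 < 3*r+2 := hu
    have ha : AdjP (3*r+3) u.1 := (hadj _ _).mp hadj'
    unfold AdjP at ha; omega
  · intro hmem
    have : (3*r+3 : ℕ) < 3*r+2 := hmem
    omega

lemma iso_ext5 (hadj : ∀ a b : Fin N, G.Adj a b ↔ AdjP a.1 b.1) {p : ℕ}
    (hG : VDOn G {v : Fin N | v.1 < 3*p+2}) (h5 : 3*p+5 < N) :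
    VDOn G (insert (⟨3*p+5, h5⟩ : Fin N) {v : Fin N | v.1 < 3*p+2}) := by
  apply vd_insert_isolated hG
  · intro u hu hadj'
    have hu' : u.1 < 3*p+2 := hu
    have ha : AdjP (3*p+5) u.1 := (hadj _ _).mp hadj'
    unfold AdjP at ha; omega
  · intro hmem
    have : (3*p+5 : ℕ) < 3*p+2 := hmem
    omega

lemma vd_two (hadj : ∀ a b : Fin N, G.Adj a b ↔ AdjP a.1 b.1) {a b : ℕ}
    (ha : a < N) (hb : b < N) (hab : AdjP a b) {A : Set (Fin N)}
    (hA : A = {(⟨a, ha⟩ : Fin N), (⟨b, hb⟩ : Fin N)}) : VDOn G A := by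
  rw [hA]
  exact vd_pair ((hadj _ _).mpr hab)

end Stmt11Aux
namespace Stmt11Aux

open Set

variable {N : ℕ} {G : SimpleGraph (Fin N)}

lemma VDfam (hadj : ∀ a b : Fin N, G.Adj a b ↔ AdjP a.1 b.1) :
    ∀ k p : ℕ,
      (k = 3*p+1 → 3*p+1 ≤ N → VDOn G {v : Fin N | v.1 < 3*p+1}) ∧
      (k = 3*p+2 → 3*p+2 ≤ N → VDOn G {v : Fin N | v.1 < 3*p+2}) ∧
      (k = 3*p+2 → 3*p+3 ≤ N → VDOn G {v : Fin N | v.1 < 3*p+3 ∧ v.1 ≠ 3*p}) ∧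
      (k = 3*p+4 → 3*p+6 ≤ N → VDOn G {v : Fin N | v.1 < 3*p+3 ∨ v.1 = 3*p+5}) := by
  intro k
  induction k using Nat.strong_induction_on with
  | _ k IH =>
  intro p
  refine ⟨?_, ?_, ?_, ?_⟩
  -- ============ Part 1 : H p ============
  · rintro rfl hN
    cases p with
    | zero =>
      refine vd_subsingleton _ (fun u hu w hw => Fin.ext ?_)
      have h1 : u.1 < 3*0+1 := hu
      have h2 : w.1 < 3*0+1 := hw
      omega
    | succ q =>
      rw [show 3*(q+1)+1 = 3*q+4 by ring]
      have hNq : 3*q+4 ≤ N := by omega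
      have hG : VDOn G {v : Fin N | v.1 < 3*q+2} :=
        (IH (3*q+2) (by omega) q).2.1 rfl (by omega)
      have h2 : 3*q+2 < N := by omega
      have h3 : 3*q+3 < N := by omega
      refine VDOn.step _ (⟨3*q+2, h2⟩ : Fin N) (show (3*q+2:ℕ) < 3*q+4 by omega) ?_ ?_ ?_
      · have hset : {v : Fin N | v.1 < 3*q+4} \ {(⟨3*q+2, h2⟩ : Fin N)} =
            insert (⟨3*q+3, h3⟩ : Fin N) {v : Fin N | v.1 < 3*q+2} := by
          ext w
          simp only [Set.mem_diff, Set.mem_setOf_eq, Set.mem_singleton_iff,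
            Set.mem_insert_iff, Fin.ext_iff, Fin.val_mk]
          omega
        rw [hset]
        exact iso_ext hadj hG h3
      · cases q with
        | zero =>
          have hset : {v : Fin N | v.1 < 3*0+4} \ closedNbhd G (⟨3*0+2, h2⟩ : Fin N) =
              {v : Fin N | v.1 < 1} := by
            ext w
            simp only [Set.mem_diff, Set.mem_setOf_eq, Set.mem_singleton_iff,
              Set.mem_insert_iff, closedNbhd, Fin.ext_iff, Fin.val_mk, hadj, AdjP, and_true, true_and, and_false, false_and, or_false, false_or, or_true, true_or]
            omega
          rw [hset]
          refine vd_subsingleton _ (fun u hu w hw => Fin.ext ?_)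
          have hu' : u.1 < 1 := hu
          have hw' : w.1 < 1 := hw
          omega
        | succ r =>
          have hG' : VDOn G {v : Fin N | v.1 < 3*r+2} :=
            (IH (3*r+2) (by omega) r).2.1 rfl (by omega)
          have h3' : 3*r+3 < N := by omega
          have hset : {v : Fin N | v.1 < 3*(r+1)+4} \ closedNbhd G (⟨3*(r+1)+2, h2⟩ : Fin N) =
              insert (⟨3*r+3, h3'⟩ : Fin N) {v : Fin N | v.1 < 3*r+2} := by
            ext w
            simp only [Set.mem_diff, Set.mem_setOf_eq, Set.mem_singleton_iff,
              Set.mem_insert_iff, closedNbhd, Fin.ext_iff, Fin.val_mk, hadj, AdjP, and_true, true_and, and_false, false_and, or_false, false_or, or_true, true_or]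
            omega
          rw [hset]
          exact iso_ext hadj hG' h3'
      · apply shed_of_dom (u := (⟨3*q+3, h3⟩ : Fin N))
        · show (3*q+3:ℕ) < 3*q+4
          omega
        · exact (hadj _ _).mpr (show AdjP (3*q+2) (3*q+3) by unfold AdjP; omega)
        · intro z hz hadj'
          have hz' : z.1 < 3*q+4 := hz
          have ha : AdjP (3*q+3) z.1 := (hadj _ _).mp hadj'
          left
          apply Fin.ext
          show z.1 = 3*q+2
          unfold AdjP at ha; omega
  -- ============ Part 2 : G p ============
  · rintro rfl hN
    cases p with
    | zero =>
      refine vd_two hadj (a := 0) (b := 1) (by omega) (by omega)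
        (by unfold AdjP; omega) ?_
      ext w
      simp only [Set.mem_setOf_eq, Set.mem_insert_iff, Set.mem_singleton_iff,
        Fin.ext_iff, Fin.val_mk]
      omega
    | succ q =>
      rw [show 3*(q+1)+2 = 3*q+5 by ring]
      have hNq : 3*q+5 ≤ N := by omega
      have hH : VDOn G {v : Fin N | v.1 < 3*q+4} := by
        have h := (IH (3*q+4) (by omega) (q+1)).1 (by ring) (by omega)
        rwa [show 3*(q+1)+1 = 3*q+4 by ring] at h
      have hD : VDOn G {v : Fin N | v.1 < 3*q+3 ∧ v.1 ≠ 3*q} :=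
        (IH (3*q+2) (by omega) q).2.2.1 rfl (by omega)
      have h4 : 3*q+4 < N := by omega
      have hlkset : {v : Fin N | v.1 < 3*q+5} \ closedNbhd G (⟨3*q+4, h4⟩ : Fin N) =
          {v : Fin N | v.1 < 3*q+3 ∧ v.1 ≠ 3*q} := by
        ext w
        simp only [Set.mem_diff, Set.mem_setOf_eq, Set.mem_singleton_iff,
          Set.mem_insert_iff, closedNbhd, Fin.ext_iff, Fin.val_mk, hadj, AdjP, and_true, true_and, and_false, false_and, or_false, false_or, or_true, true_or]
        omega
      refine VDOn.step _ (⟨3*q+4, h4⟩ : Fin N) (show (3*q+4:ℕ) < 3*q+5 by omega) ?_ ?_ ?_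
      · have hset : {v : Fin N | v.1 < 3*q+5} \ {(⟨3*q+4, h4⟩ : Fin N)} =
            {v : Fin N | v.1 < 3*q+4} := by
          ext w
          simp only [Set.mem_diff, Set.mem_setOf_eq, Set.mem_singleton_iff,
            Fin.ext_iff, Fin.val_mk]
          omega
        rw [hset]
        exact hH
      · rw [hlkset]
        exact hD
      · intro S hS
        rw [hlkset] at hS
        by_cases hq2 : (⟨3*q+2, (show 3*q+2 < N by omega)⟩ : Fin N) ∈ S
        · refine notmax (w := (⟨3*q, (show 3*q < N by omega)⟩ : Fin N)) ⟨?_, ?_⟩ ?_ ?_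
          · show (3*q:ℕ) < 3*q+5
            omega
          · intro hmem
            have h' : (3*q:ℕ) = 3*q+4 := Fin.ext_iff.mp hmem
            omega
          · intro hmem
            have h' : (3*q:ℕ) < 3*q+3 ∧ (3*q:ℕ) ≠ 3*q := hS.1 hmem
            exact h'.2 rfl
          · intro z hz hadj'
            have hz' : z.1 < 3*q+3 ∧ z.1 ≠ 3*q := hS.1 hz
            have ha : AdjP (3*q) z.1 := (hadj _ _).mp hadj'
            refine hS.2 z hz _ hq2 ((hadj _ _).mpr ?_)
            show AdjP z.1 (3*q+2)
            unfold AdjP at ha ⊢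
            omega
        · refine notmax (w := (⟨3*q+3, (show 3*q+3 < N by omega)⟩ : Fin N)) ⟨?_, ?_⟩ ?_ ?_
          · show (3*q+3:ℕ) < 3*q+5
            omega
          · intro hmem
            have h' : (3*q+3:ℕ) = 3*q+4 := Fin.ext_iff.mp hmem
            omega
          · intro hmem
            have h' : (3*q+3:ℕ) < 3*q+3 ∧ (3*q+3:ℕ) ≠ 3*q := hS.1 hmem
            omega
          · intro z hz hadj'
            have hz' : z.1 < 3*q+3 ∧ z.1 ≠ 3*q := hS.1 hz
            have ha : AdjP (3*q+3) z.1 := (hadj _ _).mp hadj'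
            have hzval : z.1 = 3*q+2 := by unfold AdjP at ha; omega
            have heq : z = (⟨3*q+2, (show 3*q+2 < N by omega)⟩ : Fin N) := Fin.ext hzval
            exact hq2 (heq ▸ hz)
  -- ============ Part 3 : D p ============
  · rintro rfl hN
    cases p with
    | zero =>
      refine vd_two hadj (a := 1) (b := 2) (by omega) (by omega)
        (by unfold AdjP; omega) ?_
      ext w
      simp only [Set.mem_setOf_eq, Set.mem_insert_iff, Set.mem_singleton_iff,
        Fin.ext_iff, Fin.val_mk]
      omega
    | succ q =>
      rw [show 3*(q+1)+3 = 3*q+6 by ring, show 3*(q+1) = 3*q+3 by ring]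
      have hNq : 3*q+6 ≤ N := by omega
      have hQ : VDOn G {v : Fin N | v.1 < 3*q+3 ∨ v.1 = 3*q+5} :=
        (IH (3*q+4) (by omega) q).2.2.2 rfl (by omega)
      have hD : VDOn G {v : Fin N | v.1 < 3*q+3 ∧ v.1 ≠ 3*q} :=
        (IH (3*q+2) (by omega) q).2.2.1 rfl (by omega)
      have h4 : 3*q+4 < N := by omega
      have hlkset : {v : Fin N | v.1 < 3*q+6 ∧ v.1 ≠ 3*q+3} \ closedNbhd G (⟨3*q+4, h4⟩ : Fin N) =
          {v : Fin N | v.1 < 3*q+3 ∧ v.1 ≠ 3*q} := by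
        ext w
        simp only [Set.mem_diff, Set.mem_setOf_eq, Set.mem_singleton_iff,
          Set.mem_insert_iff, closedNbhd, Fin.ext_iff, Fin.val_mk, hadj, AdjP, and_true, true_and, and_false, false_and, or_false, false_or, or_true, true_or]
        omega
      refine VDOn.step _ (⟨3*q+4, h4⟩ : Fin N)
        (show (3*q+4:ℕ) < 3*q+6 ∧ (3*q+4:ℕ) ≠ 3*q+3 by omega) ?_ ?_ ?_
      · have hset : {v : Fin N | v.1 < 3*q+6 ∧ v.1 ≠ 3*q+3} \ {(⟨3*q+4, h4⟩ : Fin N)} =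
            {v : Fin N | v.1 < 3*q+3 ∨ v.1 = 3*q+5} := by
          ext w
          simp only [Set.mem_diff, Set.mem_setOf_eq, Set.mem_singleton_iff,
            Fin.ext_iff, Fin.val_mk]
          omega
        rw [hset]
        exact hQ
      · rw [hlkset]
        exact hD
      · intro S hS
        rw [hlkset] at hS
        by_cases hq2 : (⟨3*q+2, (show 3*q+2 < N by omega)⟩ : Fin N) ∈ S
        · refine notmax (w := (⟨3*q, (show 3*q < N by omega)⟩ : Fin N)) ⟨?_, ?_⟩ ?_ ?_
          · show (3*q:ℕ) < 3*q+6 ∧ (3*q:ℕ) ≠ 3*q+3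
            omega
          · intro hmem
            have h' : (3*q:ℕ) = 3*q+4 := Fin.ext_iff.mp hmem
            omega
          · intro hmem
            have h' : (3*q:ℕ) < 3*q+3 ∧ (3*q:ℕ) ≠ 3*q := hS.1 hmem
            exact h'.2 rfl
          · intro z hz hadj'
            have hz' : z.1 < 3*q+3 ∧ z.1 ≠ 3*q := hS.1 hz
            have ha : AdjP (3*q) z.1 := (hadj _ _).mp hadj'
            refine hS.2 z hz _ hq2 ((hadj _ _).mpr ?_)
            show AdjP z.1 (3*q+2)
            unfold AdjP at ha ⊢
            omega
        · refine notmax (w := (⟨3*q+5, (show 3*q+5 < N by omega)⟩ : Fin N)) ⟨?_, ?_⟩ ?_ ?_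
          · show (3*q+5:ℕ) < 3*q+6 ∧ (3*q+5:ℕ) ≠ 3*q+3
            omega
          · intro hmem
            have h' : (3*q+5:ℕ) = 3*q+4 := Fin.ext_iff.mp hmem
            omega
          · intro hmem
            have h' : (3*q+5:ℕ) < 3*q+3 ∧ (3*q+5:ℕ) ≠ 3*q := hS.1 hmem
            omega
          · intro z hz hadj'
            have hz' : z.1 < 3*q+3 ∧ z.1 ≠ 3*q := hS.1 hz
            have ha : AdjP (3*q+5) z.1 := (hadj _ _).mp hadj'
            have hzval : z.1 = 3*q+2 := by unfold AdjP at ha; omega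
            have heq : z = (⟨3*q+2, (show 3*q+2 < N by omega)⟩ : Fin N) := Fin.ext hzval
            exact hq2 (heq ▸ hz)
  -- ============ Part 4 : Q p ============
  · rintro rfl hN
    have hG : VDOn G {v : Fin N | v.1 < 3*p+2} :=
      (IH (3*p+2) (by omega) p).2.1 rfl (by omega)
    have h2 : 3*p+2 < N := by omega
    have h5 : 3*p+5 < N := by omega
    refine VDOn.step _ (⟨3*p+2, h2⟩ : Fin N)
      (show (3*p+2:ℕ) < 3*p+3 ∨ (3*p+2:ℕ) = 3*p+5 by omega) ?_ ?_ ?_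
    · have hset : {v : Fin N | v.1 < 3*p+3 ∨ v.1 = 3*p+5} \ {(⟨3*p+2, h2⟩ : Fin N)} =
          insert (⟨3*p+5, h5⟩ : Fin N) {v : Fin N | v.1 < 3*p+2} := by
        ext w
        simp only [Set.mem_diff, Set.mem_setOf_eq, Set.mem_singleton_iff,
          Set.mem_insert_iff, Fin.ext_iff, Fin.val_mk]
        omega
      rw [hset]
      exact iso_ext5 hadj hG h5
    · cases p with
      | zero =>
        have hset : {v : Fin N | v.1 < 3*0+3 ∨ v.1 = 3*0+5} \ closedNbhd G (⟨3*0+2, h2⟩ : Fin N) =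
            {v : Fin N | v.1 < 1} := by
          ext w
          simp only [Set.mem_diff, Set.mem_setOf_eq, Set.mem_singleton_iff,
            Set.mem_insert_iff, closedNbhd, Fin.ext_iff, Fin.val_mk, hadj, AdjP, and_true, true_and, and_false, false_and, or_false, false_or, or_true, true_or]
          omega
        rw [hset]
        refine vd_subsingleton _ (fun u hu w hw => Fin.ext ?_)
        have hu' : u.1 < 1 := hu
        have hw' : w.1 < 1 := hw
        omega
      | succ r =>
        have hG' : VDOn G {v : Fin N | v.1 < 3*r+2} :=
          (IH (3*r+2) (by omega) r).2.1 rfl (by omega)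
        have h3' : 3*r+3 < N := by omega
        have hset : {v : Fin N | v.1 < 3*(r+1)+3 ∨ v.1 = 3*(r+1)+5} \
            closedNbhd G (⟨3*(r+1)+2, h2⟩ : Fin N) =
            insert (⟨3*r+3, h3'⟩ : Fin N) {v : Fin N | v.1 < 3*r+2} := by
          ext w
          simp only [Set.mem_diff, Set.mem_setOf_eq, Set.mem_singleton_iff,
            Set.mem_insert_iff, closedNbhd, Fin.ext_iff, Fin.val_mk, hadj, AdjP, and_true, true_and, and_false, false_and, or_false, false_or, or_true, true_or]
          omega
        rw [hset]
        exact iso_ext hadj hG' h3'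
    · apply shed_of_dom (u := (⟨3*p+5, h5⟩ : Fin N))
      · show (3*p+5:ℕ) < 3*p+3 ∨ (3*p+5:ℕ) = 3*p+5
        omega
      · exact (hadj _ _).mpr (show AdjP (3*p+2) (3*p+5) by unfold AdjP; omega)
      · intro z hz hadj'
        have hz' : z.1 < 3*p+3 ∨ z.1 = 3*p+5 := hz
        have ha : AdjP (3*p+5) z.1 := (hadj _ _).mp hadj'
        left
        apply Fin.ext
        show z.1 = 3*p+2
        unfold AdjP at ha; omega

lemma vertexDecomposable_of_adj (hadj : ∀ a b : Fin N, G.Adj a b ↔ AdjP a.1 b.1)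
    (hN : N % 3 ≠ 0) (hN1 : 1 ≤ N) : VertexDecomposable G := by
  unfold VertexDecomposable
  rcases (show (∃ p, N = 3*p+1) ∨ (∃ p, N = 3*p+2) by
    rcases (show N % 3 = 1 ∨ N % 3 = 2 by omega) with h | h
    · exact Or.inl ⟨N/3, by omega⟩
    · exact Or.inr ⟨N/3, by omega⟩) with ⟨p, rfl⟩ | ⟨p, rfl⟩
  · have h := (VDfam hadj (3*p+1) p).1 rfl (le_refl _)
    have hset : (Set.univ : Set (Fin (3*p+1))) = {v : Fin (3*p+1) | v.1 < 3*p+1} := by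
      ext w
      simp only [Set.mem_univ, Set.mem_setOf_eq, true_iff]
      exact w.2
    rwa [hset]
  · have h := (VDfam hadj (3*p+2) p).2.1 rfl (le_refl _)
    have hset : (Set.univ : Set (Fin (3*p+2))) = {v : Fin (3*p+2) | v.1 < 3*p+2} := by
      ext w
      simp only [Set.mem_univ, Set.mem_setOf_eq, true_iff]
      exact w.2
    rwa [hset]

end Stmt11Aux
namespace Stmt11Aux

lemma gnRel_iff (n a b : ℕ) (ha : a + 2 ≤ 3*n) (hb : b + 2 ≤ 3*n) :
    (gnRel n (a+1) (b+1) ∨ gnRel n (b+1) (a+1)) ↔ AdjP a b := by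
  constructor
  · rintro (h | h) <;>
    · rcases h with ⟨h1, h2⟩ | ⟨k, hk1, hk2, ⟨h1,h2⟩|⟨h1,h2⟩|⟨h1,h2⟩|⟨h1,h2⟩⟩ | ⟨l, hl1, hl2, h1, h2⟩ <;>
      · unfold AdjP; omega
  · intro h
    unfold AdjP at h
    rcases h with h | h | ⟨h1, h2⟩ | ⟨h1, h2⟩ | ⟨h1, h2⟩ | ⟨h1, h2⟩
    · -- b = a+1
      rcases (show a = 0 ∨ (a % 3 = 0 ∧ 1 ≤ a) ∨ a % 3 = 1 ∨ a % 3 = 2 by omega)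
        with h0 | ⟨h1, h2⟩ | h1 | h1
      · exact Or.inl (Or.inl ⟨by omega, by omega⟩)
      · exact Or.inl (Or.inr (Or.inl ⟨a/3, by omega, by omega,
          Or.inr (Or.inr (Or.inl ⟨by omega, by omega⟩))⟩))
      · exact Or.inl (Or.inr (Or.inl ⟨(a+2)/3, by omega, by omega,
          Or.inl ⟨by omega, by omega⟩⟩))
      · exact Or.inl (Or.inr (Or.inl ⟨(a+1)/3, by omega, by omega,
          Or.inr (Or.inl ⟨by omega, by omega⟩)⟩))
    · -- a = b+1
      rcases (show b = 0 ∨ (b % 3 = 0 ∧ 1 ≤ b) ∨ b % 3 = 1 ∨ b % 3 = 2 by omega)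
        with h0 | ⟨h1, h2⟩ | h1 | h1
      · exact Or.inr (Or.inl ⟨by omega, by omega⟩)
      · exact Or.inr (Or.inr (Or.inl ⟨b/3, by omega, by omega,
          Or.inr (Or.inr (Or.inl ⟨by omega, by omega⟩))⟩))
      · exact Or.inr (Or.inr (Or.inl ⟨(b+2)/3, by omega, by omega,
          Or.inl ⟨by omega, by omega⟩⟩))
      · exact Or.inr (Or.inr (Or.inl ⟨(b+1)/3, by omega, by omega,
          Or.inr (Or.inl ⟨by omega, by omega⟩)⟩))
    · -- b = a+4, a % 3 = 0 : chord (3k+2, 3k-2) with labels (b+1, a+1), k = a/3+1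
      exact Or.inr (Or.inr (Or.inl ⟨a/3+1, by omega, by omega,
        Or.inr (Or.inr (Or.inr ⟨by omega, by omega⟩))⟩))
    · -- a = b+4, b % 3 = 0
      exact Or.inl (Or.inr (Or.inl ⟨b/3+1, by omega, by omega,
        Or.inr (Or.inr (Or.inr ⟨by omega, by omega⟩))⟩))
    · -- b = a+3, a % 3 = 2 : chord (3l-3, 3l) labels (a+1, b+1), l = (a+4)/3
      exact Or.inl (Or.inr (Or.inr ⟨(a+4)/3, by omega, by omega, by omega, by omega⟩))
    · -- a = b+3, b % 3 = 2
      exact Or.inr (Or.inr (Or.inr ⟨(b+4)/3, by omega, by omega, by omega, by omega⟩))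

lemma adj_Gn (n : ℕ) : ∀ a b : Fin (3*n-1), (Gn n).Adj a b ↔ AdjP a.1 b.1 := by
  intro a b
  rw [Gn, SimpleGraph.fromRel_adj]
  have ha : a.1 + 2 ≤ 3*n := by have := a.2; omega
  have hb : b.1 + 2 ≤ 3*n := by have := b.2; omega
  constructor
  · rintro ⟨hne, h⟩
    exact (gnRel_iff n a.1 b.1 ha hb).mp h
  · intro h
    refine ⟨?_, (gnRel_iff n a.1 b.1 ha hb).mpr h⟩
    intro heq
    have hv : a.1 = b.1 := by rw [heq]
    unfold AdjP at h; omega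

lemma adj_Hn (n : ℕ) : ∀ a b : Fin (3*n-2), (Hn n).Adj a b ↔ AdjP a.1 b.1 := by
  intro a b
  rw [Hn, SimpleGraph.fromRel_adj]
  have ha : a.1 + 2 ≤ 3*n := by have := a.2; omega
  have hb : b.1 + 2 ≤ 3*n := by have := b.2; omega
  constructor
  · rintro ⟨hne, h⟩
    exact (gnRel_iff n a.1 b.1 ha hb).mp h
  · intro h
    refine ⟨?_, (gnRel_iff n a.1 b.1 ha hb).mpr h⟩
    intro heq
    have hv : a.1 = b.1 := by rw [heq]
    unfold AdjP at h; omega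

end Stmt11Aux

open Stmt11Aux in
/-- For every integer `n ≥ 1`, the graphs `G_n` and `H_n` are
well-covered and vertex decomposable, with `α(G_n) = α(H_n) = n`. -/
theorem stmt11 (n : ℕ) (hn : 1 ≤ n) :
    (WellCovered (Gn n) ∧ VertexDecomposable (Gn n) ∧ _root_.indepNum (Gn n) = n) ∧
    (WellCovered (Hn n) ∧ VertexDecomposable (Hn n) ∧ _root_.indepNum (Hn n) = n) := by
  have hG := adj_Gn n
  have hH := adj_Hn n
  have hNG : (3*n-1) % 3 ≠ 0 := by omega
  have hNG1 : 1 ≤ 3*n-1 := by omega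
  have hNH : (3*n-2) % 3 ≠ 0 := by omega
  have hNH1 : 1 ≤ 3*n-2 := by omega
  refine ⟨⟨wellCovered_of_adj hG hNG hNG1, vertexDecomposable_of_adj hG hNG hNG1, ?_⟩,
         ⟨wellCovered_of_adj hH hNH hNH1, vertexDecomposable_of_adj hH hNH hNH1, ?_⟩⟩
  · rw [indepNum_of_adj hG hNG hNG1]; omega
  · rw [indepNum_of_adj hH hNH hNH1]; omega
end
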